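/- arXiv:1104.2686 — 8 statements merged into one kernel-verified Lean document; each statement's English description precedes it below -/
import Mathlib

section
/- Let p ∈ [1,∞) and let f : X × X × ℝⁿ × ℝⁿ → [0,∞) be measurable. If ∫_X ∫_X f(x,y,u(x),u(y)) dx dy < ∞ for every u ∈ L^p(X;ℝⁿ), then ∫_X ∫_X f(x,y,φ(x),ψ(y)) dx dy < ∞ for every pair of functions φ, ψ ∈ L^p(X;ℝⁿ). -/
open MeasureTheory ENNReal Filter Topology

lemma halfFloor (u : ℝ) : ⌊u⌋ = ⌊((⌊2*u⌋ : ℝ))/2⌋ := by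
  set a : ℤ := ⌊2*u⌋ with ha
  have h1 : (a:ℝ) ≤ 2*u := Int.floor_le _
  have h2 : 2*u < a + 1 := Int.lt_floor_add_one _
  set z : ℤ := ⌊((a:ℝ))/2⌋ with hz
  have hz1 : (z:ℝ) ≤ (a:ℝ)/2 := Int.floor_le _
  have hz2 : (a:ℝ)/2 < z + 1 := Int.lt_floor_add_one _
  have hza : a < 2*z + 2 := by exact_mod_cast (by linarith : (a:ℝ) < 2*z+2)
  have hza' : a ≤ 2*z + 1 := by omega
  have hza'' : (a:ℝ) ≤ 2*z+1 := by exact_mod_cast hza'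
  rw [Int.floor_eq_iff]
  constructor
  · linarith
  · push_cast; linarith

lemma cell_mono_succ (u v : ℝ) (k : ℕ)
    (h : ⌊(2:ℝ)^(k+1)*u⌋ = ⌊(2:ℝ)^(k+1)*v⌋) : ⌊(2:ℝ)^k*u⌋ = ⌊(2:ℝ)^k*v⌋ := by
  have e : ∀ t : ℝ, (2:ℝ)^(k+1)*t = 2*((2:ℝ)^k*t) := by intro t; ring
  rw [halfFloor ((2:ℝ)^k*u), halfFloor ((2:ℝ)^k*v), ← e, ← e, h]

lemma cell_le (u v : ℝ) (k l : ℕ) (hkl : k ≤ l)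
    (h : ⌊(2:ℝ)^l*u⌋ = ⌊(2:ℝ)^l*v⌋) : ⌊(2:ℝ)^k*u⌋ = ⌊(2:ℝ)^k*v⌋ := by
  induction l with
  | zero => have : k = 0 := Nat.le_zero.mp hkl; subst this; exact h
  | succ l ih =>
      rcases Nat.eq_or_lt_of_le hkl with rfl | hlt
      · exact h
      · exact ih (by omega) (cell_mono_succ u v l h)

lemma cell_sep (u v : ℝ) (huv : u ≠ v) : ∃ k : ℕ, ⌊(2:ℝ)^k*u⌋ ≠ ⌊(2:ℝ)^k*v⌋ := by
  wlog hlt : u < v generalizing u v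
  · obtain ⟨k, hk⟩ := this v u huv.symm (by cases lt_or_gt_of_ne huv with
      | inl h => exact absurd h hlt | inr h => exact h)
    exact ⟨k, hk.symm⟩
  obtain ⟨k, hk⟩ := pow_unbounded_of_one_lt ((v-u)⁻¹) (by norm_num : (1:ℝ) < 2)
  refine ⟨k, fun hEq => ?_⟩
  have hpos : 0 < v - u := by linarith
  have h1 : 1 ≤ (2:ℝ)^k * (v - u) := by
    nlinarith [inv_mul_cancel₀ hpos.ne', mul_lt_mul_of_pos_right hk hpos]
  have : ⌊(2:ℝ)^k*u⌋ + 1 ≤ ⌊(2:ℝ)^k*v⌋ := by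
    have h2 : (2:ℝ)^k*u + 1 ≤ (2:ℝ)^k*v := by nlinarith
    calc ⌊(2:ℝ)^k*u⌋ + 1 = ⌊(2:ℝ)^k*u + 1⌋ := by
          rw [show ((2:ℝ)^k*u + 1 : ℝ) = (2:ℝ)^k*u + (1:ℤ) by push_cast; ring, Int.floor_add_intCast]
    _ ≤ ⌊(2:ℝ)^k*v⌋ := Int.floor_mono h2
  omega

lemma sd_limit {α : Type*} (A : ℕ → Set α) (j : ℕ) :
    symmDiff (⋃ k, ⋂ i, ⋂ (_ : k ≤ i), A i) (A j) ⊆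
      ⋃ t : ℕ, symmDiff (A (j+t+1)) (A (j+t)) := by
  intro x hx
  by_contra hnot
  simp only [Set.mem_iUnion, not_exists] at hnot
  have hflip : ∀ t, x ∈ A (j+t+1) ↔ x ∈ A (j+t) := by
    intro t
    have := hnot t
    rw [Set.mem_symmDiff] at this
    tauto
  have hconst : ∀ t, x ∈ A (j+t) ↔ x ∈ A j := by
    intro t
    induction t with
    | zero => rfl
    | succ t ih => rw [show j+(t+1) = j+t+1 by omega, hflip t]; exact ih
  rw [Set.mem_symmDiff] at hx
  rcases hx with ⟨hU, hAj⟩ | ⟨hAj, hU⟩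
  · simp only [Set.mem_iUnion, Set.mem_iInter] at hU
    obtain ⟨k, hk⟩ := hU
    have : x ∈ A (j + k) := hk (j+k) (by omega)
    exact hAj ((hconst k).mp this)
  · apply hU
    simp only [Set.mem_iUnion, Set.mem_iInter]
    exact ⟨j, fun i hi => by
      have := (hconst (i - j)).mpr hAj
      rwa [show j + (i-j) = i by omega] at this⟩

lemma lintegral_trunc_sup {α : Type*} [MeasurableSpace α] (ν : Measure α)
    (F : α → ℝ≥0∞) (hF : Measurable F) :
    ∫⁻ z, F z ∂ν = ⨆ R : ℕ, ∫⁻ z, min (F z) R ∂ν := by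
  rw [← lintegral_iSup (fun R => hF.min measurable_const)
      (fun a b hab z => min_le_min le_rfl (by exact_mod_cast Nat.cast_le.mpr hab))]
  congr 1
  ext z
  apply le_antisymm
  · rcases eq_or_ne (F z) ⊤ with htop | hne
    · rw [htop]
      calc (⊤:ℝ≥0∞) = ⨆ R : ℕ, (R:ℝ≥0∞) := ENNReal.iSup_natCast.symm
      _ ≤ _ := iSup_mono fun R => by simp
    · obtain ⟨R, hR⟩ := ENNReal.exists_nat_gt hne
      calc F z = min (F z) R := (min_eq_left hR.le).symm
      _ ≤ _ := le_iSup (fun R : ℕ => min (F z) (R:ℝ≥0∞)) R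
  · exact iSup_le fun R => min_le_left _ _

lemma vol_singleton (m : ℕ) (hm : 0 < m) (x : Fin m → ℝ) :
    volume ({x} : Set (Fin m → ℝ)) = 0 := by
  rw [← Set.univ_pi_singleton x, volume_pi_pi]
  exact Finset.prod_eq_zero (Finset.mem_univ ⟨0, hm⟩) Real.volume_singleton

lemma diag_null (m : ℕ) (hm : 0 < m) (μ : Measure (Fin m → ℝ)) (hμ : μ ≤ volume) [SFinite μ] :
    μ.prod μ {z : (Fin m → ℝ) × (Fin m → ℝ) | z.1 = z.2} = 0 := by
  have hD : MeasurableSet {z : (Fin m → ℝ) × (Fin m → ℝ) | z.1 = z.2} :=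
    (isClosed_eq continuous_fst continuous_snd).measurableSet
  rw [Measure.prod_apply hD]
  have : ∀ x : Fin m → ℝ, μ (Prod.mk x ⁻¹' {z : (Fin m → ℝ) × (Fin m → ℝ) | z.1 = z.2}) = 0 := by
    intro x
    have hpre : (Prod.mk x ⁻¹' {z : (Fin m → ℝ) × (Fin m → ℝ) | z.1 = z.2}) = {x} := by
      ext y; simp [eq_comm]
    rw [hpre]
    exact le_antisymm ((hμ _).trans_eq (vol_singleton m hm x)) (zero_le)
  simp only [this]
  simp

lemma pert {α : Type*} [MeasurableSpace α] (μ : Measure α) [SFinite μ]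
    (G : α × α → ℝ≥0∞) (hG : Measurable G) (R : ℝ≥0∞) (hGR : ∀ z, G z ≤ R)
    (S S' : Set α) (hS : MeasurableSet S) (hS' : MeasurableSet S') :
    ∫⁻ z in S ×ˢ Sᶜ, G z ∂(μ.prod μ) ≤ ∫⁻ z in S' ×ˢ S'ᶜ, G z ∂(μ.prod μ)
      + R * (μ (symmDiff S S') * μ Set.univ) + R * (μ Set.univ * μ (symmDiff S S')) := by
  set D := symmDiff S S' with hD
  have hDm : MeasurableSet D := (hS.symmDiff hS')
  have hpt : ∀ z, (S ×ˢ Sᶜ).indicator G z ≤ (S' ×ˢ S'ᶜ).indicator G z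
      + (D ×ˢ (Set.univ : Set α)).indicator (fun _ => R) z
      + ((Set.univ : Set α) ×ˢ D).indicator (fun _ => R) z := by
    intro z
    by_cases hz : z ∈ S ×ˢ Sᶜ
    · rw [Set.indicator_of_mem hz]
      by_cases hz' : z ∈ S' ×ˢ S'ᶜ
      · rw [Set.indicator_of_mem hz']
        exact le_add_right (le_add_right le_rfl)
      · obtain ⟨hz1, hz2⟩ := hz
        rw [Set.mem_prod, not_and_or] at hz'
        rcases hz' with h1 | h2
        · have : z.1 ∈ D := by
            rw [hD, Set.mem_symmDiff]; exact Or.inl ⟨hz1, h1⟩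
          have : z ∈ D ×ˢ (Set.univ : Set α) := ⟨this, Set.mem_univ _⟩
          rw [Set.indicator_of_mem this]
          calc G z ≤ R := hGR z
          _ ≤ _ + R + _ := le_add_right (le_add_left le_rfl)
        · have h2' : z.2 ∈ S' := not_not.mp (by simpa using h2)
          have : z.2 ∈ D := by
            rw [hD, Set.mem_symmDiff]; exact Or.inr ⟨h2', hz2⟩
          have : z ∈ (Set.univ : Set α) ×ˢ D := ⟨Set.mem_univ _, this⟩
          rw [Set.indicator_of_mem this]
          exact le_add_left (hGR z)
    · rw [Set.indicator_of_notMem hz]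
      exact zero_le
  have hmeas1 : MeasurableSet (S' ×ˢ S'ᶜ) := hS'.prod hS'.compl
  calc ∫⁻ z in S ×ˢ Sᶜ, G z ∂(μ.prod μ)
      = ∫⁻ z, (S ×ˢ Sᶜ).indicator G z ∂(μ.prod μ) := (lintegral_indicator (hS.prod hS.compl) G).symm
  _ ≤ ∫⁻ z, ((S' ×ˢ S'ᶜ).indicator G z
      + (D ×ˢ (Set.univ : Set α)).indicator (fun _ => R) z
      + ((Set.univ : Set α) ×ˢ D).indicator (fun _ => R) z) ∂(μ.prod μ) := lintegral_mono hpt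
  _ = ∫⁻ z, (S' ×ˢ S'ᶜ).indicator G z ∂(μ.prod μ)
      + ∫⁻ z, (D ×ˢ (Set.univ : Set α)).indicator (fun _ => R) z ∂(μ.prod μ)
      + ∫⁻ z, ((Set.univ : Set α) ×ˢ D).indicator (fun _ => R) z ∂(μ.prod μ) := by
        rw [lintegral_add_left (f := fun z => (S' ×ˢ S'ᶜ).indicator G z
          + (D ×ˢ (Set.univ : Set α)).indicator (fun _ => R) z) ((hG.indicator hmeas1).add
          ((measurable_const.indicator (hDm.prod MeasurableSet.univ)))), lintegral_add_left
          (hG.indicator hmeas1)]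
  _ ≤ _ := by
      rw [lintegral_indicator hmeas1, lintegral_indicator_const (hDm.prod MeasurableSet.univ),
        lintegral_indicator_const (MeasurableSet.univ.prod hDm),
        Measure.prod_prod, Measure.prod_prod]
lemma tsum_tail_geom (j : ℕ) : (∑' t : ℕ, (2⁻¹:ℝ≥0∞)^(j+t+1)) = 2⁻¹^j := by
  have h : ∀ t : ℕ, (2⁻¹:ℝ≥0∞)^(j+t+1) = 2⁻¹^(j+1) * 2⁻¹^t := by
    intro t; rw [← pow_add]; ring_nf
  simp only [h]
  rw [ENNReal.tsum_mul_left, ENNReal.tsum_geometric, ENNReal.one_sub_inv_two, inv_inv,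
    pow_succ, mul_assoc, ENNReal.inv_mul_cancel (by norm_num) (by norm_num), mul_one]

lemma stepA {α : Type*} [MeasurableSpace α] (μ : Measure α) [SFinite μ]
    (hV0 : μ Set.univ ≠ 0) (hVtop : μ Set.univ ≠ ⊤)
    (F : α × α → ℝ≥0∞) (hF : Measurable F)
    (key : ∀ S : Set α, MeasurableSet S →
      ∫⁻ z in S ×ˢ Sᶜ, F z ∂(μ.prod μ) < ⊤) :
    ∃ S₀, MeasurableSet S₀ ∧ ∃ δ : ℝ≥0∞, 0 < δ ∧ ∃ N : ℕ,
      ∀ S, MeasurableSet S → μ (symmDiff S S₀) < δ →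
        ∫⁻ z in S ×ˢ Sᶜ, F z ∂(μ.prod μ) ≤ N := by
  by_contra hcon
  push_neg at hcon
  set V := μ Set.univ with hV
  set ΦT : Set α → ℕ → ℝ≥0∞ :=
    fun S R => ∫⁻ z in S ×ˢ Sᶜ, min (F z) R ∂(μ.prod μ) with hΦTdef
  have htrunc : ∀ S : Set α,
      (∫⁻ z in S ×ˢ Sᶜ, F z ∂(μ.prod μ)) = ⨆ R : ℕ, ΦT S R := fun S =>
    lintegral_trunc_sup ((μ.prod μ).restrict (S ×ˢ Sᶜ)) F hF
  have hΦTle : ∀ S R, ΦT S R ≤ ∫⁻ z in S ×ˢ Sᶜ, F z ∂(μ.prod μ) :=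
    fun S R => lintegral_mono fun z => min_le_left _ _
  have hΦTmono : ∀ S (R R' : ℕ), R ≤ R' → ΦT S R ≤ ΦT S R' := fun S R R' h =>
    lintegral_mono fun z => min_le_min le_rfl (by exact_mod_cast Nat.cast_le.mpr h)
  have hcne : ∀ R : ℕ, (4 * V * ((R:ℝ≥0∞)+1)) ≠ 0 ∧ (4 * V * ((R:ℝ≥0∞)+1)) ≠ ⊤ := by
    intro R
    constructor
    · apply mul_ne_zero (mul_ne_zero (by norm_num) hV0)
      simp
    · exact ENNReal.mul_ne_top (ENNReal.mul_ne_top (by norm_num) hVtop)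
        (by simp [ENNReal.add_ne_top])
  have hstep2 : ∀ (k : ℕ) (q : {q : Set α × ℕ // MeasurableSet q.1}),
      ∃ q' : {q : Set α × ℕ // MeasurableSet q.1}, q.1.2 ≤ q'.1.2 ∧
        μ (symmDiff q'.1.1 q.1.1) < 2⁻¹^(k+1) * (4 * V * ((q.1.2:ℝ≥0∞)+1))⁻¹ ∧
        ((k:ℝ≥0∞)+2) ≤ ΦT q'.1.1 q'.1.2 := by
    rintro k ⟨⟨S, R⟩, hS⟩
    have hδpos : 0 < (2⁻¹:ℝ≥0∞)^(k+1) * (4 * V * ((R:ℝ≥0∞)+1))⁻¹ :=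
      ENNReal.mul_pos (pow_ne_zero _ (by norm_num)) (ENNReal.inv_ne_zero.mpr (hcne R).2)
    obtain ⟨S', hS', hΔ, hgt⟩ := hcon S hS _ hδpos (k+2)
    rw [htrunc S'] at hgt
    obtain ⟨R₀, hR₀⟩ := lt_iSup_iff.mp hgt
    refine ⟨⟨⟨S', max R₀ R⟩, hS'⟩, le_max_right _ _, hΔ, ?_⟩
    calc ((k:ℝ≥0∞)+2) = ((k+2 : ℕ):ℝ≥0∞) := by push_cast; ring
    _ ≤ ΦT S' R₀ := hR₀.le
    _ ≤ ΦT S' (max R₀ R) := hΦTmono _ _ _ (le_max_left _ _)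
  choose nxt hRstep hΔstep hΦstep using hstep2
  have hbase : ∃ q : {q : Set α × ℕ // MeasurableSet q.1},
      ((0:ℝ≥0∞)+1) ≤ ΦT q.1.1 q.1.2 := by
    obtain ⟨S₁, hS₁, _, hgt⟩ := hcon ∅ MeasurableSet.empty 1 (by norm_num) 1
    rw [htrunc S₁] at hgt
    obtain ⟨R₀, hR₀⟩ := lt_iSup_iff.mp hgt
    exact ⟨⟨⟨S₁, R₀⟩, hS₁⟩, by simpa using hR₀.le⟩
  obtain ⟨q₀, hq₀⟩ := hbase
  set seq : ℕ → {q : Set α × ℕ // MeasurableSet q.1} :=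
    fun k => Nat.rec q₀ (fun k q => nxt k q) k with hseq
  have hseqsucc : ∀ k, seq (k+1) = nxt k (seq k) := fun k => rfl
  set A : ℕ → Set α := fun k => (seq k).1.1 with hA
  set Rf : ℕ → ℕ := fun k => (seq k).1.2 with hRf
  have hAmeas : ∀ k, MeasurableSet (A k) := fun k => (seq k).2
  have hGood : ∀ k : ℕ, ((k:ℝ≥0∞)+1) ≤ ΦT (A k) (Rf k) := by
    intro k
    cases k with
    | zero =>
        have h0 : ΦT (A 0) (Rf 0) = ΦT q₀.1.1 q₀.1.2 := rfl
        rw [h0]; simpa using hq₀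
    | succ k =>
        have h2 := hΦstep k (seq k)
        rw [← hseqsucc k] at h2
        calc ((k+1:ℕ):ℝ≥0∞)+1 = (k:ℝ≥0∞)+2 := by push_cast; ring
        _ ≤ _ := h2
  have hRmono : Monotone Rf := monotone_nat_of_le_succ fun k => by
    have h2 := hRstep k (seq k); rw [← hseqsucc k] at h2; exact h2
  have hclose : ∀ k, μ (symmDiff (A (k+1)) (A k)) <
      2⁻¹^(k+1) * (4 * V * ((Rf k:ℝ≥0∞)+1))⁻¹ := by
    intro k
    have h2 := hΔstep k (seq k); rw [← hseqsucc k] at h2; exact h2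
  set Slim : Set α := ⋃ k, ⋂ i, ⋂ (_ : k ≤ i), A i with hSlim
  have hSlimMeas : MeasurableSet Slim :=
    MeasurableSet.iUnion fun k => MeasurableSet.iInter fun i =>
      MeasurableSet.iInter fun _ => hAmeas i
  have hSd : ∀ j, μ (symmDiff Slim (A j)) ≤ 2⁻¹^j * (4 * V * ((Rf j:ℝ≥0∞)+1))⁻¹ := by
    intro j
    calc μ (symmDiff Slim (A j)) ≤ μ (⋃ t : ℕ, symmDiff (A (j+t+1)) (A (j+t))) :=
          measure_mono (sd_limit A j)
    _ ≤ ∑' t : ℕ, μ (symmDiff (A (j+t+1)) (A (j+t))) := measure_iUnion_le _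
    _ ≤ ∑' t : ℕ, 2⁻¹^(j+t+1) * (4 * V * ((Rf j:ℝ≥0∞)+1))⁻¹ := by
        apply ENNReal.tsum_le_tsum
        intro t
        refine le_trans (hclose (j+t)).le (mul_le_mul' le_rfl ?_)
        apply ENNReal.inv_le_inv.mpr
        exact mul_le_mul' le_rfl (add_le_add (Nat.cast_le.mpr (hRmono (Nat.le_add_right j t))) le_rfl)
    _ = (∑' t : ℕ, (2⁻¹:ℝ≥0∞)^(j+t+1)) * (4 * V * ((Rf j:ℝ≥0∞)+1))⁻¹ := ENNReal.tsum_mul_right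
    _ = 2⁻¹^j * (4 * V * ((Rf j:ℝ≥0∞)+1))⁻¹ := by rw [tsum_tail_geom]
  have herr : ∀ j : ℕ, (Rf j : ℝ≥0∞) * (μ (symmDiff (A j) Slim) * V) ≤ 1 ∧
      (Rf j : ℝ≥0∞) * (V * μ (symmDiff (A j) Slim)) ≤ 1 := by
    intro j
    have hΔ : μ (symmDiff (A j) Slim) ≤ (4 * V * ((Rf j:ℝ≥0∞)+1))⁻¹ := by
      rw [symmDiff_comm]
      refine le_trans (hSd j) ?_
      calc 2⁻¹^j * (4 * V * ((Rf j:ℝ≥0∞)+1))⁻¹ ≤ 1 * (4 * V * ((Rf j:ℝ≥0∞)+1))⁻¹ :=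
        mul_le_mul' (pow_le_one' (by norm_num) j) le_rfl
      _ = _ := one_mul _
    have h1 : (Rf j : ℝ≥0∞) * V ≤ 4 * V * ((Rf j:ℝ≥0∞)+1) := by
      calc (Rf j : ℝ≥0∞) * V = V * (Rf j:ℝ≥0∞) := mul_comm _ _
      _ ≤ (4*V) * ((Rf j:ℝ≥0∞)+1) :=
        mul_le_mul' (le_mul_of_one_le_left (zero_le) (by norm_num)) (le_add_right le_rfl)
    have hkey : (Rf j : ℝ≥0∞) * ((4 * V * ((Rf j:ℝ≥0∞)+1))⁻¹ * V) ≤ 1 := by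
      calc (Rf j : ℝ≥0∞) * ((4 * V * ((Rf j:ℝ≥0∞)+1))⁻¹ * V)
          = ((Rf j : ℝ≥0∞) * V) * (4 * V * ((Rf j:ℝ≥0∞)+1))⁻¹ := by ring
      _ ≤ (4 * V * ((Rf j:ℝ≥0∞)+1)) * (4 * V * ((Rf j:ℝ≥0∞)+1))⁻¹ := mul_le_mul' h1 le_rfl
      _ ≤ 1 := ENNReal.mul_inv_le_one _
    constructor
    · exact le_trans (mul_le_mul' le_rfl (mul_le_mul' hΔ le_rfl)) hkey
    · refine le_trans (mul_le_mul' le_rfl (mul_le_mul' le_rfl hΔ)) ?_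
      calc (Rf j : ℝ≥0∞) * (V * (4 * V * ((Rf j:ℝ≥0∞)+1))⁻¹)
          = (Rf j : ℝ≥0∞) * ((4 * V * ((Rf j:ℝ≥0∞)+1))⁻¹ * V) := by ring
      _ ≤ 1 := hkey
  have hbound : ∀ j : ℕ,
      ((j:ℝ≥0∞)+1) ≤ (∫⁻ z in Slim ×ˢ Slimᶜ, F z ∂(μ.prod μ)) + 2 := by
    intro j
    have hp := pert μ (fun z => min (F z) (Rf j)) (hF.min measurable_const) (Rf j)
      (fun z => min_le_right _ _) (A j) Slim (hAmeas j) hSlimMeas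
    calc ((j:ℝ≥0∞)+1) ≤ ΦT (A j) (Rf j) := hGood j
    _ ≤ ΦT Slim (Rf j) + (Rf j : ℝ≥0∞) * (μ (symmDiff (A j) Slim) * V)
        + (Rf j : ℝ≥0∞) * (V * μ (symmDiff (A j) Slim)) := hp
    _ ≤ (∫⁻ z in Slim ×ˢ Slimᶜ, F z ∂(μ.prod μ)) + 1 + 1 :=
        add_le_add (add_le_add (hΦTle _ _) (herr j).1) (herr j).2
    _ = (∫⁻ z in Slim ×ˢ Slimᶜ, F z ∂(μ.prod μ)) + 2 := by ring
  have hfin : (∫⁻ z in Slim ×ˢ Slimᶜ, F z ∂(μ.prod μ)) + 2 ≠ ⊤ :=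
    ENNReal.add_ne_top.mpr ⟨(key Slim hSlimMeas).ne, by norm_num⟩
  obtain ⟨nn, hn⟩ := ENNReal.exists_nat_gt hfin
  have h2 : (nn:ℝ≥0∞) ≤ (∫⁻ z in Slim ×ˢ Slimᶜ, F z ∂(μ.prod μ)) + 2 :=
    le_trans (le_add_right le_rfl) (hbound nn)
  exact lt_irrefl _ (lt_of_lt_of_le hn h2)
set_option maxHeartbeats 2000000 in
lemma stepB (m : ℕ) (hm : 0 < m) (X : Set (Fin m → ℝ)) (hXmeas : MeasurableSet X)
    (hXbdd : Bornology.IsBounded X)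
    (F : (Fin m → ℝ) × (Fin m → ℝ) → ℝ≥0∞) (hF : Measurable F)
    (S₀ : Set (Fin m → ℝ)) (hS₀ : MeasurableSet S₀) (δ : ℝ≥0∞) (N : ℕ)
    (hball : ∀ S, MeasurableSet S → (volume.restrict X) (symmDiff S S₀) < δ →
      ∫⁻ z in S ×ˢ Sᶜ, F z ∂((volume.restrict X).prod (volume.restrict X)) ≤ N)
    (W : Set (Fin m → ℝ)) (hW : MeasurableSet W) (hWX : W ⊆ X)
    (hWδ : (volume.restrict X) W < δ) :
    ∫⁻ z in W ×ˢ W, F z ∂((volume.restrict X).prod (volume.restrict X)) ≤ 4 * N := by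
  set μ := volume.restrict X with hμ
  obtain ⟨ρ, hρ⟩ := hXbdd.exists_norm_le
  set c : ℕ → (Fin m → ℝ) → (Fin m → ℤ) := fun k x i => ⌊(2:ℝ)^k * x i⌋ with hc
  have hc_meas : ∀ k, Measurable (c k) := fun k =>
    measurable_pi_lambda _ fun i => (measurable_const.mul (measurable_pi_apply i)).floor
  set T : ℕ → Finset (Fin m → ℤ) := fun k =>
    Fintype.piFinset (fun _ => Finset.Icc (-(⌈(2:ℝ)^k*ρ⌉+1)) (⌈(2:ℝ)^k*ρ⌉+1)) with hT
  have hmemT : ∀ k, ∀ x ∈ X, c k x ∈ T k := by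
    intro k x hx
    rw [hT, Fintype.mem_piFinset]
    intro i
    rw [Finset.mem_Icc]
    have hxi : |x i| ≤ ρ := le_trans (by
      have := norm_le_pi_norm x i
      rwa [Real.norm_eq_abs] at this) (hρ x hx)
    have hpow : (0:ℝ) ≤ (2:ℝ)^k := by positivity
    have habs : |x i| ≤ ρ := hxi
    have h1 : (2:ℝ)^k * x i ≤ (2:ℝ)^k * ρ := mul_le_mul_of_nonneg_left (le_trans (le_abs_self _) habs) hpow
    have h2 : -((2:ℝ)^k * ρ) ≤ (2:ℝ)^k * x i := by
      have : -ρ ≤ x i := neg_le_of_abs_le habs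
      nlinarith
    constructor
    · calc -(⌈(2:ℝ)^k*ρ⌉+1) ≤ -⌈(2:ℝ)^k*ρ⌉ := by omega
      _ = ⌊-((2:ℝ)^k*ρ)⌋ := (Int.floor_neg).symm
      _ ≤ ⌊(2:ℝ)^k * x i⌋ := Int.floor_mono h2
    · calc ⌊(2:ℝ)^k * x i⌋ ≤ ⌊(2:ℝ)^k * ρ⌋ := Int.floor_mono h1
      _ ≤ ⌈(2:ℝ)^k*ρ⌉ := Int.floor_le_ceil _
      _ ≤ ⌈(2:ℝ)^k*ρ⌉+1 := by omega
  set E : ℕ → Set ((Fin m → ℝ) × (Fin m → ℝ)) :=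
    fun k => (W ×ˢ W) ∩ {z | c k z.1 ≠ c k z.2} with hE
  have hEmeas : ∀ k, MeasurableSet (E k) := by
    intro k
    apply (hW.prod hW).inter
    have h2 : MeasurableSet {z : (Fin m → ℝ) × (Fin m → ℝ) | c k z.1 = c k z.2} :=
      measurableSet_eq_fun ((hc_meas k).comp measurable_fst)
        ((hc_meas k).comp measurable_snd)
    exact h2.compl
  have hEmono : Monotone E := by
    intro k l hkl z hz
    obtain ⟨hzW, hzc⟩ := hz
    refine ⟨hzW, fun hEq => hzc ?_⟩
    funext i
    exact cell_le _ _ k l hkl (congrFun hEq i)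
  have hEcover : (W ×ˢ W) \ {z : (Fin m → ℝ) × (Fin m → ℝ) | z.1 = z.2} ⊆ ⋃ k, E k := by
    rintro z ⟨hzW, hzd⟩
    have : z.1 ≠ z.2 := hzd
    obtain ⟨i, hi⟩ := Function.ne_iff.mp this
    obtain ⟨k, hk⟩ := cell_sep (z.1 i) (z.2 i) hi
    exact Set.mem_iUnion.mpr ⟨k, hzW, fun hEq => hk (congrFun hEq i)⟩
  -- the key uniform bound
  have hEk : ∀ k, ∫⁻ z in E k, F z ∂(μ.prod μ) ≤ 4 * N := by
    intro k
    rcases (E k).eq_empty_or_nonempty with hemp | ⟨z₀, hz₀⟩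
    · rw [hemp]; simp
    obtain ⟨hz₀W, hz₀c⟩ := hz₀
    have hccT : c k z₀.1 ∈ T k := hmemT k _ (hWX hz₀W.1)
    have hddT : c k z₀.2 ∈ T k := hmemT k _ (hWX hz₀W.2)
    have hcard2 : 2 ≤ (T k).card := by
      have hsub : {c k z₀.1, c k z₀.2} ⊆ T k := by
        intro a ha; rcases Finset.mem_insert.mp ha with rfl | ha
        · exact hccT
        · rwa [Finset.mem_singleton.mp ha]
      calc 2 = ({c k z₀.1, c k z₀.2} : Finset _).card := (Finset.card_pair hz₀c).symm
      _ ≤ (T k).card := Finset.card_le_card hsub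
    set SS : Finset (Fin m → ℤ) → Set (Fin m → ℝ) :=
      fun σ => (S₀ \ W) ∪ (W ∩ (c k)⁻¹' ↑σ) with hSS
    have hSSmeas : ∀ σ, MeasurableSet (SS σ) := fun σ =>
      (hS₀.diff hW).union (hW.inter ((hc_meas k) (σ.finite_toSet.measurableSet)))
    have hSSN : ∀ σ, ∫⁻ z in SS σ ×ˢ (SS σ)ᶜ, F z ∂(μ.prod μ) ≤ N := by
      intro σ
      apply hball _ (hSSmeas σ)
      refine lt_of_le_of_lt (measure_mono ?_) hWδ
      intro x hx
      rw [Set.mem_symmDiff] at hx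
      rcases hx with ⟨hx1, hx2⟩ | ⟨hx1, hx2⟩
      · rcases hx1 with h | h
        · exact absurd h.1 hx2
        · exact h.1
      · by_contra hxW
        exact hx2 (Or.inl ⟨hx1, hxW⟩)
    have hpt : ∀ z, (2:ℝ≥0∞)^((T k).card - 2) * (E k).indicator F z ≤
        ∑ σ ∈ (T k).powerset, ((SS σ) ×ˢ (SS σ)ᶜ).indicator F z := by
      intro z
      by_cases hz : z ∈ E k
      · obtain ⟨hzW, hzc⟩ := id hz
        rw [Set.indicator_of_mem hz]
        set cc := c k z.1 with hcc
        set dd := c k z.2 with hdd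
        have hccT' : cc ∈ T k := hmemT k _ (hWX hzW.1)
        have hddT' : dd ∈ T k := hmemT k _ (hWX hzW.2)
        set P : Finset (Finset (Fin m → ℤ)) := (((T k).erase cc).erase dd).powerset with hP
        have hgood : ∀ τ ∈ P, z ∈ (SS (insert cc τ)) ×ˢ (SS (insert cc τ))ᶜ := by
          intro τ hτ
          rw [hP, Finset.mem_powerset] at hτ
          constructor
          · refine Or.inr ⟨hzW.1, ?_⟩
            simp [hSS, hcc]
          · intro hmem
            rcases hmem with h | h
            · exact h.2 hzW.2
            · have : dd ∈ insert cc τ := by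
                simpa [hdd] using h.2
              rcases Finset.mem_insert.mp this with h' | h'
              · exact hzc (hcc ▸ hdd ▸ h'.symm)
              · have := hτ h'
                exact absurd this (Finset.notMem_erase dd _)
        have hinj : Set.InjOn (fun τ : Finset (Fin m → ℤ) => insert cc τ) ↑P := by
          intro τ₁ h₁ τ₂ h₂ hEq
          have m₁ : τ₁ ⊆ ((T k).erase cc).erase dd := Finset.mem_powerset.mp (Finset.mem_coe.mp h₁)
          have m₂ : τ₂ ⊆ ((T k).erase cc).erase dd := Finset.mem_powerset.mp (Finset.mem_coe.mp h₂)
          have hcc1 : cc ∉ τ₁ := fun h => Finset.notMem_erase cc _ (Finset.mem_of_mem_erase (m₁ h) : cc ∈ (T k).erase cc)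
          have hcc2 : cc ∉ τ₂ := fun h => Finset.notMem_erase cc _ (Finset.mem_of_mem_erase (m₂ h) : cc ∈ (T k).erase cc)
          have := congrArg (fun s => Finset.erase s cc) hEq
          simpa [Finset.erase_insert hcc1, Finset.erase_insert hcc2] using this
        have hsubset : P.image (fun τ => insert cc τ) ⊆ (T k).powerset := by
          intro σ hσ
          obtain ⟨τ, hτ, rfl⟩ := Finset.mem_image.mp hσ
          rw [Finset.mem_powerset]
          rw [hP, Finset.mem_powerset] at hτ
          intro a ha
          rcases Finset.mem_insert.mp ha with rfl | ha
          · exact hccT'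
          · exact Finset.mem_of_mem_erase (Finset.mem_of_mem_erase (hτ ha))
        calc (2:ℝ≥0∞)^((T k).card - 2) * F z
            = ∑ τ ∈ P, F z := by
              have e1 : dd ∈ (T k).erase cc :=
                Finset.mem_erase.mpr ⟨fun h => hzc (hcc ▸ hdd ▸ h.symm), hddT'⟩
              rw [Finset.sum_const, nsmul_eq_mul, hP, Finset.card_powerset,
                Finset.card_erase_of_mem e1, Finset.card_erase_of_mem hccT',
                show (T k).card - 1 - 1 = (T k).card - 2 by omega]
              push_cast
              ring
          _ = ∑ τ ∈ P, ((SS (insert cc τ)) ×ˢ (SS (insert cc τ))ᶜ).indicator F z := by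
              apply Finset.sum_congr rfl
              intro τ hτ
              rw [Set.indicator_of_mem (hgood τ hτ)]
          _ = ∑ σ ∈ P.image (fun τ => insert cc τ), ((SS σ) ×ˢ (SS σ)ᶜ).indicator F z := by
              rw [Finset.sum_image (fun a ha b hb h => hinj ha hb h)]
          _ ≤ ∑ σ ∈ (T k).powerset, ((SS σ) ×ˢ (SS σ)ᶜ).indicator F z :=
              Finset.sum_le_sum_of_subset hsubset
      · rw [Set.indicator_of_notMem hz, mul_zero]
        exact zero_le
    have hint : (2:ℝ≥0∞)^((T k).card - 2) * ∫⁻ z in E k, F z ∂(μ.prod μ) ≤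
        (2:ℝ≥0∞)^((T k).card) * N := by
      calc (2:ℝ≥0∞)^((T k).card - 2) * ∫⁻ z in E k, F z ∂(μ.prod μ)
          = ∫⁻ z, (2:ℝ≥0∞)^((T k).card - 2) * (E k).indicator F z ∂(μ.prod μ) := by
            rw [lintegral_const_mul _ (hF.indicator (hEmeas k)), lintegral_indicator (hEmeas k)]
      _ ≤ ∫⁻ z, ∑ σ ∈ (T k).powerset, ((SS σ) ×ˢ (SS σ)ᶜ).indicator F z ∂(μ.prod μ) :=
            lintegral_mono hpt
      _ = ∑ σ ∈ (T k).powerset, ∫⁻ z, ((SS σ) ×ˢ (SS σ)ᶜ).indicator F z ∂(μ.prod μ) :=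
            lintegral_finset_sum _ (fun σ _ => hF.indicator ((hSSmeas σ).prod (hSSmeas σ).compl))
      _ = ∑ σ ∈ (T k).powerset, ∫⁻ z in (SS σ) ×ˢ (SS σ)ᶜ, F z ∂(μ.prod μ) := by
            apply Finset.sum_congr rfl
            intro σ _
            exact lintegral_indicator ((hSSmeas σ).prod (hSSmeas σ).compl) F
      _ ≤ ∑ _σ ∈ (T k).powerset, (N:ℝ≥0∞) := Finset.sum_le_sum (fun σ _ => hSSN σ)
      _ = (2:ℝ≥0∞)^((T k).card) * N := by
            rw [Finset.sum_const, Finset.card_powerset, nsmul_eq_mul]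
            push_cast
            ring
    have hpowsplit : (2:ℝ≥0∞)^((T k).card) * N = (2:ℝ≥0∞)^((T k).card - 2) * (4 * N) := by
      calc (2:ℝ≥0∞)^((T k).card) * N = ((2:ℝ≥0∞)^((T k).card-2) * 2^2) * N := by
            rw [← pow_add, show ((T k).card-2)+2 = (T k).card by omega]
      _ = (2:ℝ≥0∞)^((T k).card - 2) * (4 * N) := by rw [mul_assoc]; norm_num
    rw [hpowsplit] at hint
    exact (ENNReal.mul_le_mul_iff_right (pow_ne_zero _ (by norm_num))
      (ENNReal.pow_ne_top (by norm_num))).mp hint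
  -- pass to the limit
  have hiU : ∫⁻ z in ⋃ k, E k, F z ∂(μ.prod μ) ≤ 4 * N := by
    have hptw : ∀ z, (⋃ k, E k).indicator F z = ⨆ k, (E k).indicator F z := by
      intro z
      by_cases hz : z ∈ ⋃ k, E k
      · obtain ⟨k₀, hk₀⟩ := Set.mem_iUnion.mp hz
        rw [Set.indicator_of_mem hz]
        apply le_antisymm
        · rw [← Set.indicator_of_mem hk₀ F]
          exact le_iSup (fun k => (E k).indicator F z) k₀
        · exact iSup_le fun k => Set.indicator_le_self' (fun _ _ => zero_le) z
      · rw [Set.indicator_of_notMem hz]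
        have : ∀ k, z ∉ E k := fun k hk => hz (Set.mem_iUnion.mpr ⟨k, hk⟩)
        simp [Set.indicator_of_notMem (this _)]
    calc ∫⁻ z in ⋃ k, E k, F z ∂(μ.prod μ)
        = ∫⁻ z, (⋃ k, E k).indicator F z ∂(μ.prod μ) :=
          (lintegral_indicator (MeasurableSet.iUnion hEmeas) F).symm
    _ = ∫⁻ z, ⨆ k, (E k).indicator F z ∂(μ.prod μ) := by
          apply lintegral_congr hptw
    _ = ⨆ k, ∫⁻ z, (E k).indicator F z ∂(μ.prod μ) :=
          lintegral_iSup (fun k => hF.indicator (hEmeas k))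
            (fun a b hab z => Set.indicator_le_indicator_of_subset (hEmono hab) (fun _ => zero_le) z)
    _ ≤ 4 * N := by
          apply iSup_le
          intro k
          rw [lintegral_indicator (hEmeas k)]
          exact hEk k
  have hdiag : ∫⁻ z in {z : (Fin m → ℝ) × (Fin m → ℝ) | z.1 = z.2}, F z ∂(μ.prod μ) = 0 :=
    setLIntegral_measure_zero _ _ (diag_null m hm μ Measure.restrict_le_self)
  calc ∫⁻ z in W ×ˢ W, F z ∂(μ.prod μ)
      ≤ ∫⁻ z in (⋃ k, E k) ∪ {z : (Fin m → ℝ) × (Fin m → ℝ) | z.1 = z.2}, F z ∂(μ.prod μ) := by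
        apply lintegral_mono_set
        intro z hz
        by_cases hd : z.1 = z.2
        · exact Or.inr hd
        · exact Or.inl (hEcover ⟨hz, hd⟩)
  _ ≤ (∫⁻ z in ⋃ k, E k, F z ∂(μ.prod μ))
      + ∫⁻ z in {z : (Fin m → ℝ) × (Fin m → ℝ) | z.1 = z.2}, F z ∂(μ.prod μ) :=
        lintegral_union_le _ _ _
  _ ≤ 4 * N + 0 := add_le_add hiU hdiag.le
  _ = 4 * N := by ring
set_option maxHeartbeats 2000000 in
lemma core (m : ℕ) (hm : 0 < m) (X : Set (Fin m → ℝ)) (hXmeas : MeasurableSet X)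
    (hXbdd : Bornology.IsBounded X)
    (F : (Fin m → ℝ) × (Fin m → ℝ) → ℝ≥0∞) (hF : Measurable F)
    (key : ∀ S, MeasurableSet S →
      ∫⁻ z in S ×ˢ Sᶜ, F z ∂((volume.restrict X).prod (volume.restrict X)) < ⊤) :
    ∫⁻ z, F z ∂((volume.restrict X).prod (volume.restrict X)) < ⊤ := by
  set μ := volume.restrict X with hμ
  have hVtop : μ Set.univ ≠ ⊤ := by
    rw [hμ, Measure.restrict_apply_univ]
    exact hXbdd.measure_lt_top.ne
  rcases eq_or_ne (μ Set.univ) 0 with hV0 | hV0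
  · have hπ : (μ.prod μ) Set.univ = 0 := by
      rw [← Set.univ_prod_univ, Measure.prod_prod, hV0, zero_mul]
    have hzero : μ.prod μ = 0 := Measure.measure_univ_eq_zero.mp hπ
    rw [hzero]
    simp
  obtain ⟨S₀, hS₀, δ, hδ, N, hball⟩ := stepA μ hV0 hVtop F hF key
  obtain ⟨n0, hn0⟩ := ENNReal.exists_inv_two_pow_lt hδ.ne'
  set k₀ : ℕ := n0 + 1 with hk₀
  set c₀ : (Fin m → ℝ) → (Fin m → ℤ) := fun x i => ⌊(2:ℝ)^k₀ * x i⌋ with hc₀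
  have hc₀meas : Measurable c₀ :=
    measurable_pi_lambda _ fun i => (measurable_const.mul (measurable_pi_apply i)).floor
  set Q : (Fin m → ℤ) → Set (Fin m → ℝ) := fun d => c₀⁻¹' {d} with hQ
  have hQmeas : ∀ d, MeasurableSet (Q d) := fun d => hc₀meas (measurableSet_singleton d)
  have hQeq : ∀ d, Q d = Set.pi Set.univ (fun i => Set.Ico ((d i : ℝ)/2^k₀) (((d i : ℝ)+1)/2^k₀)) := by
    intro d
    ext x
    simp only [hQ, Set.mem_preimage, Set.mem_singleton_iff, Set.mem_pi, Set.mem_univ,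
      Set.mem_Ico, true_implies, funext_iff]
    have hpow : (0:ℝ) < (2:ℝ)^k₀ := by positivity
    constructor
    · intro h i
      have h1 := h i
      rw [hc₀] at h1
      have h2 : ((d i : ℝ)) ≤ (2:ℝ)^k₀ * x i ∧ (2:ℝ)^k₀ * x i < (d i : ℝ) + 1 := by
        rw [← h1]
        exact ⟨Int.floor_le _, Int.lt_floor_add_one _⟩
      constructor
      · rw [div_le_iff₀ hpow]; linarith [h2.1]
      · rw [lt_div_iff₀ hpow]; linarith [h2.2]
    · intro h i
      obtain ⟨h1, h2⟩ := h i
      rw [div_le_iff₀ hpow] at h1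
      rw [lt_div_iff₀ hpow] at h2
      rw [hc₀]
      exact Int.floor_eq_iff.mpr ⟨by linarith, by linarith⟩
  have hQvol : ∀ d, volume (Q d) ≤ (2⁻¹:ℝ≥0∞)^k₀ := by
    intro d
    rw [hQeq d, volume_pi_pi]
    have hlen : ∀ i : Fin m, volume (Set.Ico ((d i : ℝ)/2^k₀) (((d i : ℝ)+1)/2^k₀))
        = ENNReal.ofReal ((2:ℝ)⁻¹^k₀) := by
      intro i
      rw [Real.volume_Ico]
      congr 1
      rw [inv_pow]; ring
    simp only [hlen]
    rw [Finset.prod_const, Finset.card_univ, Fintype.card_fin]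
    have hofr : ENNReal.ofReal ((2:ℝ)⁻¹^k₀) = (2⁻¹:ℝ≥0∞)^k₀ := by
      rw [ENNReal.ofReal_pow (by norm_num)]
      congr 1
      rw [ENNReal.ofReal_inv_of_pos (by norm_num)]
      norm_num
    rw [hofr]
    calc ((2⁻¹:ℝ≥0∞)^k₀)^m ≤ ((2⁻¹:ℝ≥0∞)^k₀)^1 :=
      pow_le_pow_of_le_one (zero_le) (pow_le_one' (by norm_num) _) hm
    _ = (2⁻¹:ℝ≥0∞)^k₀ := pow_one _
  have hμQ : ∀ d, μ (Q d) ≤ (2⁻¹:ℝ≥0∞)^k₀ := by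
    intro d
    rw [hμ, Measure.restrict_apply' hXmeas]
    exact le_trans (measure_mono Set.inter_subset_left) (hQvol d)
  -- bound on pairs of cubes
  have hpair : ∀ d e : Fin m → ℤ,
      ∫⁻ z in (X ∩ Q d) ×ˢ (X ∩ Q e), F z ∂(μ.prod μ) ≤ 4 * N := by
    intro d e
    set W : Set (Fin m → ℝ) := (X ∩ Q d) ∪ (X ∩ Q e) with hW
    have hWmeas : MeasurableSet W := (hXmeas.inter (hQmeas d)).union (hXmeas.inter (hQmeas e))
    have hWX : W ⊆ X := Set.union_subset Set.inter_subset_left Set.inter_subset_left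
    have hWδ : μ W < δ := by
      calc μ W ≤ μ (X ∩ Q d) + μ (X ∩ Q e) := measure_union_le _ _
      _ ≤ (2⁻¹:ℝ≥0∞)^k₀ + (2⁻¹:ℝ≥0∞)^k₀ := by
          apply add_le_add
          · exact le_trans (measure_mono Set.inter_subset_right) (hμQ d)
          · exact le_trans (measure_mono Set.inter_subset_right) (hμQ e)
      _ = (2⁻¹:ℝ≥0∞)^n0 * (2⁻¹ + 2⁻¹) := by rw [hk₀, pow_succ]; ring
      _ = (2⁻¹:ℝ≥0∞)^n0 := by rw [ENNReal.inv_two_add_inv_two, mul_one]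
      _ < δ := hn0
    calc ∫⁻ z in (X ∩ Q d) ×ˢ (X ∩ Q e), F z ∂(μ.prod μ)
        ≤ ∫⁻ z in W ×ˢ W, F z ∂(μ.prod μ) := by
          apply lintegral_mono_set
          exact Set.prod_mono Set.subset_union_left Set.subset_union_right
    _ ≤ 4 * N := stepB m hm X hXmeas hXbdd F hF S₀ hS₀ δ N hball W hWmeas hWX hWδ
  -- finite set of relevant cubes
  obtain ⟨ρ, hρ⟩ := hXbdd.exists_norm_le
  set T₀ : Finset (Fin m → ℤ) :=
    Fintype.piFinset (fun _ => Finset.Icc (-(⌈(2:ℝ)^k₀*ρ⌉+1)) (⌈(2:ℝ)^k₀*ρ⌉+1)) with hT₀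
  have hmemT₀ : ∀ x ∈ X, c₀ x ∈ T₀ := by
    intro x hx
    rw [hT₀, Fintype.mem_piFinset]
    intro i
    rw [Finset.mem_Icc]
    have hxi : |x i| ≤ ρ := le_trans (by
      have := norm_le_pi_norm x i
      rwa [Real.norm_eq_abs] at this) (hρ x hx)
    have hpow : (0:ℝ) ≤ (2:ℝ)^k₀ := by positivity
    have h1 : (2:ℝ)^k₀ * x i ≤ (2:ℝ)^k₀ * ρ :=
      mul_le_mul_of_nonneg_left (le_trans (le_abs_self _) hxi) hpow
    have h2 : -((2:ℝ)^k₀ * ρ) ≤ (2:ℝ)^k₀ * x i := by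
      have : -ρ ≤ x i := neg_le_of_abs_le hxi
      nlinarith
    constructor
    · calc -(⌈(2:ℝ)^k₀*ρ⌉+1) ≤ -⌈(2:ℝ)^k₀*ρ⌉ := by omega
      _ = ⌊-((2:ℝ)^k₀*ρ)⌋ := (Int.floor_neg).symm
      _ ≤ ⌊(2:ℝ)^k₀ * x i⌋ := Int.floor_mono h2
    · calc ⌊(2:ℝ)^k₀ * x i⌋ ≤ ⌊(2:ℝ)^k₀ * ρ⌋ := Int.floor_mono h1
      _ ≤ ⌈(2:ℝ)^k₀*ρ⌉ := Int.floor_le_ceil _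
      _ ≤ ⌈(2:ℝ)^k₀*ρ⌉+1 := by omega
  -- split off the complement of X ×ˢ X
  have hcompl : ∫⁻ z in (X ×ˢ X)ᶜ, F z ∂(μ.prod μ) = 0 := by
    apply setLIntegral_measure_zero
    have hsub : (X ×ˢ X)ᶜ ⊆ (Xᶜ ×ˢ (Set.univ : Set (Fin m → ℝ)))
        ∪ ((Set.univ : Set (Fin m → ℝ)) ×ˢ Xᶜ) := by
      intro z hz
      rw [Set.mem_compl_iff, Set.mem_prod, not_and_or] at hz
      rcases hz with h | h
      · exact Or.inl ⟨h, Set.mem_univ _⟩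
      · exact Or.inr ⟨Set.mem_univ _, h⟩
    have hXc : μ Xᶜ = 0 := by
      rw [hμ, Measure.restrict_apply' hXmeas]
      simp
    apply measure_mono_null hsub
    apply le_antisymm _ (zero_le)
    calc (μ.prod μ) ((Xᶜ ×ˢ (Set.univ : Set (Fin m → ℝ)))
        ∪ ((Set.univ : Set (Fin m → ℝ)) ×ˢ Xᶜ))
        ≤ (μ.prod μ) (Xᶜ ×ˢ (Set.univ : Set (Fin m → ℝ)))
          + (μ.prod μ) ((Set.univ : Set (Fin m → ℝ)) ×ˢ Xᶜ) := measure_union_le _ _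
    _ = 0 := by rw [Measure.prod_prod, Measure.prod_prod, hXc, zero_mul, mul_zero, add_zero]
  have hXXbound : ∫⁻ z in X ×ˢ X, F z ∂(μ.prod μ) ≤ ((T₀.card * T₀.card : ℕ) : ℝ≥0∞) * (4 * N) := by
    have hpt : ∀ z, (X ×ˢ X).indicator F z ≤
        ∑ q ∈ T₀ ×ˢ T₀, ((X ∩ Q q.1) ×ˢ (X ∩ Q q.2)).indicator F z := by
      intro z
      by_cases hz : z ∈ X ×ˢ X
      · rw [Set.indicator_of_mem hz]
        have hq : (c₀ z.1, c₀ z.2) ∈ T₀ ×ˢ T₀ :=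
          Finset.mem_product.mpr ⟨hmemT₀ _ hz.1, hmemT₀ _ hz.2⟩
        have hzmem : z ∈ (X ∩ Q (c₀ z.1)) ×ˢ (X ∩ Q (c₀ z.2)) :=
          ⟨⟨hz.1, rfl⟩, ⟨hz.2, rfl⟩⟩
        calc F z = ((X ∩ Q (c₀ z.1)) ×ˢ (X ∩ Q (c₀ z.2))).indicator F z :=
              (Set.indicator_of_mem hzmem F).symm
        _ ≤ _ := Finset.single_le_sum
              (f := fun q => ((X ∩ Q q.1) ×ˢ (X ∩ Q q.2)).indicator F z)
              (fun q _ => zero_le) hq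
      · rw [Set.indicator_of_notMem hz]
        exact zero_le
    calc ∫⁻ z in X ×ˢ X, F z ∂(μ.prod μ)
        = ∫⁻ z, (X ×ˢ X).indicator F z ∂(μ.prod μ) :=
          (lintegral_indicator (hXmeas.prod hXmeas) F).symm
    _ ≤ ∫⁻ z, ∑ q ∈ T₀ ×ˢ T₀, ((X ∩ Q q.1) ×ˢ (X ∩ Q q.2)).indicator F z ∂(μ.prod μ) :=
          lintegral_mono hpt
    _ = ∑ q ∈ T₀ ×ˢ T₀, ∫⁻ z, ((X ∩ Q q.1) ×ˢ (X ∩ Q q.2)).indicator F z ∂(μ.prod μ) :=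
          lintegral_finset_sum _ (fun q _ => hF.indicator
            ((hXmeas.inter (hQmeas q.1)).prod (hXmeas.inter (hQmeas q.2))))
    _ = ∑ q ∈ T₀ ×ˢ T₀, ∫⁻ z in (X ∩ Q q.1) ×ˢ (X ∩ Q q.2), F z ∂(μ.prod μ) := by
          apply Finset.sum_congr rfl
          intro q _
          exact lintegral_indicator ((hXmeas.inter (hQmeas q.1)).prod (hXmeas.inter (hQmeas q.2))) F
    _ ≤ ∑ _q ∈ T₀ ×ˢ T₀, (4 * (N:ℝ≥0∞)) := Finset.sum_le_sum (fun q _ => hpair q.1 q.2)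
    _ = ((T₀.card * T₀.card : ℕ) : ℝ≥0∞) * (4 * N) := by
          rw [Finset.sum_const, nsmul_eq_mul, Finset.card_product]
  calc ∫⁻ z, F z ∂(μ.prod μ)
      = (∫⁻ z in X ×ˢ X, F z ∂(μ.prod μ)) + ∫⁻ z in (X ×ˢ X)ᶜ, F z ∂(μ.prod μ) :=
        (lintegral_add_compl F (hXmeas.prod hXmeas)).symm
  _ ≤ ((T₀.card * T₀.card : ℕ) : ℝ≥0∞) * (4 * N) + 0 := add_le_add hXXbound hcompl.le
  _ < ⊤ := by
      rw [add_zero]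
      apply ENNReal.mul_lt_top
      · exact ENNReal.natCast_lt_top _
      · exact ENNReal.mul_lt_top (by norm_num) (ENNReal.natCast_lt_top _)
set_option maxHeartbeats 1000000 in
theorem stmt_0 (m n : ℕ) (hm : 0 < m) (hn : 0 < n)
    (X : Set (Fin m → ℝ)) (hXmeas : MeasurableSet X) (hXbdd : Bornology.IsBounded X)
    (p : ℝ) (hp : 1 ≤ p)
    (f : (Fin m → ℝ) → (Fin m → ℝ) → EuclideanSpace ℝ (Fin n) → EuclideanSpace ℝ (Fin n) → ℝ)
    (hfmeas : Measurable (fun q : ((Fin m → ℝ) × (Fin m → ℝ)) ×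
      (EuclideanSpace ℝ (Fin n)) × (EuclideanSpace ℝ (Fin n)) => f q.1.1 q.1.2 q.2.1 q.2.2))
    (hfnonneg : ∀ x y w z, 0 ≤ f x y w z)
    (hfin : ∀ u : (Fin m → ℝ) → EuclideanSpace ℝ (Fin n),
      MemLp u (ENNReal.ofReal p) (volume.restrict X) →
      ∫⁻ x, ∫⁻ y, ENNReal.ofReal (f x y (u x) (u y))
        ∂(volume.restrict X) ∂(volume.restrict X) < ⊤) :
    ∀ φ ψ : (Fin m → ℝ) → EuclideanSpace ℝ (Fin n),
      MemLp φ (ENNReal.ofReal p) (volume.restrict X) →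
      MemLp ψ (ENNReal.ofReal p) (volume.restrict X) →
      ∫⁻ x, ∫⁻ y, ENNReal.ofReal (f x y (φ x) (ψ y))
        ∂(volume.restrict X) ∂(volume.restrict X) < ⊤ := by
  intro φ ψ hφ hψ
  set μ := volume.restrict X with hμdef
  have hφsm := hφ.aestronglyMeasurable
  have hψsm := hψ.aestronglyMeasurable
  set φ' := hφsm.mk φ with hφ'def
  set ψ' := hψsm.mk ψ with hψ'def
  have hφ'meas : Measurable φ' := hφsm.stronglyMeasurable_mk.measurable
  have hψ'meas : Measurable ψ' := hψsm.stronglyMeasurable_mk.measurable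
  have hφae : φ =ᵐ[μ] φ' := hφsm.ae_eq_mk
  have hψae : ψ =ᵐ[μ] ψ' := hψsm.ae_eq_mk
  have hφ'Lp : MemLp φ' (ENNReal.ofReal p) μ := hφ.ae_eq hφae
  have hψ'Lp : MemLp ψ' (ENNReal.ofReal p) μ := hψ.ae_eq hψae
  set F : (Fin m → ℝ) × (Fin m → ℝ) → ℝ≥0∞ :=
    fun z => ENNReal.ofReal (f z.1 z.2 (φ' z.1) (ψ' z.2)) with hFdef
  have hFmeas : Measurable F := by
    apply ENNReal.measurable_ofReal.comp
    exact hfmeas.comp ((measurable_fst.prodMk measurable_snd).prodMk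
      ((hφ'meas.comp measurable_fst).prodMk (hψ'meas.comp measurable_snd)))
  have key : ∀ S, MeasurableSet S → ∫⁻ z in S ×ˢ Sᶜ, F z ∂(μ.prod μ) < ⊤ := by
    intro S hS
    classical
    set u : (Fin m → ℝ) → EuclideanSpace ℝ (Fin n) := S.piecewise φ' ψ' with hudef
    have humeas : Measurable u := Measurable.piecewise hS hφ'meas hψ'meas
    have huLp : MemLp u (ENNReal.ofReal p) μ := by
      have heq : u = S.indicator φ' + Sᶜ.indicator ψ' := by
        funext x
        by_cases hx : x ∈ S
        · rw [hudef]
          rw [Set.piecewise_eq_of_mem _ _ _ hx]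
          rw [Pi.add_apply, Set.indicator_of_mem hx, Set.indicator_of_notMem (by simpa using hx)]
          simp
        · rw [hudef]
          rw [Set.piecewise_eq_of_notMem _ _ _ hx]
          rw [Pi.add_apply, Set.indicator_of_notMem hx, Set.indicator_of_mem (by simpa using hx)]
          simp
      rw [heq]
      exact (hφ'Lp.indicator hS).add (hψ'Lp.indicator hS.compl)
    have hfinu := hfin u huLp
    have hGmeas : Measurable
        (fun z : (Fin m → ℝ) × (Fin m → ℝ) => ENNReal.ofReal (f z.1 z.2 (u z.1) (u z.2))) := by
      apply ENNReal.measurable_ofReal.comp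
      exact hfmeas.comp ((measurable_fst.prodMk measurable_snd).prodMk
        ((humeas.comp measurable_fst).prodMk (humeas.comp measurable_snd)))
    have hprod : ∫⁻ z, ENNReal.ofReal (f z.1 z.2 (u z.1) (u z.2)) ∂(μ.prod μ)
        = ∫⁻ x, ∫⁻ y, ENNReal.ofReal (f x y (u x) (u y)) ∂μ ∂μ :=
      lintegral_prod _ hGmeas.aemeasurable
    calc ∫⁻ z in S ×ˢ Sᶜ, F z ∂(μ.prod μ)
        ≤ ∫⁻ z, ENNReal.ofReal (f z.1 z.2 (u z.1) (u z.2)) ∂(μ.prod μ) := by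
          rw [← lintegral_indicator (hS.prod hS.compl)]
          apply lintegral_mono
          intro z
          by_cases hz : z ∈ S ×ˢ Sᶜ
          · rw [Set.indicator_of_mem hz]
            have h1 : u z.1 = φ' z.1 := Set.piecewise_eq_of_mem _ _ _ hz.1
            have h2 : u z.2 = ψ' z.2 := Set.piecewise_eq_of_notMem _ _ _ hz.2
            exact le_of_eq (show ENNReal.ofReal (f z.1 z.2 (φ' z.1) (ψ' z.2))
              = ENNReal.ofReal (f z.1 z.2 (u z.1) (u z.2)) by rw [h1, h2])
          · rw [Set.indicator_of_notMem hz]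
            exact zero_le
    _ = ∫⁻ x, ∫⁻ y, ENNReal.ofReal (f x y (u x) (u y)) ∂μ ∂μ := hprod
    _ < ⊤ := hfinu
  have hcore := core m hm X hXmeas hXbdd F hFmeas key
  have hstep1 : ∫⁻ x, ∫⁻ y, ENNReal.ofReal (f x y (φ x) (ψ y)) ∂μ ∂μ
      = ∫⁻ x, ∫⁻ y, ENNReal.ofReal (f x y (φ' x) (ψ' y)) ∂μ ∂μ := by
    apply lintegral_congr_ae
    filter_upwards [hφae] with x hx
    apply lintegral_congr_ae
    filter_upwards [hψae] with y hy
    rw [hx, hy]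
  have h2 : ∫⁻ z, F z ∂(μ.prod μ)
      = ∫⁻ x, ∫⁻ y, ENNReal.ofReal (f x y (φ' x) (ψ' y)) ∂μ ∂μ :=
    lintegral_prod F hFmeas.aemeasurable
  rw [hstep1, ← h2]
  exact hcore
end

section
/- Let p ∈ [1,∞) and let f : X × X × ℝⁿ × ℝⁿ → [0,∞) be measurable and p-bounded, i.e. there exist a constant C > 0 and nonnegative functions α ∈ L^1(X×X) and β ∈ L^1(X) with f(x,y,w,z) ≤ α(x,y) + β(x)|z|^p + β(y)|w|^p + C|w|^p|z|^p for almost all (x,y) ∈ X×X and all w, z ∈ ℝⁿ. Then ∫_X ∫_X f(x,y,u(x),u(y)) dx dy < ∞ for every u ∈ L^p(X;ℝⁿ). -/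
open MeasureTheory ENNReal Filter Topology

theorem stmt_4 (m n : ℕ) (hm : 0 < m) (hn : 0 < n)
    (X : Set (Fin m → ℝ)) (hXmeas : MeasurableSet X) (hXbdd : Bornology.IsBounded X)
    (p : ℝ) (hp : 1 ≤ p)
    (f : (Fin m → ℝ) → (Fin m → ℝ) → EuclideanSpace ℝ (Fin n) → EuclideanSpace ℝ (Fin n) → ℝ)
    (hfmeas : Measurable (fun q : ((Fin m → ℝ) × (Fin m → ℝ)) ×
      (EuclideanSpace ℝ (Fin n)) × (EuclideanSpace ℝ (Fin n)) => f q.1.1 q.1.2 q.2.1 q.2.2))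
    (hfnonneg : ∀ x y w z, 0 ≤ f x y w z)
    (hpbdd : ∃ (C : ℝ) (α : (Fin m → ℝ) × (Fin m → ℝ) → ℝ) (β : (Fin m → ℝ) → ℝ),
      0 < C ∧ (∀ q, 0 ≤ α q) ∧ (∀ x, 0 ≤ β x) ∧
      Integrable α ((volume.restrict X).prod (volume.restrict X)) ∧
      Integrable β (volume.restrict X) ∧
      ∀ᵐ q ∂((volume.restrict X).prod (volume.restrict X)),
        ∀ w z : EuclideanSpace ℝ (Fin n),
          f q.1 q.2 w z ≤ α q + β q.1 * ‖z‖ ^ p + β q.2 * ‖w‖ ^ p +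
            C * ‖w‖ ^ p * ‖z‖ ^ p) :
    ∀ u : (Fin m → ℝ) → EuclideanSpace ℝ (Fin n),
      MemLp u (ENNReal.ofReal p) (volume.restrict X) →
      ∫⁻ x, ∫⁻ y, ENNReal.ofReal (f x y (u x) (u y))
        ∂(volume.restrict X) ∂(volume.restrict X) < ⊤ := by
  intro u hu
  obtain ⟨C, α, β, hC, hα0, hβ0, hαint, hβint, hae⟩ := hpbdd
  set μ := volume.restrict X with hμ
  have hp0 : 0 < p := lt_of_lt_of_le one_pos hp
  have huae : AEMeasurable u μ := hu.aestronglyMeasurable.aemeasurable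
  have hufst : AEMeasurable (fun q : (Fin m → ℝ) × (Fin m → ℝ) => u q.1) (μ.prod μ) :=
    huae.comp_quasiMeasurePreserving MeasureTheory.Measure.quasiMeasurePreserving_fst
  have husnd : AEMeasurable (fun q : (Fin m → ℝ) × (Fin m → ℝ) => u q.2) (μ.prod μ) :=
    huae.comp_quasiMeasurePreserving MeasureTheory.Measure.quasiMeasurePreserving_snd
  have hFae : AEMeasurable (fun q : (Fin m → ℝ) × (Fin m → ℝ) =>
      ENNReal.ofReal (f q.1 q.2 (u q.1) (u q.2))) (μ.prod μ) := by
    apply ENNReal.measurable_ofReal.comp_aemeasurable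
    exact hfmeas.comp_aemeasurable
      (((measurable_fst.aemeasurable).prodMk (measurable_snd.aemeasurable)).prodMk
        (hufst.prodMk husnd))
  set g : (Fin m → ℝ) → ℝ≥0∞ := fun x => ENNReal.ofReal (‖u x‖ ^ p) with hg
  have hgae : AEMeasurable g μ :=
    ENNReal.measurable_ofReal.comp_aemeasurable (huae.norm.pow aemeasurable_const)
  -- finiteness of ∫ g
  have hgfin : ∫⁻ x, g x ∂μ < ⊤ := by
    have := (eLpNorm_lt_top_iff_lintegral_rpow_enorm_lt_top
      (by simp [ENNReal.ofReal_eq_zero, not_le, hp0] : ENNReal.ofReal p ≠ 0)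
      (by simp : ENNReal.ofReal p ≠ ⊤)).mp hu.eLpNorm_lt_top
    rw [ENNReal.toReal_ofReal hp0.le] at this
    refine lt_of_eq_of_lt ?_ this
    refine lintegral_congr fun x => ?_
    show ENNReal.ofReal (‖u x‖ ^ p) = _
    rw [← ofReal_norm_eq_enorm, ENNReal.ofReal_rpow_of_nonneg (norm_nonneg _) hp0.le]
  -- the bound function
  set B : (Fin m → ℝ) × (Fin m → ℝ) → ℝ≥0∞ := fun q =>
    ENNReal.ofReal (α q) + ENNReal.ofReal (β q.1) * g q.2 +
      ENNReal.ofReal (β q.2) * g q.1 + ENNReal.ofReal C * (g q.1 * g q.2) with hB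
  have key : ∫⁻ x, ∫⁻ y, ENNReal.ofReal (f x y (u x) (u y)) ∂μ ∂μ
      = ∫⁻ q, ENNReal.ofReal (f q.1 q.2 (u q.1) (u q.2)) ∂(μ.prod μ) :=
    (MeasureTheory.lintegral_prod _ hFae).symm
  rw [key]
  have hle : ∫⁻ q, ENNReal.ofReal (f q.1 q.2 (u q.1) (u q.2)) ∂(μ.prod μ)
      ≤ ∫⁻ q, B q ∂(μ.prod μ) := by
    refine lintegral_mono_ae ?_
    filter_upwards [hae] with q hq
    have h1 := hq (u q.1) (u q.2)
    calc ENNReal.ofReal (f q.1 q.2 (u q.1) (u q.2))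
        ≤ ENNReal.ofReal (α q + β q.1 * ‖u q.2‖ ^ p + β q.2 * ‖u q.1‖ ^ p +
            C * ‖u q.1‖ ^ p * ‖u q.2‖ ^ p) := ENNReal.ofReal_le_ofReal h1
      _ = B q := by
          have hpow1 : (0:ℝ) ≤ ‖u q.1‖ ^ p := Real.rpow_nonneg (norm_nonneg _) _
          have hpow2 : (0:ℝ) ≤ ‖u q.2‖ ^ p := Real.rpow_nonneg (norm_nonneg _) _
          have ha := hα0 q
          have hb1 : (0:ℝ) ≤ β q.1 * ‖u q.2‖ ^ p := mul_nonneg (hβ0 _) hpow2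
          have hb2 : (0:ℝ) ≤ β q.2 * ‖u q.1‖ ^ p := mul_nonneg (hβ0 _) hpow1
          have hc : (0:ℝ) ≤ C * ‖u q.1‖ ^ p * ‖u q.2‖ ^ p :=
            mul_nonneg (mul_nonneg hC.le hpow1) hpow2
          rw [hB]
          rw [ENNReal.ofReal_add (add_nonneg (add_nonneg ha hb1) hb2) hc,
            ENNReal.ofReal_add (add_nonneg ha hb1) hb2,
            ENNReal.ofReal_add ha hb1,
            ENNReal.ofReal_mul (hβ0 _), ENNReal.ofReal_mul (hβ0 _),
            mul_assoc, ENNReal.ofReal_mul hC.le, ENNReal.ofReal_mul hpow1]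
  refine lt_of_le_of_lt hle ?_
  have hβae : AEMeasurable (fun q : (Fin m → ℝ) × (Fin m → ℝ) => ENNReal.ofReal (β q.1))
      (μ.prod μ) :=
    (ENNReal.measurable_ofReal.comp_aemeasurable hβint.aemeasurable).comp_quasiMeasurePreserving
      MeasureTheory.Measure.quasiMeasurePreserving_fst
  have hβae' : AEMeasurable (fun q : (Fin m → ℝ) × (Fin m → ℝ) => ENNReal.ofReal (β q.2))
      (μ.prod μ) :=
    (ENNReal.measurable_ofReal.comp_aemeasurable hβint.aemeasurable).comp_quasiMeasurePreserving
      MeasureTheory.Measure.quasiMeasurePreserving_snd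
  have hgfstae : AEMeasurable (fun q : (Fin m → ℝ) × (Fin m → ℝ) => g q.1) (μ.prod μ) :=
    hgae.comp_quasiMeasurePreserving MeasureTheory.Measure.quasiMeasurePreserving_fst
  have hgsndae : AEMeasurable (fun q : (Fin m → ℝ) × (Fin m → ℝ) => g q.2) (μ.prod μ) :=
    hgae.comp_quasiMeasurePreserving MeasureTheory.Measure.quasiMeasurePreserving_snd
  have hβofae : AEMeasurable (fun x => ENNReal.ofReal (β x)) μ :=
    ENNReal.measurable_ofReal.comp_aemeasurable hβint.aemeasurable
  -- β lintegral finite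
  have hβfin : ∫⁻ x, ENNReal.ofReal (β x) ∂μ < ⊤ := hβint.lintegral_lt_top
  have hαfin : ∫⁻ q, ENNReal.ofReal (α q) ∂(μ.prod μ) < ⊤ := hαint.lintegral_lt_top
  -- split the integral of B
  have h2 : ∫⁻ q, ENNReal.ofReal (β q.1) * g q.2 ∂(μ.prod μ)
      = (∫⁻ x, ENNReal.ofReal (β x) ∂μ) * ∫⁻ x, g x ∂μ :=
    MeasureTheory.lintegral_prod_mul hβofae hgae
  have h3 : ∫⁻ q, ENNReal.ofReal (β q.2) * g q.1 ∂(μ.prod μ)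
      = (∫⁻ x, g x ∂μ) * ∫⁻ x, ENNReal.ofReal (β x) ∂μ := by
    have := MeasureTheory.lintegral_prod_mul hgae hβofae (μ := μ) (ν := μ)
    rw [← this]
    exact lintegral_congr fun q => mul_comm _ _
  have h4 : ∫⁻ q, ENNReal.ofReal C * (g q.1 * g q.2) ∂(μ.prod μ)
      = ENNReal.ofReal C * ((∫⁻ x, g x ∂μ) * ∫⁻ x, g x ∂μ) := by
    rw [lintegral_const_mul' _ _ ENNReal.ofReal_ne_top,
      MeasureTheory.lintegral_prod_mul hgae hgae]
  have hsplit : ∫⁻ q, B q ∂(μ.prod μ)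
      = (∫⁻ q, ENNReal.ofReal (α q) ∂(μ.prod μ)) +
        (∫⁻ q, ENNReal.ofReal (β q.1) * g q.2 ∂(μ.prod μ)) +
        (∫⁻ q, ENNReal.ofReal (β q.2) * g q.1 ∂(μ.prod μ)) +
        ∫⁻ q, ENNReal.ofReal C * (g q.1 * g q.2) ∂(μ.prod μ) := by
    rw [hB]
    beta_reduce
    erw [lintegral_add_left'
      ((hαint.aemeasurable.ennreal_ofReal.add (hβae.mul hgsndae)).add (hβae'.mul hgfstae)),
      lintegral_add_left' (hαint.aemeasurable.ennreal_ofReal.add (hβae.mul hgsndae)),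
      lintegral_add_left' hαint.aemeasurable.ennreal_ofReal]
    rfl
  rw [hsplit, h2, h3, h4]
  refine ENNReal.add_lt_top.mpr ⟨ENNReal.add_lt_top.mpr ⟨ENNReal.add_lt_top.mpr
    ⟨hαfin, ?_⟩, ?_⟩, ?_⟩
  · exact ENNReal.mul_lt_top hβfin hgfin
  · exact ENNReal.mul_lt_top hgfin hβfin
  · exact ENNReal.mul_lt_top (by simp) (ENNReal.mul_lt_top hgfin hgfin)
end

section
/- Let p ∈ [1,∞), let X have positive Lebesgue measure, and let f : ℝⁿ × ℝⁿ → [0,∞) be Borel measurable. Then ∫_X ∫_X f(u(x),u(y)) dx dy < ∞ holds for every u ∈ L^p(X;ℝⁿ) if and only if there exists a constant C > 0 such that f(w,z) ≤ C (1 + |w|^p)(1 + |z|^p) for all w, z ∈ ℝⁿ. -/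
open MeasureTheory ENNReal Filter Topology Set

lemma hyperplane_null (m : ℕ) (i0 : Fin m) (r : ℝ) :
    volume {x : Fin m → ℝ | x i0 = r} = 0 := by
  have hset : {x : Fin m → ℝ | x i0 = r}
      = Set.pi Set.univ (fun i => if i = i0 then ({r} : Set ℝ) else Set.univ) := by
    ext x
    simp only [Set.mem_setOf_eq, Set.mem_pi, Set.mem_univ, forall_true_left]
    constructor
    · intro h i; by_cases hi : i = i0 <;> simp [hi, h]
    · intro h; have := h i0; simpa using this
  rw [hset, volume_pi, MeasureTheory.Measure.pi_pi]
  exact Finset.prod_eq_zero (Finset.mem_univ i0) (by simp)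

lemma exists_monotone_family (m : ℕ) (i0 : Fin m) (X : Set (Fin m → ℝ))
    (hX : MeasurableSet X) (hb : Bornology.IsBounded X) :
    ∃ S : ℝ → Set (Fin m → ℝ), (∀ t, MeasurableSet (S t)) ∧ (∀ t, S t ⊆ X) ∧
      (∀ t1 t2, 0 < t1 → t1 ≤ t2 → t2 ≤ (volume X).toReal → S t1 ⊆ S t2) ∧
      (∀ t, 0 < t → t ≤ (volume X).toReal → volume (S t) = ENNReal.ofReal t) := by
  set V : ℝ := (volume X).toReal with hV
  have hfin : volume X ≠ ⊤ := hb.measure_lt_top.ne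
  obtain ⟨R, hR⟩ := hb.subset_closedBall 0
  have hRabs : ∀ x ∈ X, |x i0| ≤ R := by
    intro x hx
    have h1 : ‖x‖ ≤ R := by simpa using hR hx
    calc |x i0| = ‖x i0‖ := rfl
      _ ≤ ‖x‖ := norm_le_pi_norm x i0
      _ ≤ R := h1
  set F : ℝ → ℝ := fun r => (volume (X ∩ {x | x i0 ≤ r})).toReal with hF
  have hsub_fin : ∀ s : Set (Fin m → ℝ), volume (X ∩ s) ≠ ⊤ :=
    fun s => ((measure_mono Set.inter_subset_left).trans_lt hfin.lt_top).ne
  have hFmono : Monotone F := by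
    intro r s hrs
    exact ENNReal.toReal_mono (hsub_fin _)
      (measure_mono (Set.inter_subset_inter_right _ (fun x hx => le_trans hx hrs)))
  have hmeas_le : ∀ r : ℝ, MeasurableSet {x : Fin m → ℝ | x i0 ≤ r} := by
    intro r
    exact measurableSet_le (measurable_pi_apply i0) measurable_const
  have hFdiff : ∀ r s : ℝ, r ≤ s →
      F s - F r = (volume (X ∩ {x | r < x i0 ∧ x i0 ≤ s})).toReal := by
    intro r s hrs
    have hBA : X ∩ {x | x i0 ≤ r} ⊆ X ∩ {x | x i0 ≤ s} :=
      Set.inter_subset_inter_right _ (fun x hx => le_trans hx hrs)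
    have hd : volume ((X ∩ {x | x i0 ≤ s}) \ (X ∩ {x | x i0 ≤ r}))
        = volume (X ∩ {x | x i0 ≤ s}) - volume (X ∩ {x | x i0 ≤ r}) :=
      measure_diff hBA (hX.inter (hmeas_le r)).nullMeasurableSet (hsub_fin _)
    have hset : (X ∩ {x | x i0 ≤ s}) \ (X ∩ {x | x i0 ≤ r})
        = X ∩ {x | r < x i0 ∧ x i0 ≤ s} := by
      ext x
      simp only [Set.mem_diff, Set.mem_inter_iff, Set.mem_setOf_eq, not_and, not_le]
      constructor
      · rintro ⟨⟨hx, hxs⟩, h2⟩; exact ⟨hx, h2 hx, hxs⟩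
      · rintro ⟨hx, hr, hs⟩; exact ⟨⟨hx, hs⟩, fun _ => hr⟩
    rw [← hset, hd, ENNReal.toReal_sub_of_le (measure_mono hBA) (hsub_fin _)]
  have hFcont : Continuous F := by
    rw [Metric.continuous_iff]
    intro r ε hε
    set g : ℕ → ℝ≥0∞ := fun k =>
      volume (X ∩ {x | r - (1:ℝ)/(k+1) < x i0 ∧ x i0 ≤ r + 1/(k+1)}) with hg
    have hanti : Antitone fun k : ℕ => X ∩ {x : Fin m → ℝ | r - (1:ℝ)/(k+1) < x i0 ∧ x i0 ≤ r + 1/(k+1)} := by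
      intro k l hkl
      have h1 : (1:ℝ)/(l+1) ≤ 1/(k+1) := by
        apply one_div_le_one_div_of_le (by positivity)
        have : (k:ℝ) ≤ l := Nat.cast_le.mpr hkl
        linarith
      intro x hx
      exact ⟨hx.1, by linarith [hx.2.1], by linarith [hx.2.2]⟩
    have hInt : (⋂ k : ℕ, X ∩ {x : Fin m → ℝ | r - (1:ℝ)/(k+1) < x i0 ∧ x i0 ≤ r + 1/(k+1)})
        ⊆ {x : Fin m → ℝ | x i0 = r} := by
      intro x hx
      simp only [Set.mem_iInter, Set.mem_inter_iff, Set.mem_setOf_eq] at hx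
      have hle : x i0 ≤ r := by
        by_contra hlt
        push_neg at hlt
        obtain ⟨k, hk⟩ := exists_nat_one_div_lt (sub_pos.mpr hlt)
        linarith [(hx k).2.2]
      have hge : r ≤ x i0 := by
        by_contra hlt
        push_neg at hlt
        obtain ⟨k, hk⟩ := exists_nat_one_div_lt (sub_pos.mpr hlt)
        linarith [(hx k).2.1]
      exact le_antisymm hle hge
    have hInt0 : volume (⋂ k : ℕ, X ∩ {x : Fin m → ℝ | r - (1:ℝ)/(k+1) < x i0 ∧ x i0 ≤ r + 1/(k+1)}) = 0 :=
      le_antisymm ((measure_mono hInt).trans (hyperplane_null m i0 r).le) zero_le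
    have hmeas2 : ∀ k : ℕ, NullMeasurableSet
        (X ∩ {x : Fin m → ℝ | r - (1:ℝ)/(k+1) < x i0 ∧ x i0 ≤ r + 1/(k+1)}) volume := by
      intro k
      refine (hX.inter ?_).nullMeasurableSet
      exact (measurableSet_lt measurable_const (measurable_pi_apply i0)).inter (hmeas_le _)
    have htend : Tendsto g atTop (𝓝 0) := by
      have := tendsto_measure_iInter_atTop hmeas2 hanti ⟨0, hsub_fin _⟩
      rwa [hInt0] at this
    have hev : ∃ k : ℕ, g k < ENNReal.ofReal ε :=
      (htend.eventually (gt_mem_nhds (by simp [hε] : (0:ℝ≥0∞) < ENNReal.ofReal ε))).exists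
    obtain ⟨k, hk⟩ := hev
    refine ⟨1/(k+1), by positivity, ?_⟩
    intro s hs
    rw [Real.dist_eq] at hs ⊢
    have hδ : (0:ℝ) < 1/(k+1) := by positivity
    have hbound : F (r + 1/(k+1)) - F (r - 1/(k+1)) < ε := by
      rw [hFdiff _ _ (by linarith)]
      exact ENNReal.toReal_lt_of_lt_ofReal hk
    have h1 : F (r - 1/(k+1)) ≤ F s ∧ F s ≤ F (r + 1/(k+1)) := by
      constructor <;> apply hFmono <;> [skip; skip] <;> cases abs_lt.mp hs <;> linarith
    have h2 : F (r - 1/(k+1)) ≤ F r ∧ F r ≤ F (r + 1/(k+1)) := by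
      constructor <;> apply hFmono <;> linarith
    rw [abs_lt]
    constructor <;> linarith [h1.1, h1.2, h2.1, h2.2]
  -- F at large R equals V, F small is 0
  have hFR : F R = V := by
    have : X ∩ {x | x i0 ≤ R} = X := by
      apply Set.inter_eq_self_of_subset_left
      intro x hx
      exact le_trans (le_abs_self _) (hRabs x hx)
    simp only [hF]; rw [this]
  have hFneg : ∀ r, r < -R → F r = 0 := by
    intro r hr
    have : X ∩ {x | x i0 ≤ r} = ∅ := by
      ext x
      simp only [Set.mem_inter_iff, Set.mem_setOf_eq, Set.mem_empty_iff_false, iff_false, not_and]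
      intro hx hle
      have := hRabs x hx
      have := neg_abs_le (x i0)
      linarith
    simp only [hF]; rw [this]; simp
  set Q : ℝ → Set ℝ := fun t => {r | t ≤ F r} with hQ
  have hQne : ∀ t, t ≤ V → (Q t).Nonempty := fun t ht => ⟨R, by simpa [hQ, hFR] using ht⟩
  have hQbdd : ∀ t, 0 < t → BddBelow (Q t) := by
    intro t ht
    refine ⟨-R, fun r hr => ?_⟩
    by_contra hlt
    push_neg at hlt
    have : F r = 0 := hFneg r hlt
    simp only [hQ, Set.mem_setOf_eq] at hr
    linarith
  have hQclosed : ∀ t, IsClosed (Q t) := fun t => isClosed_Ici.preimage hFcont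
  set ρ : ℝ → ℝ := fun t => sInf (Q t) with hρ
  have hρmem : ∀ t, 0 < t → t ≤ V → ρ t ∈ Q t :=
    fun t h1 h2 => (hQclosed t).csInf_mem (hQne t h2) (hQbdd t h1)
  have hρval : ∀ t, 0 < t → t ≤ V → F (ρ t) = t := by
    intro t h1 h2
    refine le_antisymm ?_ (hρmem t h1 h2)
    by_contra hgt
    push_neg at hgt
    have hnb : F ⁻¹' Set.Ioi t ∈ 𝓝 (ρ t) :=
      hFcont.continuousAt (Ioi_mem_nhds hgt)
    obtain ⟨δ, hδ, hball⟩ := Metric.mem_nhds_iff.mp hnb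
    have hmem : ρ t - δ/2 ∈ Q t := by
      have : ρ t - δ/2 ∈ Metric.ball (ρ t) δ := by
        rw [Metric.mem_ball, Real.dist_eq, abs_lt]
        constructor <;> linarith
      exact le_of_lt (by simpa using hball this)
    have := csInf_le (hQbdd t h1) hmem
    simp only [hρ] at this
    linarith
  have hρmono : ∀ t1 t2, 0 < t1 → t1 ≤ t2 → t2 ≤ V → ρ t1 ≤ ρ t2 := by
    intro t1 t2 h1 h12 h2
    exact csInf_le_csInf (hQbdd t1 h1) (hQne t2 h2) (fun r hr => le_trans h12 hr)
  refine ⟨fun t => X ∩ {x | x i0 ≤ ρ t}, fun t => hX.inter (hmeas_le _),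
    fun t => Set.inter_subset_left, ?_, ?_⟩
  · intro t1 t2 h1 h12 h2
    exact Set.inter_subset_inter_right _
      (fun x hx => le_trans hx (hρmono t1 t2 h1 h12 h2))
  · intro t h1 h2
    have hto : (volume (X ∩ {x | x i0 ≤ ρ t})).toReal = t := hρval t h1 h2
    have h3 := ENNReal.ofReal_toReal (hsub_fin {x | x i0 ≤ ρ t})
    rw [hto] at h3
    exact h3.symm

theorem stmt_5 (m n : ℕ) (hm : 0 < m) (hn : 0 < n)
    (X : Set (Fin m → ℝ)) (hXmeas : MeasurableSet X) (hXbdd : Bornology.IsBounded X)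
    (hXpos : 0 < volume X)
    (p : ℝ) (hp : 1 ≤ p)
    (f : EuclideanSpace ℝ (Fin n) → EuclideanSpace ℝ (Fin n) → ℝ)
    (hfmeas : Measurable (fun q : (EuclideanSpace ℝ (Fin n)) × (EuclideanSpace ℝ (Fin n)) =>
      f q.1 q.2))
    (hfnonneg : ∀ w z, 0 ≤ f w z) :
    (∀ u : (Fin m → ℝ) → EuclideanSpace ℝ (Fin n),
      MemLp u (ENNReal.ofReal p) (volume.restrict X) →
      ∫⁻ x, ∫⁻ y, ENNReal.ofReal (f (u x) (u y))
        ∂(volume.restrict X) ∂(volume.restrict X) < ⊤) ↔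
    (∃ C : ℝ, 0 < C ∧ ∀ w z : EuclideanSpace ℝ (Fin n),
      f w z ≤ C * (1 + ‖w‖ ^ p) * (1 + ‖z‖ ^ p)) := by
  have hppos : 0 < p := lt_of_lt_of_le one_pos hp
  have hfin : volume X ≠ ⊤ := hXbdd.measure_lt_top.ne
  set μ : Measure (Fin m → ℝ) := volume.restrict X with hμ
  have hq0 : (ENNReal.ofReal p) ≠ 0 := by
    simp [ENNReal.ofReal_eq_zero, not_le, hppos]
  have hqtop : (ENNReal.ofReal p) ≠ ⊤ := ENNReal.ofReal_ne_top
  have hqto : (ENNReal.ofReal p).toReal = p := ENNReal.toReal_ofReal hppos.le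
  constructor
  · intro H
    classical
    by_contra hno
    push_neg at hno
    set V : ℝ := (volume X).toReal with hV
    have hVpos : 0 < V := ENNReal.toReal_pos hXpos.ne' hfin
    set ε : ℝ := V / 2 with hε
    have hεpos : 0 < ε := by positivity
    have hchoice := fun k : ℕ => hno ((2:ℝ)^(4*k+3) / ε^2) (by positivity)
    choose w z hwz using hchoice
    set v : ℕ → EuclideanSpace ℝ (Fin n) := fun j => if Even j then w (j/2) else z (j/2) with hv
    have hvnonneg : ∀ j, (0:ℝ) ≤ ‖v j‖ ^ p := fun j => Real.rpow_nonneg (norm_nonneg _) p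
    set c : ℕ → ℝ := fun j => ε * (1/2)^(j+1) / (1 + ‖v j‖ ^ p) with hc
    have hden : ∀ j, (0:ℝ) < 1 + ‖v j‖ ^ p := fun j => by have := hvnonneg j; linarith
    have hcpos : ∀ j, 0 < c j := fun j => by
      have := hden j; positivity
    have hcle : ∀ j, c j ≤ ε * (1/2)^(j+1) := fun j =>
      div_le_self (by positivity) (by have := hvnonneg j; linarith)
    set s : ℕ → ℝ := fun j => V/4 + ∑ i ∈ Finset.range j, c i with hs
    have hsum_le : ∀ j, ∑ i ∈ Finset.range j, c i ≤ ε := by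
      intro j
      calc ∑ i ∈ Finset.range j, c i ≤ ∑ i ∈ Finset.range j, ε * (1/2)^(i+1) :=
            Finset.sum_le_sum fun i _ => hcle i
        _ = ε * ((1/2) * ∑ i ∈ Finset.range j, (1/2:ℝ)^i) := by
            rw [Finset.mul_sum, Finset.mul_sum]
            congr 1; funext i; ring
        _ ≤ ε * ((1/2) * 2) := by
            have := sum_geometric_two_le j
            have h2 : (0:ℝ) < ε := hεpos
            nlinarith
        _ = ε := by ring
    have hspos : ∀ j, 0 < s j := by
      intro j
      have : 0 ≤ ∑ i ∈ Finset.range j, c i :=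
        Finset.sum_nonneg fun i _ => (hcpos i).le
      rw [hs]; dsimp only; linarith
    have hsleV : ∀ j, s j ≤ V := by
      intro j
      have h1 := hsum_le j
      rw [hε] at h1
      rw [hs]; dsimp only
      linarith
    have hsmono : ∀ i j, i ≤ j → s i ≤ s j := by
      intro i j hij
      rw [hs]; dsimp only
      have : ∑ a ∈ Finset.range i, c a ≤ ∑ a ∈ Finset.range j, c a :=
        Finset.sum_le_sum_of_subset_of_nonneg (Finset.range_subset_range.mpr hij)
          (fun a _ _ => (hcpos a).le)
      linarith
    have hssucc : ∀ j, s (j+1) - s j = c j := by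
      intro j
      rw [hs]; dsimp only
      rw [Finset.sum_range_succ]; ring
    obtain ⟨S, hSmeas, hSsub, hSmono, hSvol⟩ :=
      exists_monotone_family m ⟨0, hm⟩ X hXmeas hXbdd
    set D : ℕ → Set (Fin m → ℝ) := fun j => S (s (j+1)) \ S (s j) with hD
    have hDmeas : ∀ j, MeasurableSet (D j) := fun j => (hSmeas _).diff (hSmeas _)
    have hDsub : ∀ j, D j ⊆ X := fun j => fun x hx => hSsub _ hx.1
    have hSS : ∀ i j, i ≤ j → S (s i) ⊆ S (s j) :=
      fun i j hij => hSmono _ _ (hspos i) (hsmono i j hij) (hsleV j)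
    have hDvol : ∀ j, volume (D j) = ENNReal.ofReal (c j) := by
      intro j
      rw [hD]; dsimp only
      rw [measure_diff (hSS j (j+1) (Nat.le_succ j)) (hSmeas _).nullMeasurableSet
        (by rw [hSvol _ (hspos j) (hsleV j)]; exact ENNReal.ofReal_ne_top),
        hSvol _ (hspos (j+1)) (hsleV (j+1)), hSvol _ (hspos j) (hsleV j),
        ← ENNReal.ofReal_sub _ (hspos j).le, hssucc j]
    have hDdisj : ∀ i j, i ≠ j → Disjoint (D i) (D j) := by
      have key : ∀ i j, i < j → Disjoint (D i) (D j) := by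
        intro i j hij
        refine Set.disjoint_left.mpr fun x hxi hxj => ?_
        exact hxj.2 (hSS (i+1) j hij (hxi.1))
      intro i j hij
      rcases lt_or_gt_of_ne hij with h | h
      · exact key i j h
      · exact (key j i h).symm
    have hμD : ∀ j, μ (D j) = ENNReal.ofReal (c j) := by
      intro j
      rw [hμ, Measure.restrict_apply (hDmeas j),
        Set.inter_eq_self_of_subset_left (hDsub j), hDvol j]
    -- define u
    set G : ℕ → Set (Fin m → ℝ) := fun k => Nat.casesOn k (⋃ j, D j)ᶜ (fun j => D j) with hG
    have htot : ∀ x, ∃ k, x ∈ G k := by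
      intro x
      by_cases hx : x ∈ ⋃ j, D j
      · obtain ⟨j, hj⟩ := Set.mem_iUnion.mp hx
        exact ⟨j+1, hj⟩
      · exact ⟨0, hx⟩
    set vv : ℕ → EuclideanSpace ℝ (Fin n) := fun k => Nat.casesOn k 0 v with hvv
    set u : (Fin m → ℝ) → EuclideanSpace ℝ (Fin n) :=
      fun x => vv (Nat.find (htot x)) with hu
    have hGmeas : ∀ k, MeasurableSet {x | x ∈ G k} := by
      intro k
      cases k with
      | zero => exact (MeasurableSet.iUnion hDmeas).compl
      | succ j => exact hDmeas j
    have humeas : Measurable u :=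
      measurable_from_nat.comp (measurable_find htot hGmeas)
    have hu_on : ∀ j x, x ∈ D j → u x = v j := by
      intro j x hx
      have hfind : Nat.find (htot x) = j + 1 := by
        rw [Nat.find_eq_iff]
        refine ⟨hx, ?_⟩
        intro k hk
        cases k with
        | zero =>
          simp only [hG]
          intro hmem
          exact hmem (Set.mem_iUnion.mpr ⟨j, hx⟩)
        | succ i =>
          have hij : i ≠ j := by omega
          exact fun hmem => Set.disjoint_left.mp (hDdisj i j hij) hmem hx
      rw [hu]; dsimp only; rw [hfind]
    have hu_off : ∀ x, x ∉ (⋃ j, D j) → u x = 0 := by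
      intro x hx
      have hfind : Nat.find (htot x) = 0 := by
        rw [Nat.find_eq_iff]
        exact ⟨hx, by omega⟩
      rw [hu]; dsimp only; rw [hfind]; rfl
    -- Memℒp
    have hMem : MemLp u (ENNReal.ofReal p) μ := by
      refine ⟨humeas.aestronglyMeasurable, ?_⟩
      rw [eLpNorm_eq_lintegral_rpow_enorm_toReal hq0 hqtop, hqto]
      have hJ : ∫⁻ x, (‖u x‖₊ : ℝ≥0∞) ^ p ∂μ < ⊤ := by
        have hfun : ∀ x, (‖u x‖₊ : ℝ≥0∞) ^ p
            = ∑' j, (D j).indicator (fun _ => ENNReal.ofReal (‖v j‖ ^ p)) x := by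
          intro x
          by_cases hx : x ∈ ⋃ j, D j
          · obtain ⟨j0, hj0⟩ := Set.mem_iUnion.mp hx
            rw [tsum_eq_single j0]
            · rw [Set.indicator_of_mem hj0, hu_on j0 x hj0,
                ← ENNReal.ofReal_rpow_of_nonneg (norm_nonneg _) hppos.le,
                ofReal_norm, enorm_eq_nnnorm]
            · intro j hj
              exact Set.indicator_of_notMem
                (fun hmem => Set.disjoint_left.mp (hDdisj j j0 hj) hmem hj0) _
          · have h0 : u x = 0 := hu_off x hx
            rw [h0]
            have : ∀ j, (D j).indicator (fun _ => ENNReal.ofReal (‖v j‖ ^ p)) x = 0 := by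
              intro j
              exact Set.indicator_of_notMem (fun hmem => hx (Set.mem_iUnion.mpr ⟨j, hmem⟩)) _
            simp only [this, tsum_zero, nnnorm_zero, ENNReal.coe_zero]
            exact ENNReal.zero_rpow_of_pos hppos
        calc ∫⁻ x, (‖u x‖₊ : ℝ≥0∞) ^ p ∂μ
            = ∫⁻ x, ∑' j, (D j).indicator (fun _ => ENNReal.ofReal (‖v j‖ ^ p)) x ∂μ := by
              exact lintegral_congr hfun
          _ = ∑' j, ∫⁻ x, (D j).indicator (fun _ => ENNReal.ofReal (‖v j‖ ^ p)) x ∂μ :=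
              lintegral_tsum fun j =>
                ((measurable_const.indicator (hDmeas j)).aemeasurable)
          _ = ∑' j, ENNReal.ofReal (‖v j‖ ^ p) * μ (D j) := by
              refine tsum_congr fun j => ?_
              rw [lintegral_indicator (hDmeas j), setLIntegral_const]
          _ ≤ ∑' j, ENNReal.ofReal ε * (ENNReal.ofReal (1/2))^(j+1) := by
              refine ENNReal.tsum_le_tsum fun j => ?_
              rw [hμD j, ← ENNReal.ofReal_mul (hvnonneg j),
                ← ENNReal.ofReal_pow (by norm_num), ← ENNReal.ofReal_mul hεpos.le]
              apply ENNReal.ofReal_le_ofReal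
              have hB := hvnonneg j
              have hd := hden j
              rw [hc]; dsimp only
              calc ‖v j‖ ^ p * (ε * (1/2)^(j+1) / (1 + ‖v j‖ ^ p))
                  = (ε * (1/2)^(j+1)) * (‖v j‖ ^ p / (1 + ‖v j‖ ^ p)) := by ring
                _ ≤ (ε * (1/2)^(j+1)) * 1 := by
                    refine mul_le_mul_of_nonneg_left ?_ (by positivity)
                    rw [div_le_one hd]; linarith
                _ = ε * (1/2)^(j+1) := by ring
          _ = ENNReal.ofReal ε * ∑' j, (ENNReal.ofReal (1/2))^(j+1) :=
              ENNReal.tsum_mul_left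
          _ ≤ ENNReal.ofReal ε * ∑' j : ℕ, (ENNReal.ofReal (1/2))^j := by
              refine mul_le_mul_right (ENNReal.tsum_le_tsum fun j => ?_) _
              calc (ENNReal.ofReal (1/2))^(j+1)
                  = ENNReal.ofReal (1/2) * (ENNReal.ofReal (1/2))^j := by ring
                _ ≤ 1 * (ENNReal.ofReal (1/2))^j := by
                    refine mul_le_mul_left ?_ _
                    rw [← ENNReal.ofReal_one]
                    exact ENNReal.ofReal_le_ofReal (by norm_num)
                _ = (ENNReal.ofReal (1/2))^j := one_mul _
          _ < ⊤ := by
              rw [ENNReal.tsum_geometric]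
              refine ENNReal.mul_lt_top ENNReal.ofReal_lt_top ?_
              rw [lt_top_iff_ne_top, Ne, ENNReal.inv_eq_top, tsub_eq_zero_iff_le]
              intro hle
              have := ENNReal.one_le_ofReal.mp hle
              norm_num at this
      exact ENNReal.rpow_lt_top_of_nonneg (by positivity) hJ.ne
    -- divergence
    have hv_even : ∀ k, v (2*k) = w k := by
      intro k
      rw [hv]; dsimp only
      rw [if_pos (even_two_mul k)]
      have h2 : 2*k/2 = k := by omega
      rw [h2]
    have hv_odd : ∀ k, v (2*k+1) = z k := by
      intro k
      rw [hv]; dsimp only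
      rw [if_neg (by rw [Nat.even_iff]; omega)]
      have h2 : (2*k+1)/2 = k := by omega
      rw [h2]
    have hreal : ∀ k, 1 ≤ f (w k) (z k) * c (2*k) * c (2*k+1) := by
      intro k
      have hW0 : 0 ≤ ‖w k‖ ^ p := Real.rpow_nonneg (norm_nonneg _) p
      have hZ0 : 0 ≤ ‖z k‖ ^ p := Real.rpow_nonneg (norm_nonneg _) p
      set W := ‖w k‖ ^ p with hW
      set Z := ‖z k‖ ^ p with hZ
      have hc1 : c (2*k) = ε * (1/2)^(2*k+1) / (1 + W) := by
        rw [hc]; dsimp only; rw [hv_even]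
      have hc2 : c (2*k+1) = ε * (1/2)^(2*k+1+1) / (1 + Z) := by
        rw [hc]; dsimp only; rw [hv_odd]
      have hfge : (2:ℝ)^(4*k+3)/ε^2 * (1+W) * (1+Z) ≤ f (w k) (z k) := (hwz k).le
      have h1W : (1:ℝ)+W ≠ 0 := by linarith
      have h1Z : (1:ℝ)+Z ≠ 0 := by linarith
      have hεne : ε ≠ 0 := hεpos.ne'
      have hpow : (2:ℝ)^(4*k+3) * ((1/2:ℝ)^(2*k+1) * (1/2)^(2*k+1+1)) = 1 := by
        rw [← pow_add]
        have hee : (2*k+1) + (2*k+1+1) = 4*k+3 := by omega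
        rw [hee, ← mul_pow]
        norm_num
      have he : ((2:ℝ)^(4*k+3)/ε^2 * (1+W) * (1+Z)) * c (2*k) * c (2*k+1) = 1 := by
        rw [hc1, hc2]
        calc ((2:ℝ)^(4*k+3)/ε^2 * (1+W) * (1+Z)) * (ε * (1/2)^(2*k+1) / (1 + W))
              * (ε * (1/2)^(2*k+1+1) / (1 + Z))
            = ((2:ℝ)^(4*k+3) * ((1/2)^(2*k+1) * (1/2)^(2*k+1+1))) * ((1+W)/(1+W))
              * ((1+Z)/(1+Z)) * (ε^2/ε^2) := by ring
          _ = 1 := by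
              rw [div_self h1W, div_self h1Z, div_self (pow_ne_zero 2 hεne), hpow]; ring
      calc (1:ℝ) = ((2:ℝ)^(4*k+3)/ε^2 * (1+W) * (1+Z)) * c (2*k) * c (2*k+1) := he.symm
        _ ≤ f (w k) (z k) * c (2*k) * c (2*k+1) :=
            mul_le_mul_of_nonneg_right
              (mul_le_mul_of_nonneg_right hfge (hcpos (2*k)).le) (hcpos (2*k+1)).le
    have hterm : ∀ k : ℕ, (1:ℝ≥0∞) ≤ ENNReal.ofReal (f (w k) (z k))
        * ENNReal.ofReal (c (2*k+1)) * ENNReal.ofReal (c (2*k)) := by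
      intro k
      rw [mul_right_comm, ← ENNReal.ofReal_mul (hfnonneg _ _),
        ← ENNReal.ofReal_mul (mul_nonneg (hfnonneg _ _) (hcpos _).le),
        ← ENNReal.ofReal_one]
      exact ENNReal.ofReal_le_ofReal (hreal k)
    set g : (Fin m → ℝ) → ℝ≥0∞ := fun x => ∫⁻ y, ENNReal.ofReal (f (u x) (u y)) ∂μ with hg
    have hginner : ∀ k, ∀ x ∈ D (2*k),
        ENNReal.ofReal (f (w k) (z k)) * ENNReal.ofReal (c (2*k+1)) ≤ g x := by
      intro k x hx
      have hux : u x = w k := by rw [hu_on _ _ hx, hv_even]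
      have hBeq : ∫⁻ y in D (2*k+1), ENNReal.ofReal (f (u x) (u y)) ∂μ
          = ENNReal.ofReal (f (w k) (z k)) * ENNReal.ofReal (c (2*k+1)) := by
        rw [setLIntegral_congr_fun (hDmeas (2*k+1))
          (fun y hy => by rw [hux, hu_on _ _ hy, hv_odd])]
        rw [setLIntegral_const, hμD]
      rw [← hBeq]
      exact lintegral_mono' Measure.restrict_le_self le_rfl
    have hdisj2 : Pairwise (Function.onFun Disjoint fun k : ℕ => D (2*k)) :=
      fun i j hij => hDdisj (2*i) (2*j) (by omega)
    have hdiv : (⊤:ℝ≥0∞) ≤ ∫⁻ x, g x ∂μ := by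
      have h3 : ∀ k : ℕ, (1:ℝ≥0∞) ≤ ∫⁻ x in D (2*k), g x ∂μ := by
        intro k
        refine le_trans (hterm k) ?_
        have hconst : ENNReal.ofReal (f (w k) (z k)) * ENNReal.ofReal (c (2*k+1))
            * ENNReal.ofReal (c (2*k))
            = ∫⁻ _x in D (2*k), ENNReal.ofReal (f (w k) (z k))
              * ENNReal.ofReal (c (2*k+1)) ∂μ := by
          rw [setLIntegral_const, hμD]
        rw [hconst]
        exact setLIntegral_mono' (hDmeas _) (fun x hx => hginner k x hx)
      calc (⊤:ℝ≥0∞) = ∑' _k : ℕ, (1:ℝ≥0∞) :=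
            (ENNReal.tsum_const_eq_top_of_ne_zero one_ne_zero).symm
        _ ≤ ∑' k : ℕ, ∫⁻ x in D (2*k), g x ∂μ := ENNReal.tsum_le_tsum h3
        _ = ∫⁻ x in ⋃ k : ℕ, D (2*k), g x ∂μ :=
            (lintegral_iUnion (fun k => hDmeas (2*k)) hdisj2 g).symm
        _ ≤ ∫⁻ x, g x ∂μ := lintegral_mono' Measure.restrict_le_self le_rfl
    exact (H u hMem).ne (top_le_iff.mp hdiv)
  · rintro ⟨C, hC, hb⟩ u hu
    have hJ : ∫⁻ y, (‖u y‖₊ : ℝ≥0∞) ^ p ∂μ < ⊤ := by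
      have := lintegral_rpow_enorm_lt_top_of_eLpNorm_lt_top hq0 hqtop hu.2
      rwa [hqto] at this
    set I : ℝ≥0∞ := ∫⁻ y, ENNReal.ofReal (1 + ‖u y‖ ^ p) ∂μ with hI
    have hIfin : I < ⊤ := by
      have heq : ∀ y, ENNReal.ofReal (1 + ‖u y‖ ^ p)
          = 1 + (‖u y‖₊ : ℝ≥0∞) ^ p := by
        intro y
        rw [ENNReal.ofReal_add one_pos.le (Real.rpow_nonneg (norm_nonneg _) p),
          ENNReal.ofReal_one, ← enorm_eq_nnnorm, ← ofReal_norm,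
          ← ENNReal.ofReal_rpow_of_nonneg (norm_nonneg _) hppos.le]
      rw [hI]
      simp_rw [heq]
      rw [lintegral_add_left measurable_const]
      refine ENNReal.add_lt_top.mpr ⟨?_, hJ⟩
      rw [lintegral_const]
      exact ENNReal.mul_lt_top one_lt_top (by
        simpa [hμ] using hfin.lt_top)
    have hpt : ∀ w z : EuclideanSpace ℝ (Fin n),
        ENNReal.ofReal (f w z) ≤ (ENNReal.ofReal C * ENNReal.ofReal (1 + ‖w‖ ^ p))
          * ENNReal.ofReal (1 + ‖z‖ ^ p) := by
      intro w z
      have h1 : (0:ℝ) ≤ 1 + ‖w‖ ^ p := by positivity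
      rw [← ENNReal.ofReal_mul (by positivity), ← ENNReal.ofReal_mul (by positivity)]
      exact ENNReal.ofReal_le_ofReal (hb w z)
    calc ∫⁻ x, ∫⁻ y, ENNReal.ofReal (f (u x) (u y)) ∂μ ∂μ
        ≤ ∫⁻ x, ∫⁻ y, (ENNReal.ofReal C * ENNReal.ofReal (1 + ‖u x‖ ^ p))
            * ENNReal.ofReal (1 + ‖u y‖ ^ p) ∂μ ∂μ :=
          lintegral_mono fun x => lintegral_mono fun y => hpt _ _
      _ = ∫⁻ x, (ENNReal.ofReal C * ENNReal.ofReal (1 + ‖u x‖ ^ p)) * I ∂μ := by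
          refine lintegral_congr fun x => ?_
          rw [lintegral_const_mul' _ _ (by finiteness)]
      _ = ∫⁻ x, (ENNReal.ofReal C * I) * ENNReal.ofReal (1 + ‖u x‖ ^ p) ∂μ := by
          refine lintegral_congr fun x => ?_
          ring
      _ = (ENNReal.ofReal C * I) * I := by
          rw [lintegral_const_mul' _ _ (by finiteness)]
      _ < ⊤ := by
          refine ENNReal.mul_lt_top (ENNReal.mul_lt_top ENNReal.ofReal_lt_top hIfin) hIfin
end

section
/- Let X have positive Lebesgue measure and let f : ℝⁿ × ℝⁿ → [0,∞) be Borel measurable. Then ∫_X ∫_X f(u(x),u(y)) dx dy < ∞ holds for every u ∈ L^∞(X;ℝⁿ) if and only if for every M > 0 there exists a constant C_M > 0 such that f(w,z) ≤ C_M for all w, z ∈ ℝⁿ with |w| ≤ M and |z| ≤ M, i.e. if and only if f is bounded on bounded sets. -/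
open MeasureTheory ENNReal Filter Topology Metric Set

lemma aux_family (m : ℕ) (hm : 0 < m) (X : Set (Fin m → ℝ)) (hXmeas : MeasurableSet X)
    (hXpos : 0 < volume X) :
    ∃ A : ℕ → Set (Fin m → ℝ), (∀ k, MeasurableSet (A k)) ∧ (∀ k, A k ⊆ X) ∧
      (∀ j k, j ≠ k → Disjoint (A j) (A k)) ∧ (∀ k, 0 < volume (A k)) := by
  have hae := Besicovitch.ae_tendsto_measure_inter_div (volume : Measure (Fin m → ℝ)) X
  obtain ⟨p, hp⟩ : ∃ p, Tendsto
      (fun r => volume (X ∩ closedBall p r) / volume (closedBall p r)) (𝓝[>] 0) (𝓝 1) := by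
    by_contra h
    push_neg at h
    rw [ae_iff] at hae
    have hsub : X ⊆ {x | ¬ Tendsto
        (fun r => volume (X ∩ closedBall x r) / volume (closedBall x r)) (𝓝[>] 0) (𝓝 1)} :=
      fun x _ => h x
    have h1 : (volume.restrict X) X = 0 := measure_mono_null hsub hae
    rw [Measure.restrict_apply_self] at h1
    exact absurd h1 hXpos.ne'
  have h34 : ∀ᶠ r in 𝓝[>] (0:ℝ), ENNReal.ofReal (3/4) <
      volume (X ∩ closedBall p r) / volume (closedBall p r) :=
    hp.eventually (eventually_gt_nhds (ENNReal.ofReal_lt_one.mpr (by norm_num)))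
  obtain ⟨ε, hε, hsubε⟩ := Metric.mem_nhdsWithin_iff.1 h34
  have key : ∀ r : ℝ, 0 < r → r < ε →
      ENNReal.ofReal (3/4) * volume (closedBall p r) < volume (X ∩ closedBall p r) := by
    intro r hr hrε
    have hmem : r ∈ Metric.ball (0:ℝ) ε ∩ Set.Ioi 0 := by
      constructor
      · simpa [Real.dist_eq, abs_of_pos hr] using hrε
      · exact hr
    have h2 := hsubε hmem
    have hb0 : volume (closedBall p r) ≠ 0 := (measure_closedBall_pos volume p hr).ne'
    have hbt : volume (closedBall p r) ≠ ⊤ := measure_closedBall_lt_top.ne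
    exact (ENNReal.lt_div_iff_mul_lt (Or.inl hb0) (Or.inl hbt)).1 h2
  -- the radii
  set r : ℕ → ℝ := fun k => (ε/2) * (1/2)^k with hrdef
  have hrpos : ∀ k, 0 < r k := fun k => by positivity
  have hrε : ∀ k, r k < ε := by
    intro k
    have h1 : ((1:ℝ)/2)^k ≤ 1 := pow_le_one₀ (by norm_num) (by norm_num)
    calc r k ≤ ε/2 * 1 := by
          exact mul_le_mul_of_nonneg_left h1 (by linarith)
      _ < ε := by linarith
  have hrsucc : ∀ k, r (k+1) = r k / 2 := by
    intro k; simp only [hrdef]; ring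
  have hranti : ∀ j k : ℕ, j < k → r k ≤ r (j+1) := by
    intro j k hjk
    have := pow_le_pow_of_le_one (by norm_num : (0:ℝ) ≤ 1/2) (by norm_num) hjk
    exact mul_le_mul_of_nonneg_left this (by linarith)
  have hdm : Measurable fun x : Fin m → ℝ => dist x p :=
    (continuous_id.dist continuous_const).measurable
  refine ⟨fun k => X ∩ ((fun x => dist x p) ⁻¹' Set.Ioc (r (k+1)) (r k)), ?_, ?_, ?_, ?_⟩
  · exact fun k => hXmeas.inter (hdm measurableSet_Ioc)
  · exact fun k => Set.inter_subset_left
  · have hlt : ∀ j k : ℕ, j < k → Disjoint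
        (X ∩ ((fun x => dist x p) ⁻¹' Set.Ioc (r (j+1)) (r j)))
        (X ∩ ((fun x => dist x p) ⁻¹' Set.Ioc (r (k+1)) (r k))) := by
      intro j k hjk
      rw [Set.disjoint_left]
      rintro x ⟨-, hj1, -⟩ ⟨-, -, hk2⟩
      exact absurd (hk2.trans (hranti j k hjk)) (not_le.2 hj1)
    intro j k hjk
    rcases lt_or_gt_of_ne hjk with h | h
    · exact hlt j k h
    · exact (hlt k j h).symm
  · intro k
    by_contra h0
    rw [not_lt, nonpos_iff_eq_zero] at h0
    set R := r k with hR
    have hsub2 : X ∩ closedBall p R ⊆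
        (X ∩ ((fun x => dist x p) ⁻¹' Set.Ioc (r (k+1)) (r k))) ∪ closedBall p (R/2) := by
      rintro x ⟨hxX, hxB⟩
      rcases le_or_gt (dist x p) (R/2) with h | h
      · exact Or.inr (mem_closedBall.2 h)
      · exact Or.inl ⟨hxX, by rw [hrsucc k]; exact h, mem_closedBall.1 hxB⟩
    have hV0 : volume (closedBall p R) ≠ 0 := (measure_closedBall_pos volume p (hrpos k)).ne'
    have hVt : volume (closedBall p R) ≠ ⊤ := measure_closedBall_lt_top.ne
    have hhalf : volume (closedBall p (R/2)) ≤ ENNReal.ofReal (1/2) * volume (closedBall p R) := by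
      have hR2 : (0:ℝ) ≤ R/2 := by linarith [hrpos k]
      have hpow : (R/2) ^ Module.finrank ℝ (Fin m → ℝ) ≤ 1/2 * R ^ Module.finrank ℝ (Fin m → ℝ) := by
        rw [Module.finrank_fin_fun]
        calc (R/2)^m = R^m * (1/2)^m := by rw [div_pow, one_div_pow, mul_one_div]
          _ ≤ R^m * (1/2)^1 := by
              refine mul_le_mul_of_nonneg_left ?_ (by positivity)
              exact pow_le_pow_of_le_one (by norm_num) (by norm_num) hm
          _ = 1/2 * R^m := by ring
      rw [Measure.addHaar_closedBall volume p hR2,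
        Measure.addHaar_closedBall volume p (hrpos k).le, ← mul_assoc, ← ENNReal.ofReal_mul
          (by norm_num)]
      exact mul_le_mul_left (ENNReal.ofReal_le_ofReal hpow) _
    have hchain : ENNReal.ofReal (3/4) * volume (closedBall p R) <
        ENNReal.ofReal (1/2) * volume (closedBall p R) := by
      calc ENNReal.ofReal (3/4) * volume (closedBall p R)
          < volume (X ∩ closedBall p R) := key R (hrpos k) (hrε k)
        _ ≤ volume ((X ∩ ((fun x => dist x p) ⁻¹' Set.Ioc (r (k+1)) (r k))) ∪ closedBall p (R/2)) :=
            measure_mono hsub2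
        _ ≤ volume (X ∩ ((fun x => dist x p) ⁻¹' Set.Ioc (r (k+1)) (r k)))
              + volume (closedBall p (R/2)) := measure_union_le _ _
        _ = volume (closedBall p (R/2)) := by rw [h0, zero_add]
        _ ≤ ENNReal.ofReal (1/2) * volume (closedBall p R) := hhalf
    rw [ENNReal.mul_lt_mul_iff_left hV0 hVt] at hchain
    rw [ENNReal.ofReal_lt_ofReal_iff (by norm_num)] at hchain
    norm_num at hchain


theorem stmt_6 (m n : ℕ) (hm : 0 < m) (hn : 0 < n)
    (X : Set (Fin m → ℝ)) (hXmeas : MeasurableSet X) (hXbdd : Bornology.IsBounded X)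
    (hXpos : 0 < volume X)
    (f : EuclideanSpace ℝ (Fin n) → EuclideanSpace ℝ (Fin n) → ℝ)
    (hfmeas : Measurable (fun q : (EuclideanSpace ℝ (Fin n)) × (EuclideanSpace ℝ (Fin n)) =>
      f q.1 q.2))
    (hfnonneg : ∀ w z, 0 ≤ f w z) :
    (∀ u : (Fin m → ℝ) → EuclideanSpace ℝ (Fin n),
      MemLp u ⊤ (volume.restrict X) →
      ∫⁻ x, ∫⁻ y, ENNReal.ofReal (f (u x) (u y))
        ∂(volume.restrict X) ∂(volume.restrict X) < ⊤) ↔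
    (∀ M : ℝ, 0 < M → ∃ C : ℝ, 0 < C ∧ ∀ w z : EuclideanSpace ℝ (Fin n),
      ‖w‖ ≤ M → ‖z‖ ≤ M → f w z ≤ C) := by
  have volX_lt : volume X < ⊤ := hXbdd.measure_lt_top
  constructor
  · -- forward direction, by contradiction
    intro H
    by_contra hb
    push_neg at hb
    obtain ⟨M, hM, hb⟩ := hb
    classical
    obtain ⟨A, hAmeas, hAsub, hAdisj, hApos⟩ := aux_family m hm X hXmeas hXpos
    have hAfin : ∀ k, volume (A k) ≠ ⊤ := fun k =>
      ((measure_mono (hAsub k)).trans_lt volX_lt).ne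
    set D : ℕ → ℝ≥0∞ := fun k => volume (A (2*k)) * volume (A (2*k+1)) with hD
    have hD0 : ∀ k, D k ≠ 0 := fun k =>
      mul_ne_zero (hApos (2*k)).ne' (hApos (2*k+1)).ne'
    have hDt : ∀ k, D k ≠ ⊤ := fun k => ENNReal.mul_ne_top (hAfin _) (hAfin _)
    have hwz : ∀ k : ℕ, ∃ w z : EuclideanSpace ℝ (Fin n), ‖w‖ ≤ M ∧ ‖z‖ ≤ M ∧
        ((D k)⁻¹).toReal < f w z := by
      intro k
      have hC : 0 < max ((D k)⁻¹).toReal 1 := lt_of_lt_of_le one_pos (le_max_right _ _)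
      obtain ⟨w, z, hw, hz, hf⟩ := hb _ hC
      exact ⟨w, z, hw, hz, lt_of_le_of_lt (le_max_left _ _) hf⟩
    choose w z hwM hzM hfwz using hwz
    set v : ℕ → EuclideanSpace ℝ (Fin n) := fun j => if Even j then w (j/2) else z (j/2) with hv
    have hv2 : ∀ k, v (2*k) = w k := by
      intro k
      rw [hv]
      simp only
      rw [if_pos (even_two_mul k)]
      have h2 : 2*k/2 = k := by omega
      rw [h2]
    have hv21 : ∀ k, v (2*k+1) = z k := by
      intro k
      rw [hv]
      simp only
      rw [if_neg (by simp [parity_simps])]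
      have h2 : (2*k+1)/2 = k := by omega
      rw [h2]
    have hvM : ∀ j, ‖v j‖ ≤ M := by
      intro j
      rw [hv]
      simp only
      by_cases h : Even j
      · rw [if_pos h]; exact hwM _
      · rw [if_neg h]; exact hzM _
    set idx : (Fin m → ℝ) → ℕ := fun x => if h : ∃ k, x ∈ A k then h.choose else 0 with hidx
    have hidxk : ∀ k x, x ∈ A k → idx x = k := by
      intro k x hx
      have h : ∃ j, x ∈ A j := ⟨k, hx⟩
      rw [hidx]
      simp only [dif_pos h]
      by_contra hne
      exact Set.disjoint_left.1 (hAdisj _ _ hne) h.choose_spec hx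
    have hpre : ∀ k, idx ⁻¹' {k} = A k ∪ (if k = 0 then (⋃ j, A j)ᶜ else ∅) := by
      intro k
      ext x
      simp only [Set.mem_preimage, Set.mem_singleton_iff]
      constructor
      · intro hxk
        by_cases h : ∃ j, x ∈ A j
        · obtain ⟨j, hj⟩ := h
          rw [hidxk j x hj] at hxk
          subst hxk
          exact Or.inl hj
        · have h0 : idx x = 0 := by rw [hidx]; simp only [dif_neg h]
          rw [h0] at hxk
          subst hxk
          refine Or.inr ?_
          rw [if_pos rfl]
          simpa using fun j hj => h ⟨j, hj⟩
      · intro hx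
        rcases hx with hx | hx
        · exact hidxk k x hx
        · rcases eq_or_ne k 0 with rfl | hk
          · rw [if_pos rfl] at hx
            have h : ¬ ∃ j, x ∈ A j := by simpa using hx
            rw [hidx]; simp only [dif_neg h]
          · rw [if_neg hk] at hx
            exact absurd hx (Set.notMem_empty x)
    have hidxmeas : Measurable idx := by
      apply measurable_to_nat
      intro y
      rw [hpre]
      refine (hAmeas _).union ?_
      split
      · exact (MeasurableSet.iUnion hAmeas).compl
      · exact MeasurableSet.empty
    set u : (Fin m → ℝ) → EuclideanSpace ℝ (Fin n) := fun x => v (idx x) with hu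
    have humeas : Measurable u := Measurable.comp (f := idx) (g := v) measurable_from_top hidxmeas
    have huLp : MemLp u ⊤ (volume.restrict X) :=
      memLp_top_of_bound humeas.aestronglyMeasurable M (ae_of_all _ fun x => hvM _)
    have hνA : ∀ j, (volume.restrict X) (A j) = volume (A j) := by
      intro j
      rw [Measure.restrict_apply (hAmeas j), Set.inter_eq_self_of_subset_left (hAsub j)]
    have hux : ∀ k x, x ∈ A (2*k) → u x = w k := by
      intro k x hx
      rw [hu]; simp only; rw [hidxk _ _ hx, hv2]
    have huy : ∀ k y, y ∈ A (2*k+1) → u y = z k := by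
      intro k y hy
      rw [hu]; simp only; rw [hidxk _ _ hy, hv21]
    refine absurd (H u huLp) ?_
    rw [not_lt, top_le_iff] at *
    rw [eq_top_iff]
    calc (⊤ : ℝ≥0∞) = ∑' (_ : ℕ), (1:ℝ≥0∞) :=
          (ENNReal.tsum_const_eq_top_of_ne_zero one_ne_zero).symm
      _ ≤ ∑' k, ENNReal.ofReal (f (w k) (z k)) * volume (A (2*k+1)) * volume (A (2*k)) := by
          apply ENNReal.tsum_le_tsum
          intro k
          have h1 : (D k)⁻¹ ≤ ENNReal.ofReal (f (w k) (z k)) := by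
            rw [← ENNReal.ofReal_toReal (a := (D k)⁻¹) (ENNReal.inv_ne_top.2 (hD0 k))]
            exact ENNReal.ofReal_le_ofReal (hfwz k).le
          calc (1:ℝ≥0∞) = (D k)⁻¹ * D k := (ENNReal.inv_mul_cancel (hD0 k) (hDt k)).symm
            _ ≤ ENNReal.ofReal (f (w k) (z k)) * D k := mul_le_mul_left h1 _
            _ = ENNReal.ofReal (f (w k) (z k)) * volume (A (2*k+1)) * volume (A (2*k)) := by
                rw [hD]; ring
      _ = ∑' k, ∫⁻ x, (A (2*k)).indicator
            (fun _ => ENNReal.ofReal (f (w k) (z k)) * volume (A (2*k+1))) x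
            ∂(volume.restrict X) := by
          congr 1
          funext k
          rw [lintegral_indicator (hAmeas _), setLIntegral_const, hνA]
      _ = ∫⁻ x, ∑' k, (A (2*k)).indicator
            (fun _ => ENNReal.ofReal (f (w k) (z k)) * volume (A (2*k+1))) x
            ∂(volume.restrict X) :=
          (lintegral_tsum fun k => (measurable_const.indicator (hAmeas _)).aemeasurable).symm
      _ ≤ ∫⁻ x, ∫⁻ y, ENNReal.ofReal (f (u x) (u y))
            ∂(volume.restrict X) ∂(volume.restrict X) := by
          apply lintegral_mono
          intro x
          dsimp only
          by_cases hx : ∃ k, x ∈ A (2*k)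
          · obtain ⟨k, hxk⟩ := hx
            have hzero : ∀ j, j ≠ k → (A (2*j)).indicator
                (fun _ => ENNReal.ofReal (f (w j) (z j)) * volume (A (2*j+1))) x = 0 := by
              intro j hj
              apply Set.indicator_of_notMem
              intro hxj
              exact Set.disjoint_left.1 (hAdisj (2*j) (2*k) (by omega)) hxj hxk
            rw [tsum_eq_single k hzero, Set.indicator_of_mem hxk]
            calc ENNReal.ofReal (f (w k) (z k)) * volume (A (2*k+1))
                  = ∫⁻ y in A (2*k+1), ENNReal.ofReal (f (w k) (z k)) ∂(volume.restrict X) := by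
                    rw [setLIntegral_const, hνA]
                _ = ∫⁻ y in A (2*k+1), ENNReal.ofReal (f (u x) (u y)) ∂(volume.restrict X) := by
                    refine setLIntegral_congr_fun (hAmeas _) (fun y hy => ?_)
                    simp only [hux k x hxk, huy k y hy]
                _ ≤ ∫⁻ y, ENNReal.ofReal (f (u x) (u y)) ∂(volume.restrict X) :=
                    setLIntegral_le_lintegral _ _
          · have hz0 : ∀ k, (A (2*k)).indicator
                (fun _ => ENNReal.ofReal (f (w k) (z k)) * volume (A (2*k+1))) x = 0 :=
              fun k => Set.indicator_of_notMem (fun h => hx ⟨k, h⟩) _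
            simp only [hz0, tsum_zero]
            exact zero_le
  · -- backward direction
    intro hbb u hu
    obtain ⟨haes, hsn⟩ := hu
    rw [eLpNorm_exponent_top] at hsn
    have hub : ∀ᵐ x ∂(volume.restrict X),
        ‖u x‖ ≤ max (eLpNormEssSup u (volume.restrict X)).toReal 1 := by
      filter_upwards [enorm_ae_le_eLpNormEssSup u (volume.restrict X)] with x hx
      have h2 := ENNReal.toReal_mono hsn.ne hx
      simp only [toReal_enorm] at h2
      exact h2.trans (le_max_left _ _)
    obtain ⟨C, hC, hCf⟩ := hbb (max (eLpNormEssSup u (volume.restrict X)).toReal 1)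
      (lt_of_lt_of_le one_pos (le_max_right _ _))
    calc ∫⁻ x, ∫⁻ y, ENNReal.ofReal (f (u x) (u y))
          ∂(volume.restrict X) ∂(volume.restrict X)
        ≤ ∫⁻ _, ENNReal.ofReal C * volume X ∂(volume.restrict X) := by
          apply lintegral_mono_ae
          filter_upwards [hub] with x hx
          calc ∫⁻ y, ENNReal.ofReal (f (u x) (u y)) ∂(volume.restrict X)
              ≤ ∫⁻ _, ENNReal.ofReal C ∂(volume.restrict X) := by
                apply lintegral_mono_ae
                filter_upwards [hub] with y hy
                exact ENNReal.ofReal_le_ofReal (hCf _ _ hx hy)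
            _ = ENNReal.ofReal C * volume X := by
                rw [lintegral_const, Measure.restrict_apply_univ]
      _ = ENNReal.ofReal C * volume X * volume X := by
          rw [lintegral_const, Measure.restrict_apply_univ]
      _ < ⊤ := by
          refine ENNReal.mul_lt_top ?_ volX_lt
          exact ENNReal.mul_lt_top ENNReal.ofReal_lt_top volX_lt
end

section
/- Let p ∈ [1,∞) and let f : X × X × ℝⁿ × ℝⁿ → ℝ be a pairwise symmetric, measurable function whose negative part f⁻ is p-bounded, i.e. there exist a constant C > 0 and nonnegative functions α ∈ L^1(X×X), β ∈ L^1(X) with f(x,y,w,z) ≥ −(α(x,y) + β(x)|z|^p + β(y)|w|^p + C|w|^p|z|^p) for almost all (x,y) ∈ X×X and all w, z ∈ ℝⁿ. Assume that for almost all (x,y) ∈ X×X the map (w,z) ↦ f(x,y,w,z) is lower semi-continuous on ℝⁿ × ℝⁿ. Then the non-local functional J^p_f is sequentially lower semi-continuous with respect to the norm topology on L^p(X;ℝⁿ): for every sequence (u_k) converging to u in L^p(X;ℝⁿ) norm, liminf_{k→∞} J^p_f(u_k) ≥ J^p_f(u). -/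
open MeasureTheory ENNReal Filter Topology


section Aux

lemma aux_coe_enn {x : ℝ≥0∞} (hx : x ≠ ⊤) : ((x : EReal)) = ((x.toReal : ℝ) : EReal) := by
  rw [← EReal.coe_toReal (x := (x : EReal)) (by simpa using hx) (by simp),
    EReal.toReal_coe_ennreal]

lemma aux_enn_le_ofReal {x : ℝ≥0∞} {c : ℝ} (h : (x : EReal) ≤ (c : EReal)) :
    x ≤ ENNReal.ofReal c := by
  rcases eq_or_ne x ⊤ with rfl | hx
  · exact absurd (le_trans (le_of_eq EReal.coe_ennreal_top.symm) h) (by simp)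
  · have h' : (x.toReal : EReal) ≤ (c : EReal) := by rwa [← aux_coe_enn hx]
    have h2 : x.toReal ≤ c := by exact_mod_cast h'
    rw [← ENNReal.ofReal_toReal hx]
    exact ENNReal.ofReal_le_ofReal h2

lemma aux_ereal_sub_eq {a b c d : ℝ≥0∞} (hb : b ≠ ⊤) (hd : d ≠ ⊤) (h : a + d = c + b) :
    (a : EReal) - (b : EReal) = (c : EReal) - (d : EReal) := by
  rcases eq_or_ne a ⊤ with rfl | ha
  · have hc : c = ⊤ := by
      by_contra hc
      exact (ENNReal.add_ne_top.2 ⟨hc, hb⟩) (by rw [← h]; simp)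
    subst hc
    rw [EReal.coe_ennreal_top]
    rw [sub_eq_add_neg, sub_eq_add_neg, EReal.top_add_of_ne_bot, EReal.top_add_of_ne_bot]
    · simp [aux_coe_enn hd]
    · simp [aux_coe_enn hb]
  · have hc : c ≠ ⊤ := by
      intro hc
      rw [hc] at h
      have : a + d = ⊤ := by rw [h]; simp
      rcases ENNReal.add_eq_top.1 this with h1 | h1
      · exact ha h1
      · exact hd h1
    have hreal : a.toReal + d.toReal = c.toReal + b.toReal := by
      rw [← ENNReal.toReal_add ha hd, ← ENNReal.toReal_add hc hb, h]
    rw [aux_coe_enn ha, aux_coe_enn hb, aux_coe_enn hc, aux_coe_enn hd,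
      ← EReal.coe_sub, ← EReal.coe_sub]
    norm_cast
    linarith

lemma aux_ereal_le_add_of_sub_le {x y : ℝ≥0∞} {r : ℝ} (hy : y ≠ ⊤)
    (h : (x : EReal) - (y : EReal) ≤ (r : EReal)) :
    (x : EReal) ≤ ((r + y.toReal : ℝ) : EReal) := by
  rcases eq_or_ne x ⊤ with rfl | hx
  · exfalso
    rw [EReal.coe_ennreal_top, sub_eq_add_neg, EReal.top_add_of_ne_bot (by simp [aux_coe_enn hy])]
      at h
    exact absurd h (by simp)
  · rw [aux_coe_enn hx, aux_coe_enn hy, ← EReal.coe_sub] at h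
    rw [aux_coe_enn hx]
    have : x.toReal - y.toReal ≤ r := by exact_mod_cast h
    have : x.toReal ≤ r + y.toReal := by linarith
    exact_mod_cast this

lemma aux_lsc_le_liminf {γ : Type*} [TopologicalSpace γ] {Φ : γ → ℝ≥0∞} {pt : γ}
    (h : LowerSemicontinuousAt Φ pt) {s : ℕ → γ} (hs : Tendsto s atTop (𝓝 pt)) :
    Φ pt ≤ atTop.liminf fun k => Φ (s k) := by
  refine (le_liminf_iff (by isBoundedDefault) (by isBoundedDefault)).2 fun b hb => ?_
  exact hs.eventually (h b hb)

end Aux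

/-- The non-local functional `J(u) = ∫∫ f(x,y,u(x),u(y)) dx dy`, with values in
`ℝ ∪ {∞}` (formalised inside `EReal`): it is the difference of the (possibly infinite)
integral of the positive part and the integral of the negative part of the integrand. -/
noncomputable def nonlocalJ {α E : Type*} [MeasurableSpace α] (μ : Measure α)
    (f : α → α → E → E → ℝ) (u : α → E) : EReal :=
  ((∫⁻ x, ∫⁻ y, ENNReal.ofReal (f x y (u x) (u y)) ∂μ ∂μ : ℝ≥0∞) : EReal) -
    ((∫⁻ x, ∫⁻ y, ENNReal.ofReal (-f x y (u x) (u y)) ∂μ ∂μ : ℝ≥0∞) : EReal)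

theorem stmt_7 (m n : ℕ) (hm : 0 < m) (hn : 0 < n)
    (X : Set (Fin m → ℝ)) (hXmeas : MeasurableSet X) (hXbdd : Bornology.IsBounded X)
    (p : ℝ) (hp : 1 ≤ p)
    (f : (Fin m → ℝ) → (Fin m → ℝ) → EuclideanSpace ℝ (Fin n) → EuclideanSpace ℝ (Fin n) → ℝ)
    (hfmeas : Measurable (fun q : ((Fin m → ℝ) × (Fin m → ℝ)) ×
      (EuclideanSpace ℝ (Fin n)) × (EuclideanSpace ℝ (Fin n)) => f q.1.1 q.1.2 q.2.1 q.2.2))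
    (hfsymm : ∀ x y w z, f x y w z = f y x z w)
    (hpbdd : ∃ (C : ℝ) (α : (Fin m → ℝ) × (Fin m → ℝ) → ℝ) (β : (Fin m → ℝ) → ℝ),
      0 < C ∧ (∀ q, 0 ≤ α q) ∧ (∀ x, 0 ≤ β x) ∧
      Integrable α ((volume.restrict X).prod (volume.restrict X)) ∧
      Integrable β (volume.restrict X) ∧
      ∀ᵐ q ∂((volume.restrict X).prod (volume.restrict X)),
        ∀ w z : EuclideanSpace ℝ (Fin n),
          -(α q + β q.1 * ‖z‖ ^ p + β q.2 * ‖w‖ ^ p + C * ‖w‖ ^ p * ‖z‖ ^ p) ≤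
            f q.1 q.2 w z)
    (hlsc : ∀ᵐ q ∂((volume.restrict X).prod (volume.restrict X)),
      LowerSemicontinuous (fun wz : (EuclideanSpace ℝ (Fin n)) × (EuclideanSpace ℝ (Fin n)) =>
        f q.1 q.2 wz.1 wz.2)) :
    ∀ (u : ℕ → (Fin m → ℝ) → EuclideanSpace ℝ (Fin n))
      (v : (Fin m → ℝ) → EuclideanSpace ℝ (Fin n)),
      (∀ k, MemLp (u k) (ENNReal.ofReal p) (volume.restrict X)) →
      MemLp v (ENNReal.ofReal p) (volume.restrict X) →
      Tendsto (fun k => eLpNorm (u k - v) (ENNReal.ofReal p) (volume.restrict X))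
        atTop (𝓝 0) →
      nonlocalJ (volume.restrict X) f v ≤
        liminf (fun k => nonlocalJ (volume.restrict X) f (u k)) atTop := by
  classical
  intro u v hu hv huv
  set μ : Measure (Fin m → ℝ) := volume.restrict X with hμdef
  set ν : Measure ((Fin m → ℝ) × (Fin m → ℝ)) := μ.prod μ with hνdef
  obtain ⟨C, a, β, hC, ha0, hβ0, haInt, hβInt, hbd⟩ := hpbdd
  have hp0 : 0 < p := lt_of_lt_of_le one_pos hp
  set p' : ℝ≥0∞ := ENNReal.ofReal p with hp'def
  have hp'0 : p' ≠ 0 := by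
    simp only [hp'def, ne_eq, ENNReal.ofReal_eq_zero, not_le]
    exact hp0
  have hp't : p' ≠ ⊤ := ENNReal.ofReal_ne_top
  have hp'toReal : p'.toReal = p := ENNReal.toReal_ofReal hp0.le
  have hp'1 : (1 : ℝ≥0∞) ≤ p' := by
    rw [hp'def, ← ENNReal.ofReal_one]
    exact ENNReal.ofReal_le_ofReal hp
  set Gr : ((Fin m → ℝ) → EuclideanSpace ℝ (Fin n)) → ((Fin m → ℝ) × (Fin m → ℝ)) → ℝ :=
    fun w q => a q + β q.1 * ‖w q.2‖ ^ p + β q.2 * ‖w q.1‖ ^ p +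
      C * ‖w q.1‖ ^ p * ‖w q.2‖ ^ p with hGrdef
  set P : ((Fin m → ℝ) → EuclideanSpace ℝ (Fin n)) → ℝ≥0∞ :=
    fun w => ∫⁻ q, ENNReal.ofReal (f q.1 q.2 (w q.1) (w q.2) + Gr w q) ∂ν with hPdef
  set GG : ((Fin m → ℝ) → EuclideanSpace ℝ (Fin n)) → ℝ≥0∞ :=
    fun w => ∫⁻ q, ENNReal.ofReal (Gr w q) ∂ν with hGGdef
  set AA : ℝ≥0∞ := ∫⁻ q, ENNReal.ofReal (a q) ∂ν with hAAdef
  set BB : ℝ≥0∞ := ∫⁻ x, ENNReal.ofReal (β x) ∂μ with hBBdef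
  set T : ((Fin m → ℝ) → EuclideanSpace ℝ (Fin n)) → ℝ≥0∞ :=
    fun w => eLpNorm w p' μ ^ p with hTdef
  have hAA : AA ≠ ⊤ := by
    refine ne_top_of_le_ne_top haInt.2.ne (lintegral_mono fun q => ?_)
    exact Real.ofReal_le_enorm (a q)
  have hBB : BB ≠ ⊤ := by
    refine ne_top_of_le_ne_top hβInt.2.ne (lintegral_mono fun x => ?_)
    exact Real.ofReal_le_enorm (β x)
  have hGrnn : ∀ w q, 0 ≤ Gr w q := by
    intro w q
    have h1 : (0:ℝ) ≤ ‖w q.1‖ ^ p := Real.rpow_nonneg (norm_nonneg _) _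
    have h2 : (0:ℝ) ≤ ‖w q.2‖ ^ p := Real.rpow_nonneg (norm_nonneg _) _
    simp only [hGrdef]
    nlinarith [mul_nonneg (mul_nonneg hC.le h1) h2, mul_nonneg (hβ0 q.1) h2,
      mul_nonneg (hβ0 q.2) h1, ha0 q]
  have key : ∀ w : (Fin m → ℝ) → EuclideanSpace ℝ (Fin n), MemLp w p' μ →
      AEMeasurable (fun q => ENNReal.ofReal (f q.1 q.2 (w q.1) (w q.2) + Gr w q)) ν ∧
      GG w = AA + BB * T w + T w * BB + (ENNReal.ofReal C * T w) * T w ∧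
      GG w ≠ ⊤ ∧
      nonlocalJ μ f w = ((P w : ℝ≥0∞) : EReal) - ((GG w : ℝ≥0∞) : EReal) := by
    intro w hw
    have hwsm := hw.1
    have hwm : AEMeasurable w μ := hwsm.aemeasurable
    have hw1 : AEMeasurable (fun q : (Fin m → ℝ) × (Fin m → ℝ) => w q.1) ν :=
      hwm.comp_quasiMeasurePreserving Measure.quasiMeasurePreserving_fst
    have hw2 : AEMeasurable (fun q : (Fin m → ℝ) × (Fin m → ℝ) => w q.2) ν :=
      hwm.comp_quasiMeasurePreserving Measure.quasiMeasurePreserving_snd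
    have hFm : AEMeasurable (fun q : (Fin m → ℝ) × (Fin m → ℝ) =>
        f q.1 q.2 (w q.1) (w q.2)) ν := by
      have hpair : AEMeasurable (fun q : (Fin m → ℝ) × (Fin m → ℝ) =>
          ((q.1, q.2), (w q.1, w q.2))) ν :=
        (measurable_fst.aemeasurable.prodMk measurable_snd.aemeasurable).prodMk (hw1.prodMk hw2)
      exact hfmeas.comp_aemeasurable hpair
    have hhm : AEMeasurable (fun x => ‖w x‖ ^ p) μ :=
      (Real.continuous_rpow_const hp0.le).measurable.comp_aemeasurable hwsm.norm.aemeasurable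
    have hh1 : AEMeasurable (fun q : (Fin m → ℝ) × (Fin m → ℝ) => ‖w q.1‖ ^ p) ν :=
      hhm.comp_quasiMeasurePreserving Measure.quasiMeasurePreserving_fst
    have hh2 : AEMeasurable (fun q : (Fin m → ℝ) × (Fin m → ℝ) => ‖w q.2‖ ^ p) ν :=
      hhm.comp_quasiMeasurePreserving Measure.quasiMeasurePreserving_snd
    have ham : AEMeasurable a ν := haInt.aemeasurable
    have hβm : AEMeasurable β μ := hβInt.aemeasurable
    have hβ1 : AEMeasurable (fun q : (Fin m → ℝ) × (Fin m → ℝ) => β q.1) ν :=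
      hβm.comp_quasiMeasurePreserving Measure.quasiMeasurePreserving_fst
    have hβ2 : AEMeasurable (fun q : (Fin m → ℝ) × (Fin m → ℝ) => β q.2) ν :=
      hβm.comp_quasiMeasurePreserving Measure.quasiMeasurePreserving_snd
    have hGm : AEMeasurable (Gr w) ν := by
      simp only [hGrdef]
      exact ((ham.add (hβ1.mul hh2)).add (hβ2.mul hh1)).add
        ((aemeasurable_const.mul hh1).mul hh2)
    have hPm : AEMeasurable (fun q => ENNReal.ofReal (f q.1 q.2 (w q.1) (w q.2) + Gr w q)) ν :=
      ENNReal.measurable_ofReal.comp_aemeasurable (hFm.add hGm)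
    have hFom : AEMeasurable (fun q : (Fin m → ℝ) × (Fin m → ℝ) =>
        ENNReal.ofReal (f q.1 q.2 (w q.1) (w q.2))) ν :=
      ENNReal.measurable_ofReal.comp_aemeasurable hFm
    have hFnm : AEMeasurable (fun q : (Fin m → ℝ) × (Fin m → ℝ) =>
        ENNReal.ofReal (-f q.1 q.2 (w q.1) (w q.2))) ν :=
      ENNReal.measurable_ofReal.comp_aemeasurable hFm.neg
    have hGom : AEMeasurable (fun q => ENNReal.ofReal (Gr w q)) ν :=
      ENNReal.measurable_ofReal.comp_aemeasurable hGm
    have hβo : AEMeasurable (fun x => ENNReal.ofReal (β x)) μ :=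
      ENNReal.measurable_ofReal.comp_aemeasurable hβm
    have hho : AEMeasurable (fun x => ENNReal.ofReal (‖w x‖ ^ p)) μ :=
      ENNReal.measurable_ofReal.comp_aemeasurable hhm
    have hh1o : AEMeasurable (fun q : (Fin m → ℝ) × (Fin m → ℝ) =>
        ENNReal.ofReal (‖w q.1‖ ^ p)) ν := ENNReal.measurable_ofReal.comp_aemeasurable hh1
    have hh2o : AEMeasurable (fun q : (Fin m → ℝ) × (Fin m → ℝ) =>
        ENNReal.ofReal (‖w q.2‖ ^ p)) ν := ENNReal.measurable_ofReal.comp_aemeasurable hh2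
    have hβ1o : AEMeasurable (fun q : (Fin m → ℝ) × (Fin m → ℝ) =>
        ENNReal.ofReal (β q.1)) ν := ENNReal.measurable_ofReal.comp_aemeasurable hβ1
    have hβ2o : AEMeasurable (fun q : (Fin m → ℝ) × (Fin m → ℝ) =>
        ENNReal.ofReal (β q.2)) ν := ENNReal.measurable_ofReal.comp_aemeasurable hβ2
    have hTw : (∫⁻ x, ENNReal.ofReal (‖w x‖ ^ p) ∂μ) = T w := by
      have h1 : ∀ x, ENNReal.ofReal (‖w x‖ ^ p) = ‖w x‖ₑ ^ p := fun x => by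
        rw [← ENNReal.ofReal_rpow_of_nonneg (norm_nonneg _) hp0.le, ofReal_norm_eq_enorm]
      simp only [hTdef]
      simp_rw [h1]
      rw [eLpNorm_eq_lintegral_rpow_enorm_toReal hp'0 hp't, hp'toReal, ← ENNReal.rpow_mul,
        one_div, inv_mul_cancel₀ hp0.ne', ENNReal.rpow_one]
    have hTne' : T w ≠ ⊤ := by
      simp only [hTdef]
      exact (ENNReal.rpow_lt_top_of_nonneg hp0.le hw.eLpNorm_ne_top).ne
    have hGG : GG w = AA + BB * T w + T w * BB + (ENNReal.ofReal C * T w) * T w := by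
      have hpt : ∀ q : (Fin m → ℝ) × (Fin m → ℝ), ENNReal.ofReal (Gr w q) =
          ENNReal.ofReal (a q) + ENNReal.ofReal (β q.1) * ENNReal.ofReal (‖w q.2‖ ^ p)
          + ENNReal.ofReal (‖w q.1‖ ^ p) * ENNReal.ofReal (β q.2)
          + (ENNReal.ofReal C * ENNReal.ofReal (‖w q.1‖ ^ p)) *
            ENNReal.ofReal (‖w q.2‖ ^ p) := by
        intro q
        have h1 : (0:ℝ) ≤ ‖w q.1‖ ^ p := Real.rpow_nonneg (norm_nonneg _) _
        have h2 : (0:ℝ) ≤ ‖w q.2‖ ^ p := Real.rpow_nonneg (norm_nonneg _) _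
        simp only [hGrdef]
        rw [ENNReal.ofReal_add
            (by nlinarith [mul_nonneg (hβ0 q.1) h2, mul_nonneg (hβ0 q.2) h1, ha0 q])
            (by nlinarith [mul_nonneg (mul_nonneg hC.le h1) h2]),
          ENNReal.ofReal_add (by nlinarith [mul_nonneg (hβ0 q.1) h2, ha0 q])
            (mul_nonneg (hβ0 q.2) h1),
          ENNReal.ofReal_add (ha0 q) (mul_nonneg (hβ0 q.1) h2),
          ENNReal.ofReal_mul (hβ0 q.1), ENNReal.ofReal_mul (hβ0 q.2),
          ENNReal.ofReal_mul (mul_nonneg hC.le h1), ENNReal.ofReal_mul hC.le,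
          mul_comm (ENNReal.ofReal (β q.2)) (ENNReal.ofReal (‖w q.1‖ ^ p))]
      simp only [hGGdef]
      rw [show (fun q => ENNReal.ofReal (Gr w q)) = fun q : (Fin m → ℝ) × (Fin m → ℝ) =>
          ENNReal.ofReal (a q) + ENNReal.ofReal (β q.1) * ENNReal.ofReal (‖w q.2‖ ^ p)
          + ENNReal.ofReal (‖w q.1‖ ^ p) * ENNReal.ofReal (β q.2)
          + (ENNReal.ofReal C * ENNReal.ofReal (‖w q.1‖ ^ p)) *
            ENNReal.ofReal (‖w q.2‖ ^ p) from funext hpt]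
      rw [lintegral_add_right' _ ((aemeasurable_const.fun_mul hh1o).fun_mul hh2o),
        lintegral_add_right' _ (hh1o.fun_mul hβ2o),
        lintegral_add_right' _ (hβ1o.fun_mul hh2o)]
      have e2 : (∫⁻ q, ENNReal.ofReal (β q.1) * ENNReal.ofReal (‖w q.2‖ ^ p) ∂ν)
          = BB * T w := by
        rw [hνdef, lintegral_prod_mul hβo hho, hTw, ← hBBdef]
      have e3 : (∫⁻ q, ENNReal.ofReal (‖w q.1‖ ^ p) * ENNReal.ofReal (β q.2) ∂ν)
          = T w * BB := by
        rw [hνdef, lintegral_prod_mul hho hβo, hTw, ← hBBdef]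
      have e4 : (∫⁻ q, (ENNReal.ofReal C * ENNReal.ofReal (‖w q.1‖ ^ p)) *
          ENNReal.ofReal (‖w q.2‖ ^ p) ∂ν) = (ENNReal.ofReal C * T w) * T w := by
        rw [hνdef, lintegral_prod_mul (aemeasurable_const.fun_mul hho) hho,
          lintegral_const_mul' _ _ ENNReal.ofReal_ne_top, hTw]
      rw [e2, e3, e4, ← hAAdef]
    have hGGne : GG w ≠ ⊤ := by
      rw [hGG]
      exact ENNReal.add_ne_top.2 ⟨ENNReal.add_ne_top.2 ⟨ENNReal.add_ne_top.2
        ⟨hAA, ENNReal.mul_ne_top hBB hTne'⟩, ENNReal.mul_ne_top hTne' hBB⟩,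
        ENNReal.mul_ne_top (ENNReal.mul_ne_top ENNReal.ofReal_ne_top hTne') hTne'⟩
    have hFG0 : ∀ᵐ q ∂ν, 0 ≤ f q.1 q.2 (w q.1) (w q.2) + Gr w q := by
      filter_upwards [hbd] with q hq
      have h := hq (w q.1) (w q.2)
      simp only [hGrdef]
      linarith
    have hnegle : ∀ᵐ q ∂ν, ENNReal.ofReal (-f q.1 q.2 (w q.1) (w q.2))
        ≤ ENNReal.ofReal (Gr w q) := by
      filter_upwards [hbd] with q hq
      apply ENNReal.ofReal_le_ofReal
      have h := hq (w q.1) (w q.2)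
      simp only [hGrdef]
      linarith
    have hBneg_le : (∫⁻ q, ENNReal.ofReal (-f q.1 q.2 (w q.1) (w q.2)) ∂ν) ≤ GG w := by
      simp only [hGGdef]
      exact lintegral_mono_ae hnegle
    have hBneg_ne : (∫⁻ q, ENNReal.ofReal (-f q.1 q.2 (w q.1) (w q.2)) ∂ν) ≠ ⊤ :=
      ne_top_of_le_ne_top hGGne hBneg_le
    have hid : ∀ᵐ q ∂ν, ENNReal.ofReal (f q.1 q.2 (w q.1) (w q.2) + Gr w q)
        + ENNReal.ofReal (-f q.1 q.2 (w q.1) (w q.2))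
        = ENNReal.ofReal (f q.1 q.2 (w q.1) (w q.2)) + ENNReal.ofReal (Gr w q) := by
      filter_upwards [hFG0] with q hq
      rcases le_or_gt 0 (f q.1 q.2 (w q.1) (w q.2)) with h | h
      · have hle : -f q.1 q.2 (w q.1) (w q.2) ≤ 0 := by linarith
        rw [ENNReal.ofReal_add h (hGrnn w q), ENNReal.ofReal_of_nonpos hle, add_zero]
      · rw [ENNReal.ofReal_of_nonpos h.le, zero_add,
          ← ENNReal.ofReal_add hq (by linarith : (0:ℝ) ≤ -f q.1 q.2 (w q.1) (w q.2))]
        congr 1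
        ring
    have hsum : P w + (∫⁻ q, ENNReal.ofReal (-f q.1 q.2 (w q.1) (w q.2)) ∂ν) =
        (∫⁻ q, ENNReal.ofReal (f q.1 q.2 (w q.1) (w q.2)) ∂ν) + GG w := by
      simp only [hPdef, hGGdef]
      rw [← lintegral_add_right' _ hFnm, ← lintegral_add_right' _ hGom]
      exact lintegral_congr_ae hid
    have hJiter : nonlocalJ μ f w =
        ((∫⁻ q, ENNReal.ofReal (f q.1 q.2 (w q.1) (w q.2)) ∂ν : ℝ≥0∞) : EReal)
        - ((∫⁻ q, ENNReal.ofReal (-f q.1 q.2 (w q.1) (w q.2)) ∂ν : ℝ≥0∞) : EReal) := by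
      have e1 : (∫⁻ x, ∫⁻ y, ENNReal.ofReal (f x y (w x) (w y)) ∂μ ∂μ)
          = ∫⁻ q, ENNReal.ofReal (f q.1 q.2 (w q.1) (w q.2)) ∂ν :=
        lintegral_lintegral (f := fun x y => ENNReal.ofReal (f x y (w x) (w y))) hFom
      have e2 : (∫⁻ x, ∫⁻ y, ENNReal.ofReal (-f x y (w x) (w y)) ∂μ ∂μ)
          = ∫⁻ q, ENNReal.ofReal (-f q.1 q.2 (w q.1) (w q.2)) ∂ν :=
        lintegral_lintegral (f := fun x y => ENNReal.ofReal (-f x y (w x) (w y))) hFnm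
      simp only [nonlocalJ]
      rw [e1, e2]
    refine ⟨hPm, hGG, hGGne, ?_⟩
    rw [hJiter]
    exact aux_ereal_sub_eq hBneg_ne hGGne hsum.symm
  -- main contradiction argument
  by_contra hcon
  push_neg at hcon
  obtain ⟨b, hb1, hb2⟩ := exists_between hcon
  have hbT : b ≠ ⊤ := hb2.ne_top
  have hbB : b ≠ ⊥ := ne_bot_of_gt hb1
  set r : ℝ := b.toReal with hrdef
  have hbr : (r : EReal) = b := EReal.coe_toReal hbT hbB
  have hfreq : ∃ᶠ k in atTop, nonlocalJ μ f (u k) < b :=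
    frequently_lt_of_liminf_lt (by isBoundedDefault) hb1
  obtain ⟨φ, hφ, hφP⟩ := Filter.extraction_of_frequently_atTop hfreq
  have hconv1 : Tendsto (fun k => eLpNorm (u (φ k) - v) p' μ) atTop (𝓝 0) :=
    huv.comp hφ.tendsto_atTop
  have htim : TendstoInMeasure μ (fun k => u (φ k)) atTop v :=
    tendstoInMeasure_of_tendsto_eLpNorm hp'0 (fun k => (hu (φ k)).1) hv.1 hconv1
  obtain ⟨ψ, hψ, hae⟩ := htim.exists_seq_tendsto_ae
  set W : ℕ → (Fin m → ℝ) → EuclideanSpace ℝ (Fin n) := fun k => u (φ (ψ k)) with hWdef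
  have hWmem : ∀ k, MemLp (W k) p' μ := fun k => hu _
  have hWJ : ∀ k, nonlocalJ μ f (W k) < b := fun k => hφP (ψ k)
  have hWae : ∀ᵐ x ∂μ, Tendsto (fun k => W k x) atTop (𝓝 (v x)) := hae
  have hWconv : Tendsto (fun k => eLpNorm (W k - v) p' μ) atTop (𝓝 0) :=
    hconv1.comp hψ.tendsto_atTop
  have heLp : Tendsto (fun k => eLpNorm (W k) p' μ) atTop (𝓝 (eLpNorm v p' μ)) := by
    rw [ENNReal.tendsto_nhds hv.eLpNorm_ne_top]
    intro ε hε
    have hev : ∀ᶠ k in atTop, eLpNorm (W k - v) p' μ < ε := hWconv.eventually_lt_const hε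
    filter_upwards [hev] with k hk
    have hWm := (hWmem k).1
    have h1 : eLpNorm v p' μ ≤ eLpNorm (W k) p' μ + eLpNorm (W k - v) p' μ := by
      calc eLpNorm v p' μ = eLpNorm (W k + (v - W k)) p' μ := by
            congr 1
            ext x
            simp
        _ ≤ eLpNorm (W k) p' μ + eLpNorm (v - W k) p' μ :=
            eLpNorm_add_le hWm (hv.1.sub hWm) hp'1
        _ = eLpNorm (W k) p' μ + eLpNorm (W k - v) p' μ := by
            rw [← neg_sub (W k) v, eLpNorm_neg]
    have h2 : eLpNorm (W k) p' μ ≤ eLpNorm v p' μ + eLpNorm (W k - v) p' μ := by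
      calc eLpNorm (W k) p' μ = eLpNorm (v + (W k - v)) p' μ := by
            congr 1
            ext x
            simp
        _ ≤ eLpNorm v p' μ + eLpNorm (W k - v) p' μ :=
            eLpNorm_add_le hv.1 (hWm.sub hv.1) hp'1
    rw [Set.mem_Icc]
    constructor
    · rw [tsub_le_iff_right]
      exact le_trans h1 (add_le_add le_rfl hk.le)
    · exact le_trans h2 (add_le_add le_rfl hk.le)
  have hE : Tendsto (fun k => T (W k)) atTop (𝓝 (T v)) := by
    simp only [hTdef]
    exact (ENNReal.continuous_rpow_const.tendsto _).comp heLp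
  have hTneV : T v ≠ ⊤ := by
    simp only [hTdef]
    exact (ENNReal.rpow_lt_top_of_nonneg hp0.le hv.eLpNorm_ne_top).ne
  have hGGtend : Tendsto (fun k => GG (W k)) atTop (𝓝 (GG v)) := by
    have hre : (fun k => GG (W k)) = fun k =>
        AA + BB * T (W k) + T (W k) * BB + (ENNReal.ofReal C * T (W k)) * T (W k) :=
      funext fun k => (key _ (hWmem k)).2.1
    rw [hre, (key v hv).2.1]
    refine ((tendsto_const_nhds.add (ENNReal.Tendsto.const_mul hE (Or.inr hBB))).add
      (ENNReal.Tendsto.mul_const hE (Or.inr hBB))).add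
      (ENNReal.Tendsto.mul (ENNReal.Tendsto.const_mul hE (Or.inr ENNReal.ofReal_ne_top))
        ?_ hE ?_)
    · exact Or.inr hTneV
    · exact Or.inr (ENNReal.mul_ne_top ENNReal.ofReal_ne_top hTneV)
  -- Fatou
  have hae1 : ∀ᵐ q ∂ν, Tendsto (fun k => W k q.1) atTop (𝓝 (v q.1)) :=
    Measure.quasiMeasurePreserving_fst.ae hWae
  have hae2 : ∀ᵐ q ∂ν, Tendsto (fun k => W k q.2) atTop (𝓝 (v q.2)) :=
    Measure.quasiMeasurePreserving_snd.ae hWae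
  have hptws : ∀ᵐ q ∂ν, ENNReal.ofReal (f q.1 q.2 (v q.1) (v q.2) + Gr v q) ≤
      atTop.liminf fun k => ENNReal.ofReal (f q.1 q.2 (W k q.1) (W k q.2) + Gr (W k) q) := by
    filter_upwards [hlsc, hae1, hae2] with q hq h1 h2
    have c1 : Continuous fun wz : EuclideanSpace ℝ (Fin n) × EuclideanSpace ℝ (Fin n) =>
        ‖wz.1‖ ^ p := (continuous_fst.norm).rpow_const fun _ => Or.inr hp0.le
    have c2 : Continuous fun wz : EuclideanSpace ℝ (Fin n) × EuclideanSpace ℝ (Fin n) =>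
        ‖wz.2‖ ^ p := (continuous_snd.norm).rpow_const fun _ => Or.inr hp0.le
    have hcont : Continuous fun wz : EuclideanSpace ℝ (Fin n) × EuclideanSpace ℝ (Fin n) =>
        a q + β q.1 * ‖wz.2‖ ^ p + β q.2 * ‖wz.1‖ ^ p + C * ‖wz.1‖ ^ p * ‖wz.2‖ ^ p :=
      ((continuous_const.add (continuous_const.mul c2)).add
        (continuous_const.mul c1)).add ((continuous_const.mul c1).mul c2)
    have hΦ : LowerSemicontinuous (fun wz : EuclideanSpace ℝ (Fin n) × EuclideanSpace ℝ (Fin n) =>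
        ENNReal.ofReal (f q.1 q.2 wz.1 wz.2 + (a q + β q.1 * ‖wz.2‖ ^ p + β q.2 * ‖wz.1‖ ^ p +
          C * ‖wz.1‖ ^ p * ‖wz.2‖ ^ p))) := by
      have hsum : LowerSemicontinuous
          (fun wz : EuclideanSpace ℝ (Fin n) × EuclideanSpace ℝ (Fin n) =>
            f q.1 q.2 wz.1 wz.2 + (a q + β q.1 * ‖wz.2‖ ^ p + β q.2 * ‖wz.1‖ ^ p +
              C * ‖wz.1‖ ^ p * ‖wz.2‖ ^ p)) := hq.add hcont.lowerSemicontinuous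
      exact ENNReal.continuous_ofReal.comp_lowerSemicontinuous hsum
        fun x y hxy => ENNReal.ofReal_le_ofReal hxy
    have hmain := aux_lsc_le_liminf (hΦ (v q.1, v q.2)) (h1.prodMk_nhds h2)
    simp only [hGrdef]
    exact hmain
  have hfatou : P v ≤ atTop.liminf fun k => P (W k) := by
    have hmk : ∀ k : ℕ, AEMeasurable
        (fun q => ENNReal.ofReal (f q.1 q.2 (W k q.1) (W k q.2) + Gr (W k) q)) ν :=
      fun k => (key _ (hWmem k)).1
    calc P v ≤ ∫⁻ q, atTop.liminf
          (fun k => ENNReal.ofReal (f q.1 q.2 (W k q.1) (W k q.2) + Gr (W k) q)) ∂ν := by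
          simp only [hPdef]
          exact lintegral_mono_ae hptws
      _ ≤ atTop.liminf fun k => P (W k) := by
          simp only [hPdef]
          exact lintegral_liminf_le' hmk
  -- final estimate
  have hGv : GG v ≠ ⊤ := (key v hv).2.2.1
  set s : ℝ := (GG v).toReal with hsdef
  have hs0 : 0 ≤ s := ENNReal.toReal_nonneg
  have hsEq : ((GG v : ℝ≥0∞) : EReal) = ((s : ℝ) : EReal) := aux_coe_enn hGv
  have hPk : ∀ k, ((P (W k) : ℝ≥0∞) : EReal) ≤ ((r + (GG (W k)).toReal : ℝ) : EReal) := by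
    intro k
    refine aux_ereal_le_add_of_sub_le ((key _ (hWmem k)).2.2.1) ?_
    rw [← (key _ (hWmem k)).2.2.2, hbr]
    exact (hWJ k).le
  have hJle : ∀ ε : ℝ, 0 < ε → nonlocalJ μ f v ≤ ((r + ε : ℝ) : EReal) := by
    intro ε hε
    have hev : ∀ᶠ k in atTop, GG (W k) < GG v + ENNReal.ofReal ε :=
      hGGtend.eventually_lt_const
        (ENNReal.lt_add_right hGv (by simpa using hε))
    have hGle : ∀ᶠ k in atTop, (GG (W k)).toReal ≤ s + ε := by
      filter_upwards [hev] with k hk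
      have hkk : GG (W k) ≤ ENNReal.ofReal (s + ε) := by
        refine le_trans hk.le (le_of_eq ?_)
        rw [ENNReal.ofReal_add hs0 hε.le, ENNReal.ofReal_toReal hGv]
      calc (GG (W k)).toReal ≤ (ENNReal.ofReal (s + ε)).toReal :=
            ENNReal.toReal_mono ENNReal.ofReal_ne_top hkk
        _ = s + ε := ENNReal.toReal_ofReal (by linarith)
    have hnn : 0 ≤ r + (s + ε) := by
      obtain ⟨k, hk⟩ := hGle.exists
      have h2 : (0 : EReal) ≤ ((P (W k) : ℝ≥0∞) : EReal) := EReal.coe_ennreal_nonneg _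
      have h3 : (0:ℝ) ≤ r + (GG (W k)).toReal := by exact_mod_cast le_trans h2 (hPk k)
      linarith
    have hev2 : ∀ᶠ k in atTop, P (W k) ≤ ENNReal.ofReal (r + (s + ε)) := by
      filter_upwards [hGle] with k hk
      apply aux_enn_le_ofReal
      refine le_trans (hPk k) ?_
      exact_mod_cast (by linarith : r + (GG (W k)).toReal ≤ r + (s + ε))
    have hlim : P v ≤ ENNReal.ofReal (r + (s + ε)) :=
      le_trans hfatou (liminf_le_of_frequently_le' hev2.frequently)
    have h5 : ((P v : ℝ≥0∞) : EReal) ≤ ((r + (s + ε) : ℝ) : EReal) := by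
      refine le_trans (EReal.coe_ennreal_le_coe_ennreal_iff.2 hlim) ?_
      rw [EReal.coe_ennreal_ofReal, max_eq_left hnn]
    rw [(key v hv).2.2.2, hsEq]
    calc ((P v : ℝ≥0∞) : EReal) - ((s:ℝ):EReal)
        ≤ ((r + (s + ε) : ℝ) : EReal) - ((s:ℝ):EReal) := by
          rw [sub_eq_add_neg, sub_eq_add_neg]
          exact add_le_add h5 le_rfl
      _ = ((r + ε : ℝ) : EReal) := by
          rw [← EReal.coe_sub]
          norm_cast
          ring
  obtain ⟨c, hc1, hc2⟩ := exists_between hb2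
  have hcT : c ≠ ⊤ := hc2.ne_top
  have hcB : c ≠ ⊥ := ne_bot_of_gt hc1
  have hrc : r < c.toReal := by
    have h := hc1
    rw [← hbr, ← EReal.coe_toReal hcT hcB] at h
    exact_mod_cast h
  have hfin := hJle (c.toReal - r) (by linarith)
  rw [show r + (c.toReal - r) = c.toReal by ring, EReal.coe_toReal hcT hcB] at hfin
  exact absurd (lt_of_le_of_lt hfin hc2) (lt_irrefl _)
end

section
/- Let f : X × X × ℝⁿ × ℝⁿ → ℝ be a pairwise symmetric, measurable function such that for every M > 0 there exists a nonnegative function α_M ∈ L^1(X×X) with f(x,y,w,z) ≥ −α_M(x,y) for almost all (x,y) ∈ X×X and all w, z ∈ ℝⁿ with |w| ≤ M and |z| ≤ M. Assume that for almost all (x,y) ∈ X×X the map (w,z) ↦ f(x,y,w,z) is lower semi-continuous on ℝⁿ × ℝⁿ. Then the non-local functional J^∞_f is sequentially lower semi-continuous with respect to the norm topology on L^∞(X;ℝⁿ): for every sequence (u_k) converging to u in the L^∞ norm, liminf_{k→∞} J^∞_f(u_k) ≥ J^∞_f(u). -/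
open MeasureTheory ENNReal Filter Topology

lemma ereal_coe_ennreal_eq_toReal {x : ℝ≥0∞} (hx : x ≠ ⊤) :
    (x : EReal) = ((x.toReal : ℝ) : EReal) := by
  conv_lhs => rw [← ENNReal.ofReal_toReal hx]
  rw [EReal.coe_ennreal_ofReal, max_eq_left ENNReal.toReal_nonneg]

lemma ereal_sub_eq (P N A I : ℝ≥0∞) (hPI : P + I = A + N) (hN : N ≤ I) (hI : I ≠ ⊤) :
    (P : EReal) - (N : EReal) = (A : EReal) - (I : EReal) := by
  have hN' : N ≠ ⊤ := fun h => hI (top_le_iff.1 (h ▸ hN))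
  by_cases hA : A = ⊤
  · have hP : P = ⊤ := by
      by_contra hP
      have h1 : P + I ≠ ⊤ := ENNReal.add_ne_top.2 ⟨hP, hI⟩
      rw [hPI, hA] at h1
      simp at h1
    rw [hA, hP, EReal.coe_ennreal_top, ereal_coe_ennreal_eq_toReal hN',
      ereal_coe_ennreal_eq_toReal hI, EReal.top_sub_coe, EReal.top_sub_coe]
  · have hP : P ≠ ⊤ := by
      intro h
      have h2 : A + N = ⊤ := by rw [← hPI, h]; simp
      exact hA ((ENNReal.add_eq_top.1 h2).resolve_right hN')
    have hr : P.toReal + I.toReal = A.toReal + N.toReal := by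
      rw [← ENNReal.toReal_add hP hI, ← ENNReal.toReal_add hA hN', hPI]
    rw [ereal_coe_ennreal_eq_toReal hP, ereal_coe_ennreal_eq_toReal hN',
      ereal_coe_ennreal_eq_toReal hA, ereal_coe_ennreal_eq_toReal hI,
      ← EReal.coe_sub, ← EReal.coe_sub]
    exact congrArg _ (by linarith)

lemma ereal_liminf_sub (A : ℕ → ℝ≥0∞) (B I : ℝ≥0∞) (hI : I ≠ ⊤)
    (h : B ≤ liminf A atTop) :
    (B : EReal) - (I : EReal) ≤ liminf (fun k => (A k : EReal) - (I : EReal)) atTop := by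
  rw [ereal_coe_ennreal_eq_toReal hI]
  set c : ℝ := I.toReal with hc
  rw [Filter.le_liminf_iff]
  intro y hy
  have hy' : y + (c : EReal) < (B : EReal) := EReal.add_lt_of_lt_sub hy
  have hev : ∀ᶠ k in atTop, y + (c : EReal) < (A k : EReal) := by
    obtain ⟨r, hzr, hrB⟩ := EReal.exists_between_coe_real hy'
    rcases lt_or_ge r 0 with hr | hr
    · refine Filter.Eventually.of_forall fun k => hzr.trans
        (lt_of_lt_of_le (show (r : EReal) < ((0:ℝ≥0∞) : EReal) by
          rw [EReal.coe_ennreal_zero]; exact_mod_cast hr)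
          (EReal.coe_ennreal_le_coe_ennreal_iff.2 (show (0:ℝ≥0∞) ≤ A k from zero_le)))
    · have hrB' : ENNReal.ofReal r < B := by
        by_contra hcon
        push_neg at hcon
        have h2 : (B : EReal) ≤ ((ENNReal.ofReal r : ℝ≥0∞) : EReal) :=
          EReal.coe_ennreal_le_coe_ennreal_iff.2 hcon
        rw [EReal.coe_ennreal_ofReal, max_eq_left hr] at h2
        exact absurd (lt_of_lt_of_le hrB h2) (lt_irrefl _)
      have hev2 := Filter.eventually_lt_of_lt_liminf (lt_of_lt_of_le hrB' h)
      filter_upwards [hev2] with k hk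
      calc y + (c : EReal) < (r : EReal) := hzr
        _ ≤ ((ENNReal.ofReal r : ℝ≥0∞) : EReal) := by
            rw [EReal.coe_ennreal_ofReal, max_eq_left hr]
        _ < (A k : EReal) := EReal.coe_ennreal_lt_coe_ennreal_iff.2 hk
  filter_upwards [hev] with k hk
  exact (EReal.lt_sub_iff_add_lt (Or.inl (EReal.coe_ne_bot c))
    (Or.inl (EReal.coe_ne_top c))).2 hk

lemma ofReal_identity {t a : ℝ} (ha : 0 ≤ a) (h : -a ≤ t) :
    ENNReal.ofReal (t + a) + ENNReal.ofReal (-t) =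
      ENNReal.ofReal t + ENNReal.ofReal a := by
  rcases le_or_gt 0 t with ht | ht
  · rw [ENNReal.ofReal_of_nonpos (show -t ≤ 0 by linarith), ENNReal.ofReal_add ht ha, add_zero]
  · rw [ENNReal.ofReal_of_nonpos ht.le, ← ENNReal.ofReal_add (by linarith) (by linarith),
      zero_add]
    congr 1
    ring

theorem stmt_8 (m n : ℕ) (hm : 0 < m) (hn : 0 < n)
    (X : Set (Fin m → ℝ)) (hXmeas : MeasurableSet X) (hXbdd : Bornology.IsBounded X)
    (f : (Fin m → ℝ) → (Fin m → ℝ) → EuclideanSpace ℝ (Fin n) → EuclideanSpace ℝ (Fin n) → ℝ)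
    (hfmeas : Measurable (fun q : ((Fin m → ℝ) × (Fin m → ℝ)) ×
      (EuclideanSpace ℝ (Fin n)) × (EuclideanSpace ℝ (Fin n)) => f q.1.1 q.1.2 q.2.1 q.2.2))
    (hfsymm : ∀ x y w z, f x y w z = f y x z w)
    (hlb : ∀ M : ℝ, 0 < M → ∃ α : (Fin m → ℝ) × (Fin m → ℝ) → ℝ,
      (∀ q, 0 ≤ α q) ∧
      Integrable α ((volume.restrict X).prod (volume.restrict X)) ∧
      ∀ᵐ q ∂((volume.restrict X).prod (volume.restrict X)),
        ∀ w z : EuclideanSpace ℝ (Fin n), ‖w‖ ≤ M → ‖z‖ ≤ M →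
          -(α q) ≤ f q.1 q.2 w z)
    (hlsc : ∀ᵐ q ∂((volume.restrict X).prod (volume.restrict X)),
      LowerSemicontinuous (fun wz : (EuclideanSpace ℝ (Fin n)) × (EuclideanSpace ℝ (Fin n)) =>
        f q.1 q.2 wz.1 wz.2)) :
    ∀ (u : ℕ → (Fin m → ℝ) → EuclideanSpace ℝ (Fin n))
      (v : (Fin m → ℝ) → EuclideanSpace ℝ (Fin n)),
      (∀ k, MemLp (u k) ⊤ (volume.restrict X)) →
      MemLp v ⊤ (volume.restrict X) →
      Tendsto (fun k => eLpNorm (u k - v) ⊤ (volume.restrict X)) atTop (𝓝 0) →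
      nonlocalJ (volume.restrict X) f v ≤
        liminf (fun k => nonlocalJ (volume.restrict X) f (u k)) atTop := by
  intro u v hu hv hconv
  set μ := volume.restrict X with hμ
  set π := μ.prod μ with hπ
  haveI : IsFiniteMeasure μ := ⟨by
    rw [Measure.restrict_apply_univ]; exact hXbdd.measure_lt_top⟩
  -- pick K such that for all k ≥ K the L^∞ distance is ≤ 1
  obtain ⟨K, hK⟩ := (eventually_atTop.1 (hconv.eventually_lt_const (by norm_num : (0:ℝ≥0∞) < 1)))
  set w : ℕ → (Fin m → ℝ) → EuclideanSpace ℝ (Fin n) := fun k => u (k + K) with hw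
  have hwbdd : ∀ k, eLpNorm (w k - v) ⊤ μ ≤ 1 := fun k => (hK (k + K) (Nat.le_add_left _ _)).le
  have hwconv : Tendsto (fun k => eLpNorm (w k - v) ⊤ μ) atTop (𝓝 0) :=
    hconv.comp (tendsto_add_atTop_nat K)
  -- the bound M
  set M : ℝ := (eLpNorm v ⊤ μ).toReal + 1 with hM
  have hMpos : 0 < M := by positivity
  obtain ⟨α, hα0, hαint, hαlb⟩ := hlb M hMpos
  set I : ℝ≥0∞ := ∫⁻ q, ENNReal.ofReal (α q) ∂π with hI
  have hItop : I ≠ ⊤ := by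
    refine ne_top_of_le_ne_top hαint.2.ne ?_
    exact lintegral_mono fun q => Real.ofReal_le_enorm (α q)
  have hαmeas : AEMeasurable (fun q => ENNReal.ofReal (α q)) π :=
    hαint.aemeasurable.ennreal_ofReal
  -- a.e. pointwise facts on X
  have hvb : ∀ᵐ x ∂μ, ‖v x‖ ≤ M - 1 := by
    filter_upwards [ae_le_eLpNormEssSup (f := v) (μ := μ)] with x hx
    have h2 : (‖v x‖₊ : ℝ≥0∞) ≤ eLpNorm v ⊤ μ := by rwa [eLpNorm_exponent_top]
    have h3 := ENNReal.toReal_mono hv.eLpNorm_ne_top h2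
    simpa [hM] using h3
  have hwk : ∀ᵐ x ∂μ, ∀ k, (‖w k x - v x‖₊ : ℝ≥0∞) ≤ eLpNorm (w k - v) ⊤ μ := by
    rw [ae_all_iff]
    intro k
    filter_upwards [ae_le_eLpNormEssSup (f := w k - v) (μ := μ)] with x hx
    rw [eLpNorm_exponent_top]
    rw [← enorm_eq_nnnorm]
    simpa using hx
  -- good points
  have hgood : ∀ᵐ x ∂μ, (Tendsto (fun k => w k x) atTop (𝓝 (v x))) ∧
      (∀ k, ‖w k x‖ ≤ M) ∧ ‖v x‖ ≤ M := by
    filter_upwards [hvb, hwk] with x hx1 hx2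
    have hnorm1 : ∀ k, ‖w k x - v x‖ ≤ 1 := by
      intro k
      have := (hx2 k).trans (hwbdd k)
      have h1 : ‖w k x - v x‖₊ ≤ (1 : NNReal) := by exact_mod_cast this
      exact_mod_cast h1
    refine ⟨?_, ?_, by linarith⟩
    · have hsq : Tendsto (fun k => (‖w k x - v x‖₊ : ℝ≥0∞)) atTop (𝓝 0) :=
        tendsto_of_tendsto_of_tendsto_of_le_of_le tendsto_const_nhds hwconv
          (fun k => zero_le) (fun k => hx2 k)
      rw [← ENNReal.coe_zero, ENNReal.tendsto_coe] at hsq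
      have hsq2 : Tendsto (fun k => ‖w k x - v x‖) atTop (𝓝 0) := by
        have := (NNReal.tendsto_coe (f := atTop)).2 hsq
        simpa using this
      rw [tendsto_iff_norm_sub_tendsto_zero]
      simpa using hsq2
    · intro k
      have : ‖w k x‖ = ‖v x + (w k x - v x)‖ := by congr 1; abel
      rw [this]
      calc ‖v x + (w k x - v x)‖ ≤ ‖v x‖ + ‖w k x - v x‖ := norm_add_le _ _
        _ ≤ (M - 1) + 1 := add_le_add hx1 (hnorm1 k)
        _ = M := by ring
  -- transport to the product
  have hfstq := (MeasureTheory.Measure.quasiMeasurePreserving_fst (μ := μ) (ν := μ)).ae hgood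
  have hsndq := (MeasureTheory.Measure.quasiMeasurePreserving_snd (μ := μ) (ν := μ)).ae hgood
  -- measurability of the composed integrands
  have hFmeas : ∀ (g : (Fin m → ℝ) → EuclideanSpace ℝ (Fin n)),
      AEMeasurable g μ →
      AEMeasurable (fun q : (Fin m → ℝ) × (Fin m → ℝ) => f q.1 q.2 (g q.1) (g q.2)) π := by
    intro g hg
    have h1 : AEMeasurable (fun q : (Fin m → ℝ) × (Fin m → ℝ) => g q.1) π := hg.comp_quasiMeasurePreserving Measure.quasiMeasurePreserving_fst
    have h2 : AEMeasurable (fun q : (Fin m → ℝ) × (Fin m → ℝ) => g q.2) π := hg.comp_quasiMeasurePreserving Measure.quasiMeasurePreserving_snd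
    exact hfmeas.comp_aemeasurable (aemeasurable_id.prodMk (h1.prodMk h2))
  have hvmeas : AEMeasurable v μ := hv.aestronglyMeasurable.aemeasurable
  have hwmeas : ∀ k, AEMeasurable (w k) μ :=
    fun k => (hu (k + K)).aestronglyMeasurable.aemeasurable
  have hFv := hFmeas v hvmeas
  have hFw := fun k => hFmeas (w k) (hwmeas k)
  -- the basic quantities
  set Pv : ℝ≥0∞ := ∫⁻ q, ENNReal.ofReal (f q.1 q.2 (v q.1) (v q.2)) ∂π with hPv
  set Nv : ℝ≥0∞ := ∫⁻ q, ENNReal.ofReal (-f q.1 q.2 (v q.1) (v q.2)) ∂π with hNv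
  set Av : ℝ≥0∞ := ∫⁻ q, ENNReal.ofReal (f q.1 q.2 (v q.1) (v q.2) + α q) ∂π with hAv
  set Pw : ℕ → ℝ≥0∞ := fun k => ∫⁻ q, ENNReal.ofReal (f q.1 q.2 (w k q.1) (w k q.2)) ∂π with hPw
  set Nw : ℕ → ℝ≥0∞ := fun k => ∫⁻ q, ENNReal.ofReal (-f q.1 q.2 (w k q.1) (w k q.2)) ∂π with hNw
  set Aw : ℕ → ℝ≥0∞ :=
    fun k => ∫⁻ q, ENNReal.ofReal (f q.1 q.2 (w k q.1) (w k q.2) + α q) ∂π with hAw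
  -- expression of nonlocalJ by product integrals
  have key : ∀ (g : (Fin m → ℝ) → EuclideanSpace ℝ (Fin n)),
      AEMeasurable (fun q : (Fin m → ℝ) × (Fin m → ℝ) => f q.1 q.2 (g q.1) (g q.2)) π →
      nonlocalJ μ f g =
        ((∫⁻ q, ENNReal.ofReal (f q.1 q.2 (g q.1) (g q.2)) ∂π : ℝ≥0∞) : EReal) -
        ((∫⁻ q, ENNReal.ofReal (-f q.1 q.2 (g q.1) (g q.2)) ∂π : ℝ≥0∞) : EReal) := by
    intro g hg
    rw [nonlocalJ, MeasureTheory.lintegral_prod _ hg.ennreal_ofReal,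
      MeasureTheory.lintegral_prod _ (show AEMeasurable (fun q : (Fin m → ℝ) × (Fin m → ℝ) =>
        -f q.1 q.2 (g q.1) (g q.2)) π from hg.neg).ennreal_ofReal]
  -- a.e. lower bounds on the product
  have haev : ∀ᵐ q ∂π, -(α q) ≤ f q.1 q.2 (v q.1) (v q.2) := by
    filter_upwards [hαlb, hfstq, hsndq] with q h1 h2 h3
    exact h1 _ _ h2.2.2 h3.2.2
  have haew : ∀ᵐ q ∂π, ∀ k, -(α q) ≤ f q.1 q.2 (w k q.1) (w k q.2) := by
    filter_upwards [hαlb, hfstq, hsndq] with q h1 h2 h3 k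
    exact h1 _ _ (h2.2.1 k) (h3.2.1 k)
  -- the decomposition identities
  have hdecomp : ∀ (g : (Fin m → ℝ) → EuclideanSpace ℝ (Fin n)),
      AEMeasurable (fun q : (Fin m → ℝ) × (Fin m → ℝ) => f q.1 q.2 (g q.1) (g q.2)) π →
      (∀ᵐ q ∂π, -(α q) ≤ f q.1 q.2 (g q.1) (g q.2)) →
      (∫⁻ q, ENNReal.ofReal (f q.1 q.2 (g q.1) (g q.2)) ∂π) + I =
        (∫⁻ q, ENNReal.ofReal (f q.1 q.2 (g q.1) (g q.2) + α q) ∂π) +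
        (∫⁻ q, ENNReal.ofReal (-f q.1 q.2 (g q.1) (g q.2)) ∂π) := by
    intro g hg hge
    rw [hI, ← lintegral_add_left' hg.ennreal_ofReal, ← lintegral_add_left'
      (show AEMeasurable (fun q : (Fin m → ℝ) × (Fin m → ℝ) =>
        f q.1 q.2 (g q.1) (g q.2) + α q) π from hg.add hαint.aemeasurable).ennreal_ofReal]
    apply lintegral_congr_ae
    filter_upwards [hge] with q hq
    exact (ofReal_identity (hα0 q) hq).symm
  have hNle : ∀ (g : (Fin m → ℝ) → EuclideanSpace ℝ (Fin n)),
      (∀ᵐ q ∂π, -(α q) ≤ f q.1 q.2 (g q.1) (g q.2)) →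
      (∫⁻ q, ENNReal.ofReal (-f q.1 q.2 (g q.1) (g q.2)) ∂π) ≤ I := by
    intro g hge
    apply lintegral_mono_ae
    filter_upwards [hge] with q hq
    exact ENNReal.ofReal_le_ofReal (by linarith)
  -- J as A - I
  have hJv : nonlocalJ μ f v = (Av : EReal) - (I : EReal) := by
    rw [key v hFv]
    exact ereal_sub_eq _ _ _ _ (hdecomp v hFv haev) (hNle v haev) hItop
  have hJw : ∀ k, nonlocalJ μ f (w k) = (Aw k : EReal) - (I : EReal) := by
    intro k
    rw [key (w k) (hFw k)]
    refine ereal_sub_eq _ _ _ _ (hdecomp (w k) (hFw k) ?_) (hNle (w k) ?_) hItop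
    · filter_upwards [haew] with q hq using hq k
    · filter_upwards [haew] with q hq using hq k
  -- Fatou step
  have hliminfpt : ∀ᵐ q ∂π, ENNReal.ofReal (f q.1 q.2 (v q.1) (v q.2) + α q) ≤
      liminf (fun k => ENNReal.ofReal (f q.1 q.2 (w k q.1) (w k q.2) + α q)) atTop := by
    filter_upwards [hlsc, hfstq, hsndq] with q hq h1 h2
    rw [Filter.le_liminf_iff]
    intro y hy
    have hytop : y ≠ ⊤ := (hy.trans ENNReal.ofReal_lt_top).ne
    have hlt : y.toReal < f q.1 q.2 (v q.1) (v q.2) + α q :=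
      (ENNReal.lt_ofReal_iff_toReal_lt hytop).1 hy
    have hcc : y.toReal - α q < f q.1 q.2 (v q.1) (v q.2) := by linarith
    have hpt : Tendsto (fun k => (w k q.1, w k q.2)) atTop (𝓝 (v q.1, v q.2)) :=
      (h1.1).prodMk_nhds (h2.1)
    have hev := hpt.eventually (hq (v q.1, v q.2) _ hcc)
    filter_upwards [hev] with k hk
    exact (ENNReal.lt_ofReal_iff_toReal_lt hytop).2 (by linarith)
  have hfatou : Av ≤ liminf Aw atTop := by
    calc Av ≤
        ∫⁻ q, liminf (fun k => ENNReal.ofReal (f q.1 q.2 (w k q.1) (w k q.2) + α q)) atTop ∂π :=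
          lintegral_mono_ae hliminfpt
      _ ≤ liminf Aw atTop :=
          lintegral_liminf_le' fun k => ((hFw k).add hαint.aemeasurable).ennreal_ofReal
  -- conclusion
  rw [hJv]
  have hfinal : (Av : EReal) - (I : EReal) ≤
      liminf (fun k => (Aw k : EReal) - (I : EReal)) atTop :=
    ereal_liminf_sub Aw Av I hItop hfatou
  have heq : (fun k => (Aw k : EReal) - (I : EReal)) =
      fun k => nonlocalJ μ f (u (k + K)) := funext fun k => (hJw k).symm
  rw [heq] at hfinal
  rwa [liminf_nat_add (fun k => nonlocalJ μ f (u k)) K] at hfinal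
end

section
/- Let p ∈ [1,∞) and let f : X × X × ℝⁿ × ℝⁿ → ℝ be a pairwise symmetric, measurable function belonging to the class N_0^p, i.e. there exist a measurable function g : X × X × ℝⁿ → ℝ and a symmetric function h ∈ L^1(X×X) such that: (a) there exist α ∈ L^1(X) and C > 0 with ∫_X |g(x,y,w)| dy ≤ α(x) + C|w|^p for almost all x ∈ X and all w ∈ ℝⁿ; (b) ∫_X ∫_X h(x,y) dx dy = 0 and ∫_X g(x,y,w) dy = 0 for almost all x ∈ X and all w ∈ ℝⁿ; (c) f(x,y,w,z) = g(x,y,w) + g(y,x,z) + h(x,y) for almost all (x,y) ∈ X×X and all w, z ∈ ℝⁿ. Then for every u ∈ L^p(X;ℝⁿ) the function (x,y) ↦ f(x,y,u(x),u(y)) is integrable on X×X and ∫_X ∫_X f(x,y,u(x),u(y)) dx dy = 0. -/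
open MeasureTheory ENNReal Filter Topology

theorem stmt_13 (m n : ℕ) (hm : 0 < m) (hn : 0 < n)
    (X : Set (Fin m → ℝ)) (hXmeas : MeasurableSet X) (hXbdd : Bornology.IsBounded X)
    (p : ℝ) (hp : 1 ≤ p)
    (f : (Fin m → ℝ) → (Fin m → ℝ) → EuclideanSpace ℝ (Fin n) → EuclideanSpace ℝ (Fin n) → ℝ)
    (hfmeas : Measurable (fun r : ((Fin m → ℝ) × (Fin m → ℝ)) ×
      (EuclideanSpace ℝ (Fin n)) × (EuclideanSpace ℝ (Fin n)) => f r.1.1 r.1.2 r.2.1 r.2.2))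
    (hfsymm : ∀ x y w z, f x y w z = f y x z w)
    (g : (Fin m → ℝ) → (Fin m → ℝ) → EuclideanSpace ℝ (Fin n) → ℝ)
    (hgmeas : Measurable (fun r : ((Fin m → ℝ) × (Fin m → ℝ)) × EuclideanSpace ℝ (Fin n) =>
      g r.1.1 r.1.2 r.2))
    (h : (Fin m → ℝ) → (Fin m → ℝ) → ℝ)
    (hhsymm : ∀ x y, h x y = h y x)
    (hhint : Integrable (fun r : (Fin m → ℝ) × (Fin m → ℝ) => h r.1 r.2)
      ((volume.restrict X).prod (volume.restrict X)))
    (hgbound : ∃ (α : (Fin m → ℝ) → ℝ) (C : ℝ), Integrable α (volume.restrict X) ∧ 0 < C ∧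
      ∀ᵐ x ∂(volume.restrict X), ∀ w : EuclideanSpace ℝ (Fin n),
        ∫⁻ y, ENNReal.ofReal |g x y w| ∂(volume.restrict X) ≤
          ENNReal.ofReal (α x + C * ‖w‖ ^ p))
    (hhzero : ∫ r, h r.1 r.2 ∂((volume.restrict X).prod (volume.restrict X)) = 0)
    (hgzero : ∀ᵐ x ∂(volume.restrict X), ∀ w : EuclideanSpace ℝ (Fin n),
      ∫ y, g x y w ∂(volume.restrict X) = 0)
    (hdecomp : ∀ᵐ r ∂((volume.restrict X).prod (volume.restrict X)),
      ∀ w z : EuclideanSpace ℝ (Fin n),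
        f r.1 r.2 w z = g r.1 r.2 w + g r.2 r.1 z + h r.1 r.2) :
    ∀ u : (Fin m → ℝ) → EuclideanSpace ℝ (Fin n),
      MemLp u (ENNReal.ofReal p) (volume.restrict X) →
      Integrable (fun r : (Fin m → ℝ) × (Fin m → ℝ) => f r.1 r.2 (u r.1) (u r.2))
        ((volume.restrict X).prod (volume.restrict X)) ∧
      ∫ x, ∫ y, f x y (u x) (u y) ∂(volume.restrict X) ∂(volume.restrict X) = 0 := by

  intro u hu
  obtain ⟨α, C, hαint, hC, hbound⟩ := hgbound
  set μ := volume.restrict X with hμdef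
  have hu_ae : AEMeasurable u μ := hu.aestronglyMeasurable.aemeasurable
  set u' : (Fin m → ℝ) → EuclideanSpace ℝ (Fin n) := hu_ae.mk u with hu'def
  have hu'meas : Measurable u' := hu_ae.measurable_mk
  have huu' : u =ᵐ[μ] u' := hu_ae.ae_eq_mk
  have hu' : MemLp u' (ENNReal.ofReal p) μ := hu.ae_eq huu'
  have hp0 : (0:ℝ) < p := lt_of_lt_of_le one_pos hp
  have hupint : Integrable (fun x => ‖u' x‖ ^ p) μ := by
    have := hu'.integrable_norm_rpow (by simp [ENNReal.ofReal_pos.mpr hp0, ne_eq,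
      (ENNReal.ofReal_pos.mpr hp0).ne']) ENNReal.ofReal_ne_top
    simpa [ENNReal.toReal_ofReal hp0.le] using this
  -- G1 integrable
  have hG1meas : Measurable fun r : (Fin m → ℝ) × (Fin m → ℝ) => g r.1 r.2 (u' r.1) :=
    hgmeas.comp ((measurable_fst.prodMk measurable_snd).prodMk (hu'meas.comp measurable_fst))
  have hdom : Integrable (fun x => α x + C * ‖u' x‖ ^ p) μ := hαint.add (hupint.const_mul C)
  have hdomfin : ∫⁻ x, ENNReal.ofReal (α x + C * ‖u' x‖ ^ p) ∂μ < ⊤ :=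
    lt_of_le_of_lt (lintegral_mono fun x => Real.ofReal_le_enorm _) hdom.2
  have hbound' : ∀ᵐ x ∂μ, ∫⁻ y, (‖g x y (u' x)‖₊ : ℝ≥0∞) ∂μ ≤
      ENNReal.ofReal (α x + C * ‖u' x‖ ^ p) := by
    filter_upwards [hbound] with x hx
    simpa [← Real.enorm_eq_ofReal_abs, enorm] using hx (u' x)
  have hG1int : Integrable (fun r : (Fin m → ℝ) × (Fin m → ℝ) => g r.1 r.2 (u' r.1))
      (μ.prod μ) := by
    refine ⟨hG1meas.aestronglyMeasurable, ?_⟩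
    have : ∫⁻ r, (‖g r.1 r.2 (u' r.1)‖₊ : ℝ≥0∞) ∂(μ.prod μ) < ⊤ := by
      rw [lintegral_prod _ hG1meas.nnnorm.coe_nnreal_ennreal.aemeasurable]
      exact lt_of_le_of_lt (lintegral_mono_ae hbound') hdomfin
    exact this
  have hG2int : Integrable (fun r : (Fin m → ℝ) × (Fin m → ℝ) => g r.2 r.1 (u' r.2))
      (μ.prod μ) := hG1int.swap
  -- decomposition a.e.
  have h1 : (fun r : (Fin m → ℝ) × (Fin m → ℝ) => u r.1) =ᵐ[μ.prod μ]
      (fun r => u' r.1) := Measure.quasiMeasurePreserving_fst.ae_eq huu'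
  have h2 : (fun r : (Fin m → ℝ) × (Fin m → ℝ) => u r.2) =ᵐ[μ.prod μ]
      (fun r => u' r.2) := Measure.quasiMeasurePreserving_snd.ae_eq huu'
  have heq : (fun r : (Fin m → ℝ) × (Fin m → ℝ) => f r.1 r.2 (u r.1) (u r.2)) =ᵐ[μ.prod μ]
      (fun r => g r.1 r.2 (u' r.1) + g r.2 r.1 (u' r.2) + h r.1 r.2) := by
    filter_upwards [hdecomp, h1, h2] with r hr e1 e2
    rw [e1, e2]
    exact hr _ _
  have hFint : Integrable (fun r : (Fin m → ℝ) × (Fin m → ℝ) => f r.1 r.2 (u r.1) (u r.2))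
      (μ.prod μ) := ((hG1int.add hG2int).add hhint).congr heq.symm
  refine ⟨hFint, ?_⟩
  have e1 : ∫ r, g r.1 r.2 (u' r.1) ∂(μ.prod μ) = 0 := by
    rw [integral_prod _ hG1int]
    have hz : ∀ᵐ x ∂μ, (∫ y, g x y (u' x) ∂μ) = 0 := by
      filter_upwards [hgzero] with x hx using hx (u' x)
    rw [integral_congr_ae hz, integral_zero]
  have e2 : ∫ r, g r.2 r.1 (u' r.2) ∂(μ.prod μ) = 0 := by
    have := integral_prod_swap (fun r : (Fin m → ℝ) × (Fin m → ℝ) => g r.1 r.2 (u' r.1))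
      (μ := μ) (ν := μ)
    exact this.trans e1
  have key : ∫ r, f r.1 r.2 (u r.1) (u r.2) ∂(μ.prod μ) = 0 := by
    have hsum : Integrable (fun r : (Fin m → ℝ) × (Fin m → ℝ) =>
        g r.1 r.2 (u' r.1) + g r.2 r.1 (u' r.2)) (μ.prod μ) := hG1int.add hG2int
    rw [integral_congr_ae heq, integral_add hsum hhint, integral_add hG1int hG2int,
      e1, e2, hhzero]
    ring
  rw [← integral_prod _ hFint]
  exact key
end

section
/- Let n = 1, p ∈ [1,∞), and let f : X × X × ℝ × ℝ → ℝ be p-regular. Suppose there exist a pairwise symmetric, measurable function f̃ : X × X × ℝ × ℝ → ℝ such that for almost all (x,y) ∈ X×X the map (w,z) ↦ f̃(x,y,w,z) is separately convex (convex in w for each fixed z and convex in z for each fixed w), together with a measurable function g : X × X × ℝ → ℝ and a symmetric function h ∈ L^1(X×X) satisfying ∫_X |g(x,y,w)| dy ≤ α(x) + C|w|^p for some α ∈ L^1(X) and C > 0, ∫_X ∫_X h(x,y) dx dy = 0, ∫_X g(x,y,w) dy = 0 for almost all x ∈ X and all w ∈ ℝ, and f(x,y,w,z) = f̃(x,y,w,z)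 + g(x,y,w) + g(y,x,z) + h(x,y) for almost all (x,y) ∈ X×X and all w, z ∈ ℝ. Then for every ψ ∈ L^p(X), for almost all x ∈ X, the function Φ_{x,ψ} : ℝ → ℝ, Φ_{x,ψ}(w) = ∫_X f(x,y,w,ψ(y)) dy, is convex. -/
open MeasureTheory ENNReal Filter Topology

lemma aux_rpow_sub_one_mul {t p : ℝ} (ht : 0 ≤ t) (hp : 1 ≤ p) :
    t ^ (p - 1) * t ≤ t ^ p := by
  rcases eq_or_lt_of_le ht with h | h
  · rw [← h, mul_zero]
    exact Real.rpow_nonneg le_rfl p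
  · rw [← Real.rpow_add_one h.ne', sub_add_cancel]

lemma aux_grad_bound {φ : ℝ → ℝ} (hφ : Differentiable ℝ φ) {A B p : ℝ} (z : ℝ)
    (hB : 0 ≤ B) (hp : 1 ≤ p)
    (hd : ∀ s, |s| ≤ |z| → |deriv φ s| ≤ A + B * |s| ^ (p - 1)) :
    |φ z - φ 0| ≤ (A + B * |z| ^ (p - 1)) * |z| := by
  have habs : ∀ s ∈ Set.uIcc (0:ℝ) z, |s| ≤ |z| := by
    intro s hs
    rw [Set.uIcc_eq_union] at hs
    rcases hs with hs | hs <;> rw [Set.mem_Icc] at hs <;>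
      rw [abs_le] <;> constructor <;>
        nlinarith [le_abs_self z, neg_abs_le z, hs.1, hs.2]
  have key := Convex.norm_image_sub_le_of_norm_deriv_le
    (f := φ) (C := A + B * |z| ^ (p - 1)) (s := Set.uIcc (0:ℝ) z)
    (fun s _ => hφ s)
    (fun s hs => by
      have h1 := hd s (habs s hs)
      have h2 : |s| ^ (p - 1) ≤ |z| ^ (p - 1) :=
        Real.rpow_le_rpow (abs_nonneg s) (habs s hs) (by linarith)
      calc ‖deriv φ s‖ = |deriv φ s| := rfl
        _ ≤ A + B * |s| ^ (p - 1) := h1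
        _ ≤ A + B * |z| ^ (p - 1) := by nlinarith)
    (convex_uIcc 0 z) (Set.right_mem_uIcc) (Set.left_mem_uIcc)
  simpa [Real.norm_eq_abs, abs_sub_comm] using key
theorem stmt_16 (m : ℕ) (hm : 0 < m)
    (X : Set (Fin m → ℝ)) (hXmeas : MeasurableSet X) (hXbdd : Bornology.IsBounded X)
    (p : ℝ) (hp : 1 ≤ p) (q : ℝ≥0∞) (hpq : (ENNReal.ofReal p)⁻¹ + q⁻¹ = 1)
    (f : (Fin m → ℝ) → (Fin m → ℝ) → ℝ → ℝ → ℝ)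
    -- p-regularity of f:
    (hfsymm : ∀ x y w z, f x y w z = f y x z w)
    (hfmeas : Measurable (fun r : ((Fin m → ℝ) × (Fin m → ℝ)) × ℝ × ℝ =>
      f r.1.1 r.1.2 r.2.1 r.2.2))
    (h00int : Integrable (fun r : (Fin m → ℝ) × (Fin m → ℝ) => f r.1 r.2 0 0)
      ((volume.restrict X).prod (volume.restrict X)))
    (hC1 : ∀ᵐ r ∂((volume.restrict X).prod (volume.restrict X)),
      ContDiff ℝ 1 (fun wz : ℝ × ℝ => f r.1 r.2 wz.1 wz.2))
    (hderiv : ∀ M : ℝ, 0 < M →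
      ∃ (N : ℕ) (a b : Fin N → (Fin m → ℝ) → ℝ) (β : (Fin m → ℝ) → ℝ),
        (∀ i x, 0 ≤ a i x) ∧ (∀ i y, 0 ≤ b i y) ∧ (∀ y, 0 ≤ β y) ∧
        (∀ i, MemLp (a i) q (volume.restrict X)) ∧
        (∀ i, Integrable (b i) (volume.restrict X)) ∧
        Integrable β (volume.restrict X) ∧
        ∀ᵐ r ∂((volume.restrict X).prod (volume.restrict X)),
          ∀ (w z : ℝ), |z| ≤ M →
            |deriv (fun w' => f r.1 r.2 w' z) w| ≤
              (∑ i, a i r.1 * b i r.2) + β r.2 * |w| ^ (p - 1))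
    -- the decomposition f = f̃ + g + g + h:
    (ftilde : (Fin m → ℝ) → (Fin m → ℝ) → ℝ → ℝ → ℝ)
    (hftsymm : ∀ x y w z, ftilde x y w z = ftilde y x z w)
    (hftmeas : Measurable (fun r : ((Fin m → ℝ) × (Fin m → ℝ)) × ℝ × ℝ =>
      ftilde r.1.1 r.1.2 r.2.1 r.2.2))
    (hftconv : ∀ᵐ r ∂((volume.restrict X).prod (volume.restrict X)),
      (∀ z : ℝ, ConvexOn ℝ Set.univ (fun w : ℝ => ftilde r.1 r.2 w z)) ∧
      (∀ w : ℝ, ConvexOn ℝ Set.univ (fun z : ℝ => ftilde r.1 r.2 w z)))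
    (g : (Fin m → ℝ) → (Fin m → ℝ) → ℝ → ℝ)
    (hgmeas : Measurable (fun r : ((Fin m → ℝ) × (Fin m → ℝ)) × ℝ => g r.1.1 r.1.2 r.2))
    (h : (Fin m → ℝ) → (Fin m → ℝ) → ℝ)
    (hhsymm : ∀ x y, h x y = h y x)
    (hhint : Integrable (fun r : (Fin m → ℝ) × (Fin m → ℝ) => h r.1 r.2)
      ((volume.restrict X).prod (volume.restrict X)))
    (hgbound : ∃ (α : (Fin m → ℝ) → ℝ) (C : ℝ), Integrable α (volume.restrict X) ∧ 0 < C ∧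
      ∀ᵐ x ∂(volume.restrict X), ∀ w : ℝ,
        ∫⁻ y, ENNReal.ofReal |g x y w| ∂(volume.restrict X) ≤
          ENNReal.ofReal (α x + C * |w| ^ p))
    (hhzero : ∫ r, h r.1 r.2 ∂((volume.restrict X).prod (volume.restrict X)) = 0)
    (hgzero : ∀ᵐ x ∂(volume.restrict X), ∀ w : ℝ,
      ∫ y, g x y w ∂(volume.restrict X) = 0)
    (hdecomp : ∀ᵐ r ∂((volume.restrict X).prod (volume.restrict X)),
      ∀ w z : ℝ, f r.1 r.2 w z = ftilde r.1 r.2 w z + g r.1 r.2 w + g r.2 r.1 z + h r.1 r.2) :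
    ∀ ψ : (Fin m → ℝ) → ℝ, MemLp ψ (ENNReal.ofReal p) (volume.restrict X) →
      ∀ᵐ x ∂(volume.restrict X),
        ConvexOn ℝ Set.univ (fun w : ℝ => ∫ y, f x y w (ψ y) ∂(volume.restrict X)) := by
  intro ψ hψ
  set μ : Measure (Fin m → ℝ) := volume.restrict X with hμdef
  -- replace ψ by a measurable representative
  obtain ⟨Ψ, hΨmeas, hψΨ⟩ : ∃ Ψ, StronglyMeasurable Ψ ∧ ψ =ᵐ[μ] Ψ :=
    ⟨hψ.1.mk ψ, hψ.1.stronglyMeasurable_mk, hψ.1.ae_eq_mk⟩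
  have hΨLp : MemLp Ψ (ENNReal.ofReal p) μ := hψ.ae_eq hψΨ
  have hrepl : ∀ x w, ∫ y, f x y w (ψ y) ∂μ = ∫ y, f x y w (Ψ y) ∂μ := by
    intro x w
    refine integral_congr_ae ?_
    filter_upwards [hψΨ] with y hy
    rw [hy]
  suffices H : ∀ᵐ x ∂μ, ConvexOn ℝ Set.univ (fun w : ℝ => ∫ y, f x y w (Ψ y) ∂μ) by
    filter_upwards [H] with x hx
    have : (fun w : ℝ => ∫ y, f x y w (ψ y) ∂μ) = fun w => ∫ y, f x y w (Ψ y) ∂μ := by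
      funext w; exact hrepl x w
    rw [this]
    exact hx
  have hp0 : (0:ℝ) < p := lt_of_lt_of_le zero_lt_one hp
  -- measurability of sections
  have hsec : ∀ x w, Measurable (fun y => f x y w (Ψ y)) := by
    intro x w
    exact hfmeas.comp (((measurable_const.prodMk measurable_id).prodMk
      (measurable_const.prodMk hΨmeas.measurable)))
  -- |Ψ|^p is integrable
  have hΨp : Integrable (fun y => |Ψ y| ^ p) μ := by
    have := hΨLp.integrable_norm_rpow (by simp [ENNReal.ofReal_pos, hp0]) ofReal_ne_top
    simpa [Real.norm_eq_abs, ENNReal.toReal_ofReal hp0.le] using this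
  -- Hölder: a ∈ L^q times |Ψ| ∈ L^p is integrable
  have hHolder : ∀ a : (Fin m → ℝ) → ℝ, MemLp a q μ →
      Integrable (fun y => a y * |Ψ y|) μ := by
    intro a ha
    have habs : MemLp (fun y => |Ψ y|) (ENNReal.ofReal p) μ := by
      simpa [Real.norm_eq_abs] using hΨLp.norm
    have := habs.smul ha (hpqr := ⟨by
      rw [inv_one, add_comm]
      exact hpq⟩)
    rw [memLp_one_iff_integrable] at this
    simpa [smul_eq_mul, Pi.mul_def] using this
  -- key integrability statement
  have key_int : ∀ᵐ x ∂μ, ∀ w : ℝ, Integrable (fun y => f x y w (Ψ y)) μ := by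
    have main : ∀ n : ℕ, ∀ᵐ x ∂μ, ∀ w : ℝ, |w| ≤ (n:ℝ) + 1 →
        Integrable (fun y => f x y w (Ψ y)) μ := by
      intro n
      set M : ℝ := (n:ℝ) + 1 with hMdef
      have hM : 0 < M := by positivity
      obtain ⟨N, a, b, β, ha0, hb0, hβ0, haq, hbint, hβint, hbd⟩ := hderiv M hM
      have hswap : ∀ {P : (Fin m → ℝ) × (Fin m → ℝ) → Prop},
          (∀ᵐ r ∂μ.prod μ, P r) → ∀ᵐ r ∂μ.prod μ, P r.swap := by
        intro P hP
        exact ((MeasureTheory.Measure.measurePreserving_swap (μ := μ) (ν := μ)).quasiMeasurePreserving.tendsto_ae).eventually hP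
      have hbd1 := Measure.ae_ae_of_ae_prod hbd
      have hbd2 := Measure.ae_ae_of_ae_prod (hswap hbd)
      have hC1' := Measure.ae_ae_of_ae_prod hC1
      have h00 := h00int.prod_right_ae
      filter_upwards [hbd1, hbd2, hC1', h00] with x hx1 hx2 hx3 hx5
      intro w hwM
      -- the dominating function
      set G : (Fin m → ℝ) → ℝ := fun y =>
        |f x y 0 0| + (∑ i, a i x * b i y) * M + β y * M ^ p
          + (∑ i, b i x * (a i y * |Ψ y|)) + β x * |Ψ y| ^ p with hGdef
      have hGint : Integrable G μ := by
        refine ((((hx5.abs.add ?_).add ?_).add ?_).add ?_)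
        · exact (integrable_finset_sum _ fun i _ =>
            (hbint i).const_mul (a i x)).mul_const M
        · exact hβint.mul_const _
        · exact integrable_finset_sum _ fun i _ =>
            ((hHolder (a i) (haq i)).const_mul (b i x))
        · exact hΨp.const_mul (β x)
      refine Integrable.mono' hGint (hsec x w).aestronglyMeasurable ?_
      filter_upwards [hx1, hx2, hx3] with y hy1 hy2 hy3
      -- pointwise estimate
      have hdiff : Differentiable ℝ (fun wz : ℝ × ℝ => f x y wz.1 wz.2) :=
        hy3.differentiable one_ne_zero
      have hd1 : Differentiable ℝ (fun s : ℝ => f x y w s) :=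
        hdiff.comp ((differentiable_const w).prodMk differentiable_id)
      have hd2 : Differentiable ℝ (fun w' : ℝ => f x y w' (0:ℝ)) :=
        hdiff.comp (differentiable_id.prodMk (differentiable_const 0))
      have hA1 : (0:ℝ) ≤ ∑ i, a i y * b i x :=
        Finset.sum_nonneg fun i _ => mul_nonneg (ha0 i y) (hb0 i x)
      have hA2 : (0:ℝ) ≤ ∑ i, a i x * b i y :=
        Finset.sum_nonneg fun i _ => mul_nonneg (ha0 i x) (hb0 i y)
      have est1 : |f x y w (Ψ y) - f x y w 0| ≤
          ((∑ i, a i y * b i x) + β x * |Ψ y| ^ (p - 1)) * |Ψ y| := by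
        refine aux_grad_bound hd1 (Ψ y) (hβ0 x) hp ?_
        intro s _
        have heq : (fun s : ℝ => f x y w s) = fun s : ℝ => f y x s w := by
          funext s; exact hfsymm x y w s
        rw [heq]
        exact hy2 s w hwM
      have est2 : |f x y w 0 - f x y 0 0| ≤
          ((∑ i, a i x * b i y) + β y * |w| ^ (p - 1)) * |w| := by
        refine aux_grad_bound hd2 w (hβ0 y) hp ?_
        intro s _
        exact hy1 s 0 (by simpa using hM.le)
      -- combine the estimates
      have hw1 : |w| ^ (p-1) * |w| ≤ M ^ (p-1) * M := by
        have h1 : |w| ^ (p-1) ≤ M ^ (p-1) :=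
          Real.rpow_le_rpow (abs_nonneg w) hwM (by linarith)
        have h2 : (0:ℝ) ≤ |w| ^ (p-1) := Real.rpow_nonneg (abs_nonneg w) _
        nlinarith [abs_nonneg w]
      have hMp : M ^ (p-1) * M = M ^ p := by
        rw [← Real.rpow_add_one hM.ne', sub_add_cancel]
      have hΨ1 : β x * |Ψ y| ^ (p-1) * |Ψ y| ≤ β x * |Ψ y| ^ p := by
        have := aux_rpow_sub_one_mul (abs_nonneg (Ψ y)) hp
        have hb := hβ0 x
        nlinarith
      have htr : |f x y w (Ψ y)| ≤ |f x y 0 0|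
          + ((∑ i, a i x * b i y) + β y * |w| ^ (p - 1)) * |w|
          + ((∑ i, a i y * b i x) + β x * |Ψ y| ^ (p - 1)) * |Ψ y| := by
        have t1 : |f x y w (Ψ y)| - |f x y w 0| ≤ |f x y w (Ψ y) - f x y w 0| :=
          abs_sub_abs_le_abs_sub _ _
        have t2 : |f x y w 0| - |f x y 0 0| ≤ |f x y w 0 - f x y 0 0| :=
          abs_sub_abs_le_abs_sub _ _
        linarith [est1, est2]
      have hsum_eq : (∑ i, a i y * b i x) * |Ψ y| ≤ ∑ i, b i x * (a i y * |Ψ y|) := by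
        rw [Finset.sum_mul]
        refine Finset.sum_le_sum fun i _ => ?_
        ring_nf
        exact le_rfl
      rw [Real.norm_eq_abs]
      rw [hGdef]
      have hwp : ((∑ i, a i x * b i y) + β y * |w| ^ (p - 1)) * |w| ≤
          (∑ i, a i x * b i y) * M + β y * M ^ p := by
        have h1 : (∑ i, a i x * b i y) * |w| ≤ (∑ i, a i x * b i y) * M :=
          mul_le_mul_of_nonneg_left hwM hA2
        have h2 : β y * (|w| ^ (p-1) * |w|) ≤ β y * M ^ p := by
          rw [← hMp]
          exact mul_le_mul_of_nonneg_left hw1 (hβ0 y)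
        nlinarith
      have hzp : ((∑ i, a i y * b i x) + β x * |Ψ y| ^ (p - 1)) * |Ψ y| ≤
          (∑ i, b i x * (a i y * |Ψ y|)) + β x * |Ψ y| ^ p := by
        have := mul_nonneg (Real.rpow_nonneg (abs_nonneg (Ψ y)) (p-1)) (abs_nonneg (Ψ y))
        nlinarith [hΨ1, hsum_eq]
      calc |f x y w (Ψ y)| ≤ _ := htr
        _ ≤ _ := by simp only []; linarith [hwp, hzp]
    have := ae_all_iff.2 main
    filter_upwards [this] with x hx w
    have hn : |w| ≤ ((⌈|w|⌉₊:ℕ):ℝ) + 1 := by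
      have := Nat.le_ceil |w|
      push_cast
      linarith [Nat.le_ceil |w|]
    exact hx ⌈|w|⌉₊ w hn
  -- facts about g
  obtain ⟨α, C, hαint, hC, hgb⟩ := hgbound
  have hgfacts : ∀ᵐ x ∂μ, ∀ w : ℝ,
      Integrable (fun y => g x y w) μ ∧ ∫ y, g x y w ∂μ = 0 := by
    filter_upwards [hgb, hgzero] with x hx hx0
    intro w
    have hmeasg : Measurable (fun y => g x y w) :=
      hgmeas.comp ((measurable_const.prodMk measurable_id).prodMk measurable_const)
    refine ⟨⟨hmeasg.aestronglyMeasurable, ?_⟩, hx0 w⟩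
    rw [hasFiniteIntegral_iff_norm]
    have : ∀ y, ENNReal.ofReal ‖g x y w‖ = ENNReal.ofReal |g x y w| := by
      intro y; rw [Real.norm_eq_abs]
    simp_rw [this]
    exact lt_of_le_of_lt (hx w) ofReal_lt_top
  -- decomposition and convexity a.e.
  have hdec' := Measure.ae_ae_of_ae_prod hdecomp
  have hconv' := Measure.ae_ae_of_ae_prod (hftconv.mono fun r hr => hr.1)
  filter_upwards [key_int, hgfacts, hdec', hconv'] with x hI hg' hdec hconv
  refine ⟨convex_univ, ?_⟩
  intro w1 _ w2 _ t s ht hs hts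
  simp only [smul_eq_mul]
  have hs' : s = 1 - t := by linarith
  subst hs'
  set wt := t * w1 + (1 - t) * w2 with hwt
  have hIt := hI wt
  have hI1 := hI w1
  have hI2 := hI w2
  have hg1 := (hg' w1).1.const_mul t
  have hg2 := (hg' w2).1.const_mul (1 - t)
  have hgt := (hg' wt).1
  have hg12 : Integrable (fun y => t * g x y w1 + (1 - t) * g x y w2) μ := hg1.add hg2
  have hDgint : Integrable
      (fun y => t * g x y w1 + (1 - t) * g x y w2 - g x y wt) μ := hg12.sub hgt
  have hDgzero : ∫ y, (t * g x y w1 + (1 - t) * g x y w2 - g x y wt) ∂μ = 0 := by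
    rw [integral_sub hg12 hgt, integral_add hg1 hg2, integral_const_mul, integral_const_mul,
      (hg' w1).2, (hg' w2).2, (hg' wt).2]
    ring
  have hf12 : Integrable (fun y => t * f x y w1 (Ψ y) + (1 - t) * f x y w2 (Ψ y)) μ :=
    (hI1.const_mul t).add (hI2.const_mul (1 - t))
  have hDint : Integrable
      (fun y => t * f x y w1 (Ψ y) + (1 - t) * f x y w2 (Ψ y) - f x y wt (Ψ y)) μ :=
    hf12.sub hIt
  have hDnn : ∀ᵐ y ∂μ, 0 ≤ (t * f x y w1 (Ψ y) + (1 - t) * f x y w2 (Ψ y) - f x y wt (Ψ y))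
      - (t * g x y w1 + (1 - t) * g x y w2 - g x y wt) := by
    filter_upwards [hdec, hconv] with y hdy hcy
    have e1 := hdy w1 (Ψ y)
    have e2 := hdy w2 (Ψ y)
    have et := hdy wt (Ψ y)
    have hcv := (hcy (Ψ y)).2 (Set.mem_univ w1) (Set.mem_univ w2) ht hs hts
    simp only [smul_eq_mul] at hcv
    rw [e1, e2, et]
    rw [hwt]
    nlinarith [hcv]
  have hint : 0 ≤ ∫ y, ((t * f x y w1 (Ψ y) + (1 - t) * f x y w2 (Ψ y) - f x y wt (Ψ y))
      - (t * g x y w1 + (1 - t) * g x y w2 - g x y wt)) ∂μ := integral_nonneg_of_ae hDnn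
  rw [integral_sub hDint hDgint, hDgzero, sub_zero,
    integral_sub hf12 hIt, integral_add (hI1.const_mul t) (hI2.const_mul (1 - t)),
    integral_const_mul, integral_const_mul] at hint
  linarith [hint]
end
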